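/- arXiv:1707.09950 — 8 statements merged into one kernel-verified Lean document; each statement's English description precedes it below -/
import Mathlib

section
/- The operator K extends to a bounded linear operator on the complex Hilbert space L²(S¹) (with respect to the arclength measure) with operator norm at most 1, and this operator is self-adjoint: for all f, g ∈ L²(S¹), ⟨K f, g⟩ = ⟨f, K g⟩. -/
open MeasureTheory Real

set_option maxHeartbeats 1000000

noncomputable section

/-- The unit circle, modelled as `ℝ / 2πℤ`, carrying the arclength measure
(total mass `2π`). -/
abbrev S1 : Type := AddCircle (2 * π)

instance : Fact ((0:ℝ) < 2 * π) := ⟨by positivity⟩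

/-- The gain operator of the two-dimensional hard-disk linear Boltzmann equation:
`(K f)(v(θ)) = (1/2) ∫_{−1}^{1} f(v(θ + π − 2 arcsin δ)) dδ`. -/
def Kop (f : S1 → ℂ) (θ : S1) : ℂ :=
  (1 / 2 : ℂ) * ∫ δ in (-1:ℝ)..1, f (θ + ((π - 2 * arcsin δ : ℝ) : S1))

namespace KopAux

/-- The shift. -/
def sft (δ : ℝ) : S1 := ((π - 2 * arcsin δ : ℝ) : S1)

lemma continuous_sft : Continuous sft := by
  exact (continuous_quotient_mk').comp (by continuity)

lemma measurable_sft : Measurable sft := continuous_sft.measurable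

/-- Lebesgue measure restricted to `(-1, 1]`. -/
def μI : Measure ℝ := volume.restrict (Set.Ioc (-1:ℝ) 1)

lemma μI_univ : μI Set.univ = 2 := by
  rw [μI, Measure.restrict_apply MeasurableSet.univ, Set.univ_inter, Real.volume_Ioc]
  norm_num

instance : IsFiniteMeasure μI := by
  constructor; rw [μI_univ]; exact ENNReal.ofNat_lt_top

lemma Kop_eq (f : S1 → ℂ) (θ : S1) :
    Kop f θ = (1 / 2 : ℂ) * ∫ δ, f (θ + sft δ) ∂μI := by
  rw [Kop, intervalIntegral.integral_of_le (by norm_num : (-1:ℝ) ≤ 1)]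
  rfl

lemma sft_neg (δ : ℝ) : sft (-δ) = - sft δ := by
  rw [sft, sft, arcsin_neg]
  have : (π - 2 * (-arcsin δ) : ℝ) = -(π - 2 * arcsin δ) + 2 * π := by ring
  rw [this, AddCircle.coe_add_period, AddCircle.coe_neg]

lemma measurable_shift2 : Measurable fun p : S1 × ℝ => p.1 + sft p.2 :=
  measurable_fst.add (measurable_sft.comp measurable_snd)

/-- The skew shift is measure preserving on the product. -/
lemma mp_skew : MeasurePreserving (fun p : ℝ × S1 => (p.1, p.2 + sft p.1))
    (μI.prod (volume : Measure S1)) (μI.prod (volume : Measure S1)) := by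
  exact (MeasurePreserving.id μI).skew_product (g := fun δ θ => θ + sft δ)
    (measurable_snd.add (measurable_sft.comp measurable_fst))
    (Filter.Eventually.of_forall fun δ => map_add_right_eq_self volume (sft δ))

lemma qmp_main : Measure.QuasiMeasurePreserving (fun p : S1 × ℝ => p.1 + sft p.2)
    ((volume : Measure S1).prod μI) (volume : Measure S1) := by
  refine ⟨measurable_shift2, Measure.AbsolutelyContinuous.mk fun s hs h0 => ?_⟩
  rw [Measure.map_apply measurable_shift2 hs,
    Measure.prod_apply_symm (measurable_shift2 hs)]
  have hz : ∀ δ : ℝ, (volume : Measure S1)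
      ((fun θ : S1 => (θ, δ)) ⁻¹' ((fun p : S1 × ℝ => p.1 + sft p.2) ⁻¹' s)) = 0 := by
    intro δ
    have h1 : ((fun θ : S1 => (θ, δ)) ⁻¹' ((fun p : S1 × ℝ => p.1 + sft p.2) ⁻¹' s))
        = (fun θ : S1 => θ + sft δ) ⁻¹' s := rfl
    rw [h1, (measurePreserving_add_right (volume : Measure S1) (sft δ)).measure_preimage
      hs.nullMeasurableSet, h0]
  simp [hz]

lemma Jf_congr {f₁ f₂ : S1 → ℂ} (h : f₁ =ᵐ[(volume : Measure S1)] f₂) :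
    (fun p : S1 × ℝ => f₁ (p.1 + sft p.2))
      =ᵐ[(volume : Measure S1).prod μI] (fun p => f₂ (p.1 + sft p.2)) :=
  qmp_main.ae_eq_comp h

lemma ae_sections {f₁ f₂ : S1 → ℂ} (h : f₁ =ᵐ[(volume : Measure S1)] f₂) :
    ∀ᵐ θ : S1, ∀ᵐ δ ∂μI, f₁ (θ + sft δ) = f₂ (θ + sft δ) :=
  Measure.ae_ae_of_ae_prod (Jf_congr h)

lemma intervalIntegral_eq_μI (g : ℝ → ℂ) :
    (∫ δ in (-1:ℝ)..1, g δ) = ∫ δ, g δ ∂μI := by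
  rw [intervalIntegral.integral_of_le (by norm_num : (-1:ℝ) ≤ 1)]
  rfl

lemma Kop_congr {f₁ f₂ : S1 → ℂ} (h : f₁ =ᵐ[(volume : Measure S1)] f₂) :
    Kop f₁ =ᵐ[(volume : Measure S1)] Kop f₂ := by
  filter_upwards [ae_sections h] with θ hθ
  rw [Kop_eq, Kop_eq, integral_congr_ae hθ]

open scoped ENNReal

lemma meas_comp {f : S1 → ℂ} (hf : StronglyMeasurable f) :
    StronglyMeasurable (fun p : S1 × ℝ => f (p.1 + sft p.2)) :=
  hf.comp_measurable measurable_shift2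

lemma lintegral_lintegral_shift (G : S1 → ℝ≥0∞) (hG : Measurable G) :
    ∫⁻ θ, (∫⁻ δ, G (θ + sft δ) ∂μI) ∂(volume : Measure S1)
      = 2 * ∫⁻ θ, G θ ∂(volume : Measure S1) := by
  rw [lintegral_lintegral_swap (f := fun θ δ => G (θ + sft δ))
    (by exact (hG.comp measurable_shift2).aemeasurable)]
  calc ∫⁻ δ, (∫⁻ θ, G (θ + sft δ) ∂(volume : Measure S1)) ∂μI
      = ∫⁻ δ, (∫⁻ θ, G θ ∂(volume : Measure S1)) ∂μI := by
        refine lintegral_congr fun δ => ?_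
        exact lintegral_add_right_eq_self G (sft δ)
    _ = 2 * ∫⁻ θ, G θ ∂(volume : Measure S1) := by
        rw [lintegral_const, μI_univ, mul_comm]

lemma cs_step (h : ℝ → ℝ≥0∞) (hh : AEMeasurable h μI) :
    (∫⁻ δ, h δ ∂μI) ^ (2:ℝ) ≤ 2 * ∫⁻ δ, h δ ^ (2:ℝ) ∂μI := by
  have hconj : Real.HolderConjugate 2 2 := Real.HolderConjugate.two_two
  have hcs := ENNReal.lintegral_mul_le_Lp_mul_Lq μI hconj hh
    (aemeasurable_const (b := (1:ℝ≥0∞)))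
  simp only [Pi.mul_apply, mul_one, ENNReal.one_rpow, lintegral_const, μI_univ,
    one_mul] at hcs
  have h2 : (∫⁻ δ, h δ ∂μI) ^ (2:ℝ)
      ≤ ((∫⁻ δ, h δ ^ (2:ℝ) ∂μI) ^ (1/(2:ℝ)) * (2:ℝ≥0∞) ^ (1/(2:ℝ))) ^ (2:ℝ) :=
    ENNReal.rpow_le_rpow hcs (by norm_num)
  refine h2.trans_eq ?_
  rw [ENNReal.mul_rpow_of_nonneg _ _ (by norm_num : (0:ℝ) ≤ 2),
    ← ENNReal.rpow_mul, ← ENNReal.rpow_mul]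
  norm_num
  rw [mul_comm]

lemma half_enorm : (‖(1/2 : ℂ)‖₊ : ℝ≥0∞) = 1/2 := by
  rw [← ENNReal.ofReal_coe_nnreal, coe_nnnorm]
  have h1 : ‖(1/2 : ℂ)‖ = 1/2 := by
    rw [norm_div, norm_one]
    simp
  rw [h1, ENNReal.ofReal_div_of_pos (by norm_num)]
  norm_num

lemma half_arith : (1/2 : ℝ≥0∞) ^ (2:ℝ) * 2 = 1/2 := by
  rw [show ((2:ℝ)) = ((2:ℕ):ℝ) by norm_num, ENNReal.rpow_natCast, pow_two, mul_assoc,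
    ENNReal.div_mul_cancel (by norm_num) (by norm_num), mul_one]

lemma enorm_Kop_le (f : S1 → ℂ) (θ : S1) :
    (‖Kop f θ‖₊ : ℝ≥0∞) ≤ (1/2) * ∫⁻ δ, (‖f (θ + sft δ)‖₊ : ℝ≥0∞) ∂μI := by
  rw [Kop_eq, nnnorm_mul, ENNReal.coe_mul, half_enorm]
  gcongr
  exact enorm_integral_le_lintegral_enorm _

lemma key {f : S1 → ℂ} (hf : StronglyMeasurable f) :
    ∫⁻ θ, (‖Kop f θ‖₊ : ℝ≥0∞) ^ (2:ℝ) ∂(volume : Measure S1)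
      ≤ ∫⁻ θ, (‖f θ‖₊ : ℝ≥0∞) ^ (2:ℝ) ∂(volume : Measure S1) := by
  have hFm : Measurable (fun p : S1 × ℝ => (‖f (p.1 + sft p.2)‖₊ : ℝ≥0∞)) :=
    (meas_comp hf).measurable.nnnorm.coe_nnreal_ennreal
  have hF2m : Measurable (fun p : S1 × ℝ => (‖f (p.1 + sft p.2)‖₊ : ℝ≥0∞) ^ (2:ℝ)) :=
    hFm.pow_const _
  calc ∫⁻ θ, (‖Kop f θ‖₊ : ℝ≥0∞) ^ (2:ℝ) ∂(volume : Measure S1)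
      ≤ ∫⁻ θ, (1/2) * ∫⁻ δ, (‖f (θ + sft δ)‖₊ : ℝ≥0∞) ^ (2:ℝ) ∂μI ∂(volume : Measure S1) := by
        refine lintegral_mono fun θ => ?_
        have h1 : (‖Kop f θ‖₊ : ℝ≥0∞) ^ (2:ℝ)
            ≤ ((1/2) * ∫⁻ δ, (‖f (θ + sft δ)‖₊ : ℝ≥0∞) ∂μI) ^ (2:ℝ) :=
          ENNReal.rpow_le_rpow (enorm_Kop_le f θ) (by norm_num)
        refine h1.trans ?_
        rw [ENNReal.mul_rpow_of_nonneg _ _ (by norm_num : (0:ℝ) ≤ 2)]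
        have h2 := cs_step (fun δ => (‖f (θ + sft δ)‖₊ : ℝ≥0∞))
          ((hf.measurable.nnnorm.coe_nnreal_ennreal.comp
            (measurable_const.add measurable_sft)).aemeasurable)
        calc (1/2 : ℝ≥0∞) ^ (2:ℝ) * (∫⁻ δ, (‖f (θ + sft δ)‖₊ : ℝ≥0∞) ∂μI) ^ (2:ℝ)
            ≤ (1/2 : ℝ≥0∞) ^ (2:ℝ) *
              (2 * ∫⁻ δ, (‖f (θ + sft δ)‖₊ : ℝ≥0∞) ^ (2:ℝ) ∂μI) := by exact mul_le_mul_right h2 _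
          _ = (1/2) * ∫⁻ δ, (‖f (θ + sft δ)‖₊ : ℝ≥0∞) ^ (2:ℝ) ∂μI := by
              rw [← mul_assoc, half_arith]
    _ = (1/2) * ∫⁻ θ, ∫⁻ δ, (‖f (θ + sft δ)‖₊ : ℝ≥0∞) ^ (2:ℝ) ∂μI ∂(volume : Measure S1) := by
        rw [lintegral_const_mul _ hF2m.lintegral_prod_right']
    _ = (1/2) * (2 * ∫⁻ θ, (‖f θ‖₊ : ℝ≥0∞) ^ (2:ℝ) ∂(volume : Measure S1)) := by
        rw [lintegral_lintegral_shift _ (hf.measurable.nnnorm.coe_nnreal_ennreal.pow_const _)]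
    _ = ∫⁻ θ, (‖f θ‖₊ : ℝ≥0∞) ^ (2:ℝ) ∂(volume : Measure S1) := by
        rw [← mul_assoc, ENNReal.div_mul_cancel (by norm_num) (by norm_num), one_mul]

lemma eLpNorm_Kop_le {f : S1 → ℂ} (hf : StronglyMeasurable f) :
    eLpNorm (Kop f) 2 (volume : Measure S1) ≤ eLpNorm f 2 (volume : Measure S1) := by
  rw [eLpNorm_eq_lintegral_rpow_enorm_toReal (p := 2) (by norm_num) (by norm_num),
    eLpNorm_eq_lintegral_rpow_enorm_toReal (p := 2) (by norm_num) (by norm_num)]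
  simp only [ENNReal.toReal_ofNat]
  exact ENNReal.rpow_le_rpow (key hf) (by norm_num)

lemma sm_Kop {f : S1 → ℂ} (hf : StronglyMeasurable f) :
    StronglyMeasurable (Kop f) := by
  have h1 : StronglyMeasurable (Function.uncurry fun (δ : ℝ) (θ : S1) => f (θ + sft δ)) :=
    hf.comp_measurable (measurable_snd.add (measurable_sft.comp measurable_fst))
  have h2 := h1.integral_prod_left (μ := μI)
  have h3 : Kop f = fun θ => (1/2 : ℂ) * ∫ δ, f (θ + sft δ) ∂μI :=
    funext fun θ => Kop_eq f θ
  rw [h3]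
  exact stronglyMeasurable_const.mul h2

lemma memKop (f : Lp ℂ 2 (volume : Measure S1)) :
    MemLp (Kop f) 2 (volume : Measure S1) :=
  ⟨(sm_Kop (Lp.stronglyMeasurable f)).aestronglyMeasurable,
    lt_of_le_of_lt (eLpNorm_Kop_le (Lp.stronglyMeasurable f)) (Lp.eLpNorm_lt_top f)⟩

lemma lintegral_nnnorm_lt_top (f : Lp ℂ 2 (volume : Measure S1)) :
    ∫⁻ θ, (‖(f : S1 → ℂ) θ‖₊ : ℝ≥0∞) ∂(volume : Measure S1) < ⊤ := by
  have h1 : MemLp (f : S1 → ℂ) 1 (volume : Measure S1) :=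
    (Lp.memLp f).mono_exponent (by norm_num)
  have := h1.2
  rwa [eLpNorm_one_eq_lintegral_enorm] at this

lemma ae_integrable_section (f : Lp ℂ 2 (volume : Measure S1)) :
    ∀ᵐ θ : S1 ∂(volume : Measure S1),
      Integrable (fun δ => (f : S1 → ℂ) (θ + sft δ)) μI := by
  have hsm := Lp.stronglyMeasurable f
  have hFm : Measurable (fun p : S1 × ℝ => (‖(f : S1 → ℂ) (p.1 + sft p.2)‖₊ : ℝ≥0∞)) :=
    (meas_comp hsm).measurable.nnnorm.coe_nnreal_ennreal
  have hfin : ∫⁻ θ, (∫⁻ δ, (‖(f : S1 → ℂ) (θ + sft δ)‖₊ : ℝ≥0∞) ∂μI)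
      ∂(volume : Measure S1) ≠ ⊤ := by
    rw [lintegral_lintegral_shift _ hsm.measurable.nnnorm.coe_nnreal_ennreal]
    exact (ENNReal.mul_lt_top ENNReal.ofNat_lt_top (lintegral_nnnorm_lt_top f)).ne
  filter_upwards [ae_lt_top hFm.lintegral_prod_right' hfin] with θ hθ
  refine ⟨(hsm.comp_measurable (measurable_const.add measurable_sft)).aestronglyMeasurable, ?_⟩
  exact hθ

lemma ae_intervalIntegrable (f : Lp ℂ 2 (volume : Measure S1)) :
    ∀ᵐ θ : S1 ∂(volume : Measure S1),
      IntervalIntegrable (fun δ => (f : S1 → ℂ) (θ + ((π - 2 * arcsin δ : ℝ) : S1)))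
        volume (-1:ℝ) 1 := by
  filter_upwards [ae_integrable_section f] with θ hθ
  rw [intervalIntegrable_iff, Set.uIoc_of_le (by norm_num : (-1:ℝ) ≤ 1)]
  exact hθ

lemma Kop_add (f g : Lp ℂ 2 (volume : Measure S1)) :
    Kop (⇑(f + g)) =ᵐ[(volume : Measure S1)] Kop ⇑f + Kop ⇑g := by
  refine (Kop_congr (Lp.coeFn_add f g)).trans ?_
  filter_upwards [ae_intervalIntegrable f, ae_intervalIntegrable g] with θ hf hg
  simp only [Pi.add_apply, Kop]
  rw [← mul_add, ← intervalIntegral.integral_add hf hg]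

lemma Kop_smul (c : ℂ) (f : Lp ℂ 2 (volume : Measure S1)) :
    Kop (⇑(c • f)) =ᵐ[(volume : Measure S1)] c • Kop ⇑f := by
  refine (Kop_congr (Lp.coeFn_smul c f)).trans ?_
  refine Filter.Eventually.of_forall fun θ => ?_
  simp only [Pi.smul_apply, smul_eq_mul, Kop]
  rw [intervalIntegral.integral_const_mul]
  ring

/-- The bounded extension as a linear map. -/
def Lmap : Lp ℂ 2 (volume : Measure S1) →ₗ[ℂ] Lp ℂ 2 (volume : Measure S1) where
  toFun f := (memKop f).toLp (Kop ⇑f)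
  map_add' f g := by
    rw [← MemLp.toLp_add (memKop f) (memKop g)]
    exact MemLp.toLp_congr _ _ (Kop_add f g)
  map_smul' c f := by
    simp only [RingHom.id_apply]
    rw [← MemLp.toLp_const_smul c (memKop f)]
    exact MemLp.toLp_congr _ _ (Kop_smul c f)

lemma norm_Lmap_le (f : Lp ℂ 2 (volume : Measure S1)) : ‖Lmap f‖ ≤ 1 * ‖f‖ := by
  rw [one_mul]
  have h0 : Lmap f = (memKop f).toLp (Kop ⇑f) := rfl
  have h1 : ‖(memKop f).toLp (Kop ⇑f)‖ = (eLpNorm (Kop ⇑f) 2 (volume : Measure S1)).toReal :=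
    Lp.norm_toLp _ (memKop f)
  rw [h0, h1, Lp.norm_def]
  exact ENNReal.toReal_mono (Lp.eLpNorm_ne_top f)
    (eLpNorm_Kop_le (Lp.stronglyMeasurable f))

/-- The bounded extension. -/
def T : Lp ℂ 2 (volume : Measure S1) →L[ℂ] Lp ℂ 2 (volume : Measure S1) :=
  Lmap.mkContinuous 1 norm_Lmap_le

lemma T_ae (f : Lp ℂ 2 (volume : Measure S1)) :
    (T f : S1 → ℂ) =ᵐ[(volume : Measure S1)] Kop ⇑f := by
  have h0 : T f = (memKop f).toLp (Kop ⇑f) := rfl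
  rw [h0]
  exact MemLp.coeFn_toLp (memKop f)

lemma norm_T_le : ‖T‖ ≤ 1 :=
  LinearMap.mkContinuous_norm_le _ zero_le_one _

lemma sq_lintegral_lt_top (f : Lp ℂ 2 (volume : Measure S1)) :
    ∫⁻ θ, (‖(f : S1 → ℂ) θ‖₊ : ℝ≥0∞) ^ (2:ℝ) ∂(volume : Measure S1) < ⊤ := by
  have h := Lp.eLpNorm_lt_top f
  rw [eLpNorm_eq_lintegral_rpow_enorm_toReal (p := 2) (by norm_num) (by norm_num)] at h
  simp only [ENNReal.toReal_ofNat] at h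
  by_contra hc
  rw [not_lt, top_le_iff] at hc
  change ∫⁻ θ, ‖(f : S1 → ℂ) θ‖ₑ ^ (2:ℝ) ∂(volume : Measure S1) = ⊤ at hc
  rw [hc, ENNReal.top_rpow_of_pos (by norm_num)] at h
  exact (lt_irrefl _ h)

lemma integrable_mix {f g : S1 → ℂ} (hf : StronglyMeasurable f) (hg : StronglyMeasurable g)
    (hf2 : ∫⁻ θ, (‖f θ‖₊ : ℝ≥0∞) ^ (2:ℝ) ∂(volume : Measure S1) < ⊤)
    (hg2 : ∫⁻ θ, (‖g θ‖₊ : ℝ≥0∞) ^ (2:ℝ) ∂(volume : Measure S1) < ⊤) :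
    Integrable (fun p : S1 × ℝ => f (p.1 + sft p.2) * g p.1)
      ((volume : Measure S1).prod μI) := by
  have hconj : Real.HolderConjugate 2 2 := Real.HolderConjugate.two_two
  have hsm : StronglyMeasurable (fun p : S1 × ℝ => f (p.1 + sft p.2) * g p.1) :=
    (meas_comp hf).mul (hg.comp_measurable measurable_fst)
  refine ⟨hsm.aestronglyMeasurable, ?_⟩
  have hmeas : Measurable (fun p : S1 × ℝ =>
      (‖f (p.1 + sft p.2)‖₊ : ℝ≥0∞) * (‖g p.1‖₊ : ℝ≥0∞)) :=
    ((meas_comp hf).measurable.nnnorm.coe_nnreal_ennreal).mul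
      (hg.measurable.nnnorm.coe_nnreal_ennreal.comp measurable_fst)
  set C : ℝ≥0∞ := (∫⁻ θ, (‖f θ‖₊ : ℝ≥0∞) ^ (2:ℝ) ∂(volume : Measure S1)) ^ (1/(2:ℝ))
    * (∫⁻ θ, (‖g θ‖₊ : ℝ≥0∞) ^ (2:ℝ) ∂(volume : Measure S1)) ^ (1/(2:ℝ)) with hC
  have hCfin : C < ⊤ := ENNReal.mul_lt_top
    (ENNReal.rpow_lt_top_of_nonneg (by norm_num) hf2.ne)
    (ENNReal.rpow_lt_top_of_nonneg (by norm_num) hg2.ne)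
  show (∫⁻ p, (‖f (p.1 + sft p.2) * g p.1‖₊ : ℝ≥0∞) ∂((volume : Measure S1).prod μI)) < ⊤
  calc ∫⁻ p, (‖f (p.1 + sft p.2) * g p.1‖₊ : ℝ≥0∞) ∂((volume : Measure S1).prod μI)
      = ∫⁻ p, (‖f (p.1 + sft p.2)‖₊ : ℝ≥0∞) * (‖g p.1‖₊ : ℝ≥0∞)
          ∂((volume : Measure S1).prod μI) := by
        simp_rw [nnnorm_mul, ENNReal.coe_mul]
    _ = ∫⁻ δ, ∫⁻ θ, (‖f (θ + sft δ)‖₊ : ℝ≥0∞) * (‖g θ‖₊ : ℝ≥0∞)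
          ∂(volume : Measure S1) ∂μI := lintegral_prod_symm _ hmeas.aemeasurable
    _ ≤ ∫⁻ _, C ∂μI := by
        refine lintegral_mono fun δ => ?_
        have hH := ENNReal.lintegral_mul_le_Lp_mul_Lq (volume : Measure S1) hconj
          ((hf.measurable.nnnorm.coe_nnreal_ennreal.comp
            (measurable_add_const (sft δ))).aemeasurable)
          (hg.measurable.nnnorm.coe_nnreal_ennreal.aemeasurable)
        simp only [Pi.mul_apply] at hH
        refine hH.trans_eq ?_
        rw [hC]
        congr 2
        exact lintegral_add_right_eq_self (fun θ => (‖f θ‖₊ : ℝ≥0∞) ^ (2:ℝ)) (sft δ)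
    _ = C * 2 := by rw [lintegral_const, μI_univ]
    _ < ⊤ := ENNReal.mul_lt_top hCfin ENNReal.ofNat_lt_top

lemma integrable_mix' {f g : S1 → ℂ} (hf : StronglyMeasurable f) (hg : StronglyMeasurable g)
    (hf2 : ∫⁻ θ, (‖f θ‖₊ : ℝ≥0∞) ^ (2:ℝ) ∂(volume : Measure S1) < ⊤)
    (hg2 : ∫⁻ θ, (‖g θ‖₊ : ℝ≥0∞) ^ (2:ℝ) ∂(volume : Measure S1) < ⊤) :
    Integrable (fun p : S1 × ℝ => f p.1 * g (p.1 + sft p.2))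
      ((volume : Measure S1).prod μI) := by
  have hconj : Real.HolderConjugate 2 2 := Real.HolderConjugate.two_two
  have hsm : StronglyMeasurable (fun p : S1 × ℝ => f p.1 * g (p.1 + sft p.2)) :=
    (hf.comp_measurable measurable_fst).mul (meas_comp hg)
  refine ⟨hsm.aestronglyMeasurable, ?_⟩
  have hmeas : Measurable (fun p : S1 × ℝ =>
      (‖f p.1‖₊ : ℝ≥0∞) * (‖g (p.1 + sft p.2)‖₊ : ℝ≥0∞)) :=
    (hf.measurable.nnnorm.coe_nnreal_ennreal.comp measurable_fst).mul
      ((meas_comp hg).measurable.nnnorm.coe_nnreal_ennreal)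
  set C : ℝ≥0∞ := (∫⁻ θ, (‖f θ‖₊ : ℝ≥0∞) ^ (2:ℝ) ∂(volume : Measure S1)) ^ (1/(2:ℝ))
    * (∫⁻ θ, (‖g θ‖₊ : ℝ≥0∞) ^ (2:ℝ) ∂(volume : Measure S1)) ^ (1/(2:ℝ)) with hC
  have hCfin : C < ⊤ := ENNReal.mul_lt_top
    (ENNReal.rpow_lt_top_of_nonneg (by norm_num) hf2.ne)
    (ENNReal.rpow_lt_top_of_nonneg (by norm_num) hg2.ne)
  show (∫⁻ p, (‖f p.1 * g (p.1 + sft p.2)‖₊ : ℝ≥0∞) ∂((volume : Measure S1).prod μI)) < ⊤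
  calc ∫⁻ p, (‖f p.1 * g (p.1 + sft p.2)‖₊ : ℝ≥0∞) ∂((volume : Measure S1).prod μI)
      = ∫⁻ p, (‖f p.1‖₊ : ℝ≥0∞) * (‖g (p.1 + sft p.2)‖₊ : ℝ≥0∞)
          ∂((volume : Measure S1).prod μI) := by
        simp_rw [nnnorm_mul, ENNReal.coe_mul]
    _ = ∫⁻ δ, ∫⁻ θ, (‖f θ‖₊ : ℝ≥0∞) * (‖g (θ + sft δ)‖₊ : ℝ≥0∞)
          ∂(volume : Measure S1) ∂μI := lintegral_prod_symm _ hmeas.aemeasurable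
    _ ≤ ∫⁻ _, C ∂μI := by
        refine lintegral_mono fun δ => ?_
        have hH := ENNReal.lintegral_mul_le_Lp_mul_Lq (volume : Measure S1) hconj
          (hf.measurable.nnnorm.coe_nnreal_ennreal.aemeasurable)
          ((hg.measurable.nnnorm.coe_nnreal_ennreal.comp
            (measurable_add_const (sft δ))).aemeasurable)
        simp only [Pi.mul_apply] at hH
        refine hH.trans_eq ?_
        rw [hC]
        congr 2
        exact lintegral_add_right_eq_self (fun θ => (‖g θ‖₊ : ℝ≥0∞) ^ (2:ℝ)) (sft δ)
    _ = C * 2 := by rw [lintegral_const, μI_univ]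
    _ < ⊤ := ENNReal.mul_lt_top hCfin ENNReal.ofNat_lt_top

lemma conj_sm {f : S1 → ℂ} (hf : StronglyMeasurable f) :
    StronglyMeasurable (fun θ => (starRingEnd ℂ) (f θ)) :=
  RCLike.continuous_conj.comp_stronglyMeasurable hf

lemma conj_sq_lintegral {f : S1 → ℂ} :
    ∫⁻ θ, (‖(starRingEnd ℂ) (f θ)‖₊ : ℝ≥0∞) ^ (2:ℝ) ∂(volume : Measure S1)
      = ∫⁻ θ, (‖f θ‖₊ : ℝ≥0∞) ^ (2:ℝ) ∂(volume : Measure S1) := by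
  simp_rw [RCLike.nnnorm_conj]

lemma selfadj (f g : Lp ℂ 2 (volume : Measure S1)) :
    (inner ℂ (T f) g : ℂ) = (inner ℂ f (T g) : ℂ) := by
  have hFsm := Lp.stronglyMeasurable f
  have hGsm := Lp.stronglyMeasurable g
  have hf2 := sq_lintegral_lt_top f
  have hg2 := sq_lintegral_lt_top g
  -- LHS chain
  have lhs1 : (inner ℂ (T f) g : ℂ)
      = ∫ θ, (starRingEnd ℂ) ((T f : S1 → ℂ) θ) * (g : S1 → ℂ) θ ∂(volume : Measure S1) := by
    rw [L2.inner_def]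
    exact integral_congr_ae (Filter.Eventually.of_forall fun θ => by
      simp only [RCLike.inner_apply]; ring)
  have lhs2 : (inner ℂ (T f) g : ℂ)
      = ∫ θ, (starRingEnd ℂ) (Kop (⇑f) θ) * (g : S1 → ℂ) θ ∂(volume : Measure S1) := by
    rw [lhs1]
    refine integral_congr_ae ?_
    filter_upwards [T_ae f] with θ hθ
    rw [hθ]
  have lhs3 : (inner ℂ (T f) g : ℂ) = (1/2 : ℂ) *
      ∫ θ, (∫ δ, (starRingEnd ℂ) ((f : S1 → ℂ) (θ + sft δ)) * (g : S1 → ℂ) θ ∂μI)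
        ∂(volume : Measure S1) := by
    rw [lhs2, ← integral_const_mul]
    refine integral_congr_ae (Filter.Eventually.of_forall fun θ => ?_)
    simp only [Kop_eq, map_mul, map_div₀, map_one, Complex.conj_ofNat, ← integral_conj]
    rw [mul_assoc]
    congr 1
    exact (integral_mul_const _ _).symm
  have swap1 : (inner ℂ (T f) g : ℂ) = (1/2 : ℂ) *
      ∫ δ, (∫ θ, (starRingEnd ℂ) ((f : S1 → ℂ) (θ + sft δ)) * (g : S1 → ℂ) θ
        ∂(volume : Measure S1)) ∂μI := by
    rw [lhs3]
    congr 1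
    exact integral_integral_swap (by
      exact integrable_mix (conj_sm hFsm) hGsm (by rw [conj_sq_lintegral]; exact hf2) hg2)
  have sub1 : (inner ℂ (T f) g : ℂ) = (1/2 : ℂ) *
      ∫ δ, (∫ θ, (starRingEnd ℂ) ((f : S1 → ℂ) θ) * (g : S1 → ℂ) (θ - sft δ)
        ∂(volume : Measure S1)) ∂μI := by
    rw [swap1]
    congr 1
    refine integral_congr_ae (Filter.Eventually.of_forall fun δ => ?_)
    have h := integral_add_right_eq_self (μ := (volume : Measure S1))
      (fun θ => (starRingEnd ℂ) ((f : S1 → ℂ) θ) * (g : S1 → ℂ) (θ - sft δ)) (sft δ)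
    simp only [add_sub_cancel_right] at h
    exact h
  -- RHS chain
  have rhs1 : (inner ℂ f (T g) : ℂ)
      = ∫ θ, (starRingEnd ℂ) ((f : S1 → ℂ) θ) * Kop (⇑g) θ ∂(volume : Measure S1) := by
    rw [L2.inner_def]
    refine integral_congr_ae ?_
    filter_upwards [T_ae g] with θ hθ
    rw [RCLike.inner_apply, hθ]
    ring
  have rhs2 : (inner ℂ f (T g) : ℂ) = (1/2 : ℂ) *
      ∫ θ, (∫ δ, (starRingEnd ℂ) ((f : S1 → ℂ) θ) * (g : S1 → ℂ) (θ + sft δ) ∂μI)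
        ∂(volume : Measure S1) := by
    rw [rhs1, ← integral_const_mul]
    refine integral_congr_ae (Filter.Eventually.of_forall fun θ => ?_)
    simp only [Kop_eq]
    rw [integral_const_mul]
    ring
  have swap2 : (inner ℂ f (T g) : ℂ) = (1/2 : ℂ) *
      ∫ δ, (∫ θ, (starRingEnd ℂ) ((f : S1 → ℂ) θ) * (g : S1 → ℂ) (θ + sft δ)
        ∂(volume : Measure S1)) ∂μI := by
    rw [rhs2]
    congr 1
    exact integral_integral_swap (by
      exact integrable_mix' (conj_sm hFsm) hGsm (by rw [conj_sq_lintegral]; exact hf2) hg2)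
  -- bridge by the substitution δ ↦ -δ
  rw [sub1, swap2]
  congr 1
  rw [← intervalIntegral_eq_μI, ← intervalIntegral_eq_μI]
  have hcongr : (∫ δ in (-1:ℝ)..1, ∫ θ, (starRingEnd ℂ) ((f : S1 → ℂ) θ)
        * (g : S1 → ℂ) (θ - sft δ) ∂(volume : Measure S1))
      = ∫ δ in (-1:ℝ)..1, (fun t => ∫ θ, (starRingEnd ℂ) ((f : S1 → ℂ) θ)
        * (g : S1 → ℂ) (θ + sft t) ∂(volume : Measure S1)) (-δ) := by
    refine intervalIntegral.integral_congr fun δ _ => ?_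
    simp only [sft_neg, sub_eq_add_neg]
  have hneg := intervalIntegral.integral_comp_neg (a := (-1:ℝ)) (b := 1)
    (fun t => ∫ θ, (starRingEnd ℂ) ((f : S1 → ℂ) θ)
      * (g : S1 → ℂ) (θ + sft t) ∂(volume : Measure S1))
  simp only [neg_neg] at hneg
  rw [hcongr]
  exact hneg

end KopAux

/-- `K` extends to a bounded linear operator on the complex Hilbert
space `L²(S¹)` with operator norm at most `1`, and this operator is self-adjoint. -/
theorem K_extends_to_selfAdjoint_contraction_on_L2 :
    ∃ T : Lp ℂ 2 (volume : Measure S1) →L[ℂ] Lp ℂ 2 (volume : Measure S1),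
      (∀ f : Lp ℂ 2 (volume : Measure S1), (T f : S1 → ℂ) =ᵐ[volume] Kop f) ∧
      ‖T‖ ≤ 1 ∧
      (∀ f g : Lp ℂ 2 (volume : Measure S1),
        (inner ℂ (T f) g : ℂ) = (inner ℂ f (T g) : ℂ)) :=
  ⟨KopAux.T, KopAux.T_ae, KopAux.norm_T_le, KopAux.selfadj⟩
end
end

section
/- The operator K, viewed as a bounded linear operator on L²(S¹) with the arclength measure, is a compact operator. -/
open MeasureTheory Real

noncomputable section

open scoped ComplexConjugate

namespace HardDiskAux

local notation "H" => Lp ℂ 2 (volume : Measure S1)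

def lam (n : ℤ) : ℂ := (1 - 4 * (n:ℂ)^2)⁻¹

lemma lam_norm_le (N : ℕ) (n : ℤ) (hn : (N:ℤ) < |n|) : ‖lam n‖ ≤ 1 / (N+1) := by
  have h1 : ((1:ℂ) - 4*(n:ℂ)^2) = ((1 - 4*n^2 : ℤ) : ℂ) := by push_cast; ring
  have hn2 : (N:ℤ) + 1 ≤ |n| := hn
  have hsq : ((N:ℤ)+1)^2 ≤ n^2 := by
    calc ((N:ℤ)+1)^2 ≤ |n|^2 := by
          apply pow_le_pow_left₀ (by positivity) hn2
      _ = n^2 := sq_abs n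
  have hz : ((N:ℤ) + 1) ≤ |1 - 4*n^2| := by
    rw [abs_sub_comm, abs_of_nonneg (by nlinarith : (0:ℤ) ≤ 4*n^2 - 1)]
    nlinarith
  rw [lam, h1, norm_inv, Complex.norm_intCast]
  rw [one_div]
  apply inv_anti₀ (by positivity)
  have : (((N:ℤ)+1 : ℤ) : ℝ) ≤ ((|1 - 4*n^2| : ℤ) : ℝ) := Int.cast_le.2 hz
  push_cast at this
  simpa using this

lemma isCompactOperator_rankOne {E F : Type*}
    [NormedAddCommGroup E] [InnerProductSpace ℂ E]
    [NormedAddCommGroup F] [NormedSpace ℂ F] (x : E) (y : F) :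
    IsCompactOperator (fun f : E => (inner ℂ x f : ℂ) • y) := by
  refine ⟨(fun c : ℂ => c • y) '' Metric.closedBall 0 ‖x‖, ?_, ?_⟩
  · exact (isCompact_closedBall 0 ‖x‖).image (by fun_prop)
  · filter_upwards [Metric.ball_mem_nhds (0 : E) one_pos] with f hf
    refine ⟨inner ℂ x f, ?_, rfl⟩
    simp only [Metric.mem_closedBall, dist_zero_right]
    calc ‖(inner ℂ x f : ℂ)‖ ≤ ‖x‖ * ‖f‖ := norm_inner_le_norm x f
      _ ≤ ‖x‖ * 1 := by
          apply mul_le_mul_of_nonneg_left _ (norm_nonneg x)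
          exact le_of_lt (by simpa [dist_zero_right] using hf)
      _ = ‖x‖ := mul_one _

def eK (n : ℤ) : H :=
  ((Real.sqrt (2*π) : ℂ))⁻¹ • (ContinuousMap.toLp (E := ℂ) 2 volume ℂ (fourier n))

lemma integral_conj_fourier (m n : ℤ) :
    (∫ x : S1, conj (fourier m x) * fourier n x ∂(volume : Measure S1))
      = if m = n then ((2*π : ℝ) : ℂ) else 0 := by
  have horth := orthonormal_iff_ite.mp (orthonormal_fourier (T := 2*π)) m n
  rw [ContinuousMap.inner_toLp (AddCircle.haarAddCircle (T := 2*π)) (fourier m) (fourier n)] at horth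
  have e : ∀ x : S1, conj (fourier m x) * fourier n x = fourier n x * conj (fourier m x) :=
    fun x => mul_comm _ _
  simp_rw [e]
  rw [AddCircle.volume_eq_smul_haarAddCircle (T := 2*π), integral_smul_measure, horth,
    ENNReal.toReal_ofReal (by positivity : (0:ℝ) ≤ 2*π)]
  split_ifs <;> simp [Complex.real_smul]

lemma orthonormal_eK : Orthonormal ℂ eK := by
  rw [orthonormal_iff_ite]
  intro m n
  rw [eK, eK, inner_smul_left, inner_smul_right,
    ContinuousMap.inner_toLp (volume : Measure S1) (fourier m) (fourier n)]
  simp_rw [mul_comm ((fourier n) _) ((starRingEnd ℂ) _)]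
  rw [integral_conj_fourier]
  have h2π : ((2*π:ℝ):ℂ) ≠ 0 := by
    simp only [ne_eq, Complex.ofReal_eq_zero]
    positivity
  have hsqrt : ((Real.sqrt (2*π) : ℝ) : ℂ) * ((Real.sqrt (2*π) : ℝ) : ℂ) = ((2*π:ℝ):ℂ) := by
    rw [← Complex.ofReal_mul, Real.mul_self_sqrt (by positivity)]
  split_ifs with h
  · rw [map_inv₀, Complex.conj_ofReal, ← mul_assoc, ← mul_inv, hsqrt, inv_mul_cancel₀ h2π]
  · simp

lemma denseSpan_toLp :
    (Submodule.span ℂ (Set.range (fun n : ℤ =>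
      ContinuousMap.toLp (E := ℂ) 2 (volume : Measure S1) ℂ (fourier n)))).topologicalClosure = ⊤ := by
  convert
    (ContinuousMap.toLp_denseRange ℂ (volume : Measure S1) ℂ
      (by simp : (2:ENNReal) ≠ ⊤)).topologicalClosure_map_submodule
      (span_fourier_closure_eq_top (T := 2*π))
  case e'_3 => rfl
  erw [Submodule.map_span, Set.range_comp]
  simp only [ContinuousLinearMap.coe_coe]

lemma denseSpan_eK :
    ⊤ ≤ (Submodule.span ℂ (Set.range eK)).topologicalClosure := by
  have ha : ((Real.sqrt (2*π) : ℝ) : ℂ) ≠ 0 := by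
    simp only [ne_eq, Complex.ofReal_eq_zero]
    positivity
  have hspan : Submodule.span ℂ (Set.range eK)
      = Submodule.span ℂ (Set.range (fun n : ℤ =>
        ContinuousMap.toLp (E := ℂ) 2 (volume : Measure S1) ℂ (fourier n))) := by
    apply le_antisymm
    · rw [Submodule.span_le]
      rintro - ⟨n, rfl⟩
      exact Submodule.smul_mem _ _ (Submodule.subset_span ⟨n, rfl⟩)
    · rw [Submodule.span_le]
      rintro - ⟨n, rfl⟩
      have : ContinuousMap.toLp (E := ℂ) 2 (volume : Measure S1) ℂ (fourier n)
          = (((Real.sqrt (2*π) : ℝ) : ℂ)⁻¹)⁻¹ • eK n := by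
        rw [eK, smul_smul, inv_inv, mul_inv_cancel₀ ha, one_smul]
      show ContinuousMap.toLp (E := ℂ) 2 (volume : Measure S1) ℂ (fourier n) ∈ _
      rw [this]
      exact Submodule.smul_mem _ _ (Submodule.subset_span ⟨n, rfl⟩)
  rw [hspan, denseSpan_toLp]

lemma fourier_coe_eq (n : ℤ) (x : ℝ) :
    fourier n ((x : ℝ) : S1) = Complex.exp (Complex.I * n * x) := by
  rw [fourier_coe_apply]
  congr 1
  have hπ : ((2*π:ℝ):ℂ) ≠ 0 := by
    simp only [ne_eq, Complex.ofReal_eq_zero]; positivity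
  push_cast at hπ ⊢
  field_simp

lemma subst_arcsin (g : ℝ → ℂ) (hg : Continuous g) :
    ∫ δ in (-1:ℝ)..1, g δ = ∫ t in (-(π/2))..(π/2), Real.cos t • g (Real.sin t) := by
  have h := intervalIntegral.integral_comp_smul_deriv
    (f := Real.sin) (f' := Real.cos) (g := g) (a := -(π/2)) (b := π/2)
    (fun x _ => Real.hasDerivAt_sin x) Real.continuous_cos.continuousOn hg
  rw [Real.sin_neg, Real.sin_pi_div_two] at h
  rw [← h]
  simp only [Function.comp]


lemma lam_integral (n : ℤ) :
    (1 / 2 : ℂ) * ∫ δ in (-1:ℝ)..1, fourier n (((π - 2 * arcsin δ : ℝ) : S1)) = lam n := by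
  -- the integrand as a continuous function of δ
  set g : ℝ → ℂ := fun δ => Complex.exp (Complex.I * n * ((π:ℝ) - 2 * arcsin δ)) with hg_def
  have hg : Continuous g := by
    apply Complex.continuous_exp.comp
    apply Continuous.mul continuous_const
    exact Continuous.sub continuous_const (Continuous.mul continuous_const
      (Complex.continuous_ofReal.comp Real.continuous_arcsin))
  have hint : ∀ δ : ℝ, fourier n (((π - 2 * arcsin δ : ℝ) : S1)) = g δ := by
    intro δ
    rw [fourier_coe_eq n]
    rw [hg_def]
    push_cast
    ring_nf
  rw [intervalIntegral.integral_congr (fun δ _ => hint δ), subst_arcsin g hg]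
  -- replace arcsin (sin t) by t on the interval
  have hcong : ∀ t ∈ Set.uIcc (-(π/2)) (π/2),
      Real.cos t • g (Real.sin t)
        = Real.cos t • Complex.exp (Complex.I * n * ((π:ℝ) - 2 * t)) := by
    intro t ht
    rw [Set.uIcc_of_le (by linarith [pi_pos] : -(π/2) ≤ π/2)] at ht
    rw [hg_def]
    simp only []
    rw [Real.arcsin_sin ht.1 ht.2]
  rw [intervalIntegral.integral_congr hcong]
  -- decompose into exponentials
  set W : ℂ := Complex.exp ((n:ℂ) * (π:ℝ) * Complex.I) with hW_def
  set c₁ : ℂ := Complex.I * (1 - 2*n) with hc₁_def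
  set c₂ : ℂ := -Complex.I * (1 + 2*n) with hc₂_def
  have key : ∀ t : ℝ, (Real.cos t : ℝ) • Complex.exp (Complex.I * n * ((π:ℝ) - 2 * t))
      = W/2 * (Complex.exp (c₁ * t) + Complex.exp (c₂ * t)) := by
    intro t
    have h1 : Complex.exp (Complex.I * n * ((π:ℝ) - 2 * t))
        = W * Complex.exp (-2 * n * Complex.I * t) := by
      rw [hW_def, ← Complex.exp_add]; congr 1; push_cast; ring
    have h2 : Complex.exp (c₁ * t)
        = Complex.exp ((t:ℂ) * Complex.I) * Complex.exp (-2 * n * Complex.I * t) := by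
      rw [← Complex.exp_add, hc₁_def]; congr 1; ring
    have h3 : Complex.exp (c₂ * t)
        = Complex.exp (-(t:ℂ) * Complex.I) * Complex.exp (-2 * n * Complex.I * t) := by
      rw [← Complex.exp_add, hc₂_def]; congr 1; ring
    have hcos : ((Real.cos t : ℝ) : ℂ)
        = (Complex.exp ((t:ℂ) * Complex.I) + Complex.exp (-(t:ℂ) * Complex.I)) / 2 := by
      rw [Complex.ofReal_cos]
      have := Complex.two_cos (t : ℂ)
      rw [eq_div_iff (two_ne_zero (α := ℂ))]
      linear_combination this
    rw [Complex.real_smul, hcos, h1, h2, h3]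
    ring
  rw [intervalIntegral.integral_congr (fun t _ => key t)]
  rw [intervalIntegral.integral_const_mul]
  have hc1 : c₁ ≠ 0 := by
    rw [hc₁_def]
    apply mul_ne_zero Complex.I_ne_zero
    intro h
    have h' : ((1 - 2*n : ℤ) : ℂ) = 0 := by push_cast; linear_combination h
    have := Int.cast_injective (α := ℂ) (h'.trans (Int.cast_zero).symm)
    omega
  have hc2 : c₂ ≠ 0 := by
    rw [hc₂_def]
    apply mul_ne_zero (neg_ne_zero.mpr Complex.I_ne_zero)
    intro h
    have h' : ((1 + 2*n : ℤ) : ℂ) = 0 := by push_cast; linear_combination h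
    have := Int.cast_injective (α := ℂ) (h'.trans (Int.cast_zero).symm)
    omega
  have hi1 : IntervalIntegrable (fun t : ℝ => Complex.exp (c₁ * t)) volume (-(π/2)) (π/2) := by
    apply Continuous.intervalIntegrable
    exact Complex.continuous_exp.comp (continuous_const.mul Complex.continuous_ofReal)
  have hi2 : IntervalIntegrable (fun t : ℝ => Complex.exp (c₂ * t)) volume (-(π/2)) (π/2) := by
    apply Continuous.intervalIntegrable
    exact Complex.continuous_exp.comp (continuous_const.mul Complex.continuous_ofReal)
  rw [intervalIntegral.integral_add hi1 hi2,
    integral_exp_mul_complex hc1, integral_exp_mul_complex hc2]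
  -- evaluate the exponentials
  have hWW : W * W = 1 := by
    rw [hW_def, ← Complex.exp_add]
    have h2pi := Complex.exp_int_mul_two_pi_mul_I n
    rw [← h2pi]
    congr 1
    push_cast
    ring
  have hWinv : Complex.exp (-((n:ℂ) * (π:ℝ) * Complex.I)) = W := by
    rw [Complex.exp_neg, ← hW_def, inv_eq_of_mul_eq_one_right hWW]
  have hP : Complex.exp (((π/2 : ℝ) : ℂ) * Complex.I) = Complex.I := by
    rw [Complex.exp_mul_I, ← Complex.ofReal_cos, ← Complex.ofReal_sin,
      Real.cos_pi_div_two, Real.sin_pi_div_two]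
    simp
  have hE1p : Complex.exp (c₁ * ((π/2 : ℝ) : ℂ)) = Complex.I * W := by
    rw [show c₁ * ((π/2 : ℝ) : ℂ)
        = ((π/2 : ℝ) : ℂ) * Complex.I + -((n:ℂ) * (π:ℝ) * Complex.I) from by
      rw [hc₁_def]; push_cast; ring]
    rw [Complex.exp_add, hP, hWinv]
  have hE1m : Complex.exp (c₁ * ((-(π/2) : ℝ) : ℂ)) = -(Complex.I * W) := by
    rw [show c₁ * ((-(π/2) : ℝ) : ℂ)
        = -(((π/2 : ℝ) : ℂ) * Complex.I) + (n:ℂ) * (π:ℝ) * Complex.I from by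
      rw [hc₁_def]; push_cast; ring]
    rw [Complex.exp_add, Complex.exp_neg, hP, ← hW_def, Complex.inv_I]
    ring
  have hE2p : Complex.exp (c₂ * ((π/2 : ℝ) : ℂ)) = -(Complex.I * W) := by
    rw [show c₂ * ((π/2 : ℝ) : ℂ)
        = -(((π/2 : ℝ) : ℂ) * Complex.I) + -((n:ℂ) * (π:ℝ) * Complex.I) from by
      rw [hc₂_def]; push_cast; ring]
    rw [Complex.exp_add, Complex.exp_neg, hP, hWinv, Complex.inv_I]
    ring
  have hE2m : Complex.exp (c₂ * ((-(π/2) : ℝ) : ℂ)) = Complex.I * W := by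
    rw [show c₂ * ((-(π/2) : ℝ) : ℂ)
        = ((π/2 : ℝ) : ℂ) * Complex.I + (n:ℂ) * (π:ℝ) * Complex.I from by
      rw [hc₂_def]; push_cast; ring]
    rw [Complex.exp_add, hP, ← hW_def]
  rw [hE1p, hE1m, hE2p, hE2m, lam]
  have h4 : (1 : ℂ) - 4 * (n:ℂ)^2 ≠ 0 := by
    intro h
    have h' : ((1 - 4*n^2 : ℤ) : ℂ) = 0 := by push_cast; linear_combination h
    have := Int.cast_injective (α := ℂ) (h'.trans (Int.cast_zero).symm)
    rw [pow_two] at this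
    omega
  have hn1 : (1:ℂ) - 2*(n:ℂ) ≠ 0 := by
    intro h
    have h' : ((1 - 2*n : ℤ) : ℂ) = 0 := by push_cast; linear_combination h
    have := Int.cast_injective (α := ℂ) (h'.trans (Int.cast_zero).symm)
    omega
  have hn2 : (1:ℂ) + 2*(n:ℂ) ≠ 0 := by
    intro h
    have h' : ((1 + 2*n : ℤ) : ℂ) = 0 := by push_cast; linear_combination h
    have := Int.cast_injective (α := ℂ) (h'.trans (Int.cast_zero).symm)
    omega
  have hd1 : (Complex.I*W - -(Complex.I*W))/c₁ = 2*W/(1-2*(n:ℂ)) := by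
    rw [hc₁_def, show Complex.I*W - -(Complex.I*W) = Complex.I * (2*W) from by ring]
    exact mul_div_mul_left _ _ Complex.I_ne_zero
  have hd2 : (-(Complex.I*W) - Complex.I*W)/c₂ = 2*W/(1+2*(n:ℂ)) := by
    rw [hc₂_def, show -(Complex.I*W) - Complex.I*W = (-Complex.I) * (2*W) from by ring]
    exact mul_div_mul_left _ _ (neg_ne_zero.mpr Complex.I_ne_zero)
  rw [hd1, hd2, inv_eq_one_div, eq_div_iff h4]
  field_simp
  linear_combination (2 - 8*(n:ℂ)^2) * hWW

lemma fourier_apply_add (n : ℤ) (x y : S1) :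
    fourier n (x + y) = fourier n x * fourier n y := by
  simp_rw [fourier_apply, smul_add, AddCircle.toCircle_add, Circle.coe_mul]

lemma Kop_fourier (n : ℤ) (θ : S1) :
    Kop (⇑(fourier n)) θ = lam n * fourier n θ := by
  rw [Kop]
  have : ∀ δ : ℝ, fourier n (θ + ((π - 2 * arcsin δ : ℝ) : S1))
      = fourier n θ * fourier n (((π - 2 * arcsin δ : ℝ) : S1)) := fun δ =>
    fourier_apply_add n θ _
  rw [intervalIntegral.integral_congr (fun δ _ => this δ),
    intervalIntegral.integral_const_mul,
    show (1/2:ℂ) * (fourier n θ * ∫ δ in (-1:ℝ)..1, fourier n (((π - 2 * arcsin δ : ℝ) : S1)))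
      = fourier n θ * ((1/2:ℂ) * ∫ δ in (-1:ℝ)..1, fourier n (((π - 2 * arcsin δ : ℝ) : S1)))
      from by ring,
    lam_integral, mul_comm]

lemma Kop_congr {f g : S1 → ℂ} (h : f =ᵐ[volume] g) :
    Kop f =ᵐ[volume] Kop g := by
  have hnull : (volume : Measure S1) {x : S1 | f x ≠ g x} = 0 := by
    exact ae_iff.mp h
  obtain ⟨N, hsub, hNm, hN0⟩ := exists_measurable_superset_of_null hnull
  set c : ℝ → S1 := fun δ => ((π - 2 * arcsin δ : ℝ) : S1) with hc
  have hcont : Continuous fun p : S1 × ℝ => p.1 + c p.2 := by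
    apply Continuous.add continuous_fst
    exact (AddCircle.continuous_mk' (2*π)).comp
      ((continuous_const.sub (continuous_const.mul Real.continuous_arcsin)).comp continuous_snd)
  set S : Set (S1 × ℝ) := (fun p : S1 × ℝ => p.1 + c p.2) ⁻¹' N with hS
  have hSm : MeasurableSet S := hcont.measurable hNm
  have hS0 : ((volume : Measure S1).prod (volume : Measure ℝ)) S = 0 := by
    rw [Measure.prod_apply_symm hSm]
    have hslice : ∀ δ : ℝ, (volume : Measure S1) ((fun θ : S1 => (θ, δ)) ⁻¹' S) = 0 := by
      intro δ
      have : ((fun θ : S1 => (θ, δ)) ⁻¹' S) = (fun θ : S1 => θ + c δ) ⁻¹' N := rfl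
      rw [this, measure_preimage_add_right]
      exact hN0
    simp [hslice]
  have hae : ∀ᵐ θ ∂(volume : Measure S1), ∀ᵐ δ ∂(volume : Measure ℝ), (θ, δ) ∉ S :=
    Measure.ae_ae_of_ae_prod (measure_eq_zero_iff_ae_notMem.mp hS0)
  filter_upwards [hae] with θ hθ
  rw [Kop, Kop]
  congr 1
  apply intervalIntegral.integral_congr_ae
  filter_upwards [hθ] with δ hδ _
  by_contra hne
  exact hδ (hsub hne)

def B : HilbertBasis ℤ ℂ H := HilbertBasis.mk orthonormal_eK denseSpan_eK

lemma B_apply (n : ℤ) : B n = eK n := by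
  rw [B, HilbertBasis.coe_mk]

lemma isCompactOperator_finsetSum {E F : Type*}
    [NormedAddCommGroup E] [NormedSpace ℂ E]
    [NormedAddCommGroup F] [NormedSpace ℂ F]
    {ι : Type*} (s : Finset ι) (φ : ι → E → F)
    (h : ∀ i ∈ s, IsCompactOperator (φ i)) :
    IsCompactOperator (fun x => ∑ i ∈ s, φ i x) := by
  classical
  induction s using Finset.induction with
  | empty => simp only [Finset.sum_empty]; exact isCompactOperator_zero
  | insert a s hnot ih =>
    simp only [Finset.sum_insert hnot]
    exact (h a (Finset.mem_insert_self a s)).add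
      (ih fun i hi => h i (Finset.mem_insert_of_mem hi))

lemma T_toLp (T : H →L[ℂ] H) (hT : ∀ f : H, (T f : S1 → ℂ) =ᵐ[volume] Kop f) (n : ℤ) :
    T (ContinuousMap.toLp (E := ℂ) 2 volume ℂ (fourier n))
      = lam n • ContinuousMap.toLp (E := ℂ) 2 volume ℂ (fourier n) := by
  apply Lp.ext (p := 2) (μ := (volume : Measure S1))
  have h1 : (T (ContinuousMap.toLp (E := ℂ) 2 volume ℂ (fourier n)) : S1 → ℂ)
      =ᵐ[volume] Kop ⇑(ContinuousMap.toLp (E := ℂ) 2 volume ℂ (fourier n)) := hT _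
  have h2 : Kop ⇑(ContinuousMap.toLp (E := ℂ) 2 volume ℂ (fourier n))
      =ᵐ[volume] Kop ⇑(fourier n) :=
    Kop_congr (ContinuousMap.coeFn_toLp (p := 2) (𝕜 := ℂ) (volume : Measure S1) (fourier n))
  have h3 : Kop ⇑(fourier n) = fun θ => lam n * fourier n θ := funext (Kop_fourier n)
  rw [h3] at h2
  have h4 : (↑(lam n • ContinuousMap.toLp (E := ℂ) 2 volume ℂ (fourier n)) : S1 → ℂ)
      =ᵐ[volume] fun θ => lam n * fourier n θ := by
    filter_upwards [Lp.coeFn_smul (lam n) (ContinuousMap.toLp (E := ℂ) 2 volume ℂ (fourier n)),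
      ContinuousMap.coeFn_toLp (p := 2) (𝕜 := ℂ) (volume : Measure S1) (fourier n)] with θ ha hb
    rw [ha, Pi.smul_apply, smul_eq_mul, hb]
  exact (h1.trans h2).trans h4.symm

lemma T_B (T : H →L[ℂ] H) (hT : ∀ f : H, (T f : S1 → ℂ) =ᵐ[volume] Kop f) (n : ℤ) :
    T (B n) = lam n • B n := by
  rw [B_apply, eK, ContinuousLinearMap.map_smul, T_toLp T hT n, smul_comm]


end HardDiskAux

open HardDiskAux

/-- the operator `K`, viewed as a bounded linear operator on
`L²(S¹)` (i.e. any bounded operator on `L²(S¹)` representing `K`), is a compact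
operator. -/
theorem K_is_compact_on_L2
    (T : Lp ℂ 2 (volume : Measure S1) →L[ℂ] Lp ℂ 2 (volume : Measure S1))
    (hT : ∀ f : Lp ℂ 2 (volume : Measure S1), (T f : S1 → ℂ) =ᵐ[volume] Kop f) :
    IsCompactOperator T := by
  classical
  -- diagonalization
  have hdiag : ∀ (f : Lp ℂ 2 (volume : Measure S1)) (m : ℤ), (inner ℂ (B m) (T f) : ℂ) = lam m * inner ℂ (B m) f := by
    intro f m
    have hsum : HasSum (fun b : ℤ => B.repr f b • T (B b)) (T f) := by
      have h := (B.hasSum_repr f).mapL T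
      simp only [ContinuousLinearMap.map_smul] at h
      exact h
    have h2 : HasSum (fun b : ℤ => (inner ℂ (B m) (B.repr f b • T (B b)) : ℂ))
        (inner ℂ (B m) (T f)) := by
      have h := hsum.mapL (innerSL ℂ (B m))
      simpa [inner_smul_right] using h
    have h3 : ∀ n : ℤ, n ≠ m → (inner ℂ (B m) (B.repr f n • T (B n)) : ℂ) = 0 := by
      intro n hn
      rw [T_B T hT n, inner_smul_right, inner_smul_right,
        orthonormal_iff_ite.mp B.orthonormal m n, if_neg (fun h => hn h.symm)]
      ring
    have h4 : (inner ℂ (B m) (T f) : ℂ) = inner ℂ (B m) (B.repr f m • T (B m)) :=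
      h2.unique (hasSum_single m h3)
    rw [h4, T_B T hT m, inner_smul_right, inner_smul_right,
      orthonormal_iff_ite.mp B.orthonormal m m, if_pos rfl, B.repr_apply_apply]
    ring
  -- Parseval
  have hPars : ∀ x : Lp ℂ 2 (volume : Measure S1), HasSum (fun i : ℤ => ‖(inner ℂ (B i) x : ℂ)‖^2) (‖x‖^2) := by
    intro x
    have h : HasSum (fun i : ℤ => Complex.reCLM ((inner ℂ x (B i) : ℂ) * inner ℂ (B i) x))
        (Complex.reCLM (inner ℂ x x : ℂ)) := (B.hasSum_inner_mul_inner x x).mapL Complex.reCLM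
    have h1 : ∀ i : ℤ, Complex.reCLM ((inner ℂ x (B i) : ℂ) * inner ℂ (B i) x)
        = ‖(inner ℂ (B i) x : ℂ)‖^2 := by
      intro i
      rw [← inner_conj_symm x (B i), RCLike.conj_mul]
      norm_cast
    have h2 : Complex.reCLM (inner ℂ x x : ℂ) = ‖x‖^2 := by
      simpa using inner_self_eq_norm_sq (𝕜 := ℂ) x
    rw [h2] at h
    simp only [h1] at h
    exact h
  -- finite-rank approximations
  set F : ℕ → Finset ℤ := fun N => Finset.Icc (-(N:ℤ)) N with hF
  set TN : ℕ → (Lp ℂ 2 (volume : Measure S1) →L[ℂ] Lp ℂ 2 (volume : Measure S1)) := fun N =>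
    ∑ n ∈ F N, lam n • (innerSL ℂ (B n)).smulRight (B n) with hTN
  have hTNapply : ∀ N (f : Lp ℂ 2 (volume : Measure S1)), TN N f = ∑ n ∈ F N, lam n • ((inner ℂ (B n) f : ℂ) • B n) := by
    intro N f
    rw [hTN]
    simp [ContinuousLinearMap.sum_apply, ContinuousLinearMap.smul_apply,
      ContinuousLinearMap.smulRight_apply, innerSL_apply_apply]
  have hcomp : ∀ N, IsCompactOperator (TN N) := by
    intro N
    have h : ⇑(TN N) = fun f => ∑ n ∈ F N, lam n • ((inner ℂ (B n) f : ℂ) • B n) :=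
      funext (hTNapply N)
    rw [h]
    apply isCompactOperator_finsetSum
    intro i _
    exact (isCompactOperator_rankOne (B i) (B i)).smul (lam i)
  have hTNcoef : ∀ N (f : Lp ℂ 2 (volume : Measure S1)) (m : ℤ), (inner ℂ (B m) (TN N f) : ℂ)
      = if m ∈ F N then lam m * inner ℂ (B m) f else 0 := by
    intro N f m
    rw [hTNapply, inner_sum]
    have h : ∀ n ∈ F N, (inner ℂ (B m) (lam n • ((inner ℂ (B n) f : ℂ) • B n)) : ℂ)
        = if n = m then lam m * inner ℂ (B m) f else 0 := by
      intro n _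
      rw [inner_smul_right, inner_smul_right, orthonormal_iff_ite.mp B.orthonormal m n]
      by_cases hnm : n = m
      · subst hnm
        rw [if_pos rfl, if_pos rfl]
        ring
      · rw [if_neg (fun hh => hnm hh.symm), if_neg hnm]
        ring
    rw [Finset.sum_congr rfl h, Finset.sum_ite_eq' (F N) m (fun _ => lam m * inner ℂ (B m) f)]
  have hbound : ∀ N (f : Lp ℂ 2 (volume : Measure S1)), ‖T f - TN N f‖ ≤ (1/(N+1) : ℝ) * ‖f‖ := by
    intro N f
    have hx := hPars (T f - TN N f)
    have hf := hPars f
    have hcoef : ∀ m : ℤ, ‖(inner ℂ (B m) (T f - TN N f) : ℂ)‖^2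
        ≤ (1/(N+1) : ℝ)^2 * ‖(inner ℂ (B m) f : ℂ)‖^2 := by
      intro m
      rw [inner_sub_right, hdiag f m, hTNcoef N f m]
      by_cases h : m ∈ F N
      · rw [if_pos h, sub_self]
        simp only [norm_zero, ne_eq, OfNat.ofNat_ne_zero, not_false_eq_true, zero_pow]
        positivity
      · rw [if_neg h, sub_zero, norm_mul, mul_pow]
        apply mul_le_mul_of_nonneg_right _ (by positivity)
        have habs : (N:ℤ) < |m| := by
          rw [hF] at h
          simp only [Finset.mem_Icc] at h
          rcases abs_cases m with ⟨h1, h2⟩ | ⟨h1, h2⟩ <;> omega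
        exact pow_le_pow_left₀ (norm_nonneg _) (lam_norm_le N m habs) 2
    have hsq : ‖T f - TN N f‖^2 ≤ ((1/(N+1):ℝ) * ‖f‖)^2 := by
      rw [mul_pow]
      calc ‖T f - TN N f‖^2 = ∑' m : ℤ, ‖(inner ℂ (B m) (T f - TN N f) : ℂ)‖^2 := hx.tsum_eq.symm
        _ ≤ ∑' m : ℤ, (1/(N+1):ℝ)^2 * ‖(inner ℂ (B m) f : ℂ)‖^2 :=
            Summable.tsum_le_tsum hcoef hx.summable (hf.summable.mul_left _)
        _ = (1/(N+1):ℝ)^2 * ‖f‖^2 := by rw [tsum_mul_left, hf.tsum_eq]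
    have h2 := Real.sqrt_le_sqrt hsq
    rwa [Real.sqrt_sq (norm_nonneg _), Real.sqrt_sq (by positivity)] at h2
  have hnorm : ∀ N, ‖TN N - T‖ ≤ (1/(N+1) : ℝ) := by
    intro N
    apply ContinuousLinearMap.opNorm_le_bound _ (by positivity)
    intro f
    rw [ContinuousLinearMap.sub_apply, norm_sub_rev]
    exact hbound N f
  have htend : Filter.Tendsto TN Filter.atTop (nhds T) := by
    rw [tendsto_iff_norm_sub_tendsto_zero]
    apply squeeze_zero (fun N => norm_nonneg _) hnorm
    exact tendsto_one_div_add_atTop_nhds_zero_nat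
  exact isCompactOperator_of_tendsto htend (Filter.Eventually.of_forall hcomp)
end
end

section
/- For every integrable function f on S¹ and every θ ∈ ℝ, the operator K admits the convolution representation (K f)(v(θ)) = (1/4) ∫_{0}^{2π} sin(β/2) f(v(θ + β)) dβ; in particular K is convolution on the circle with the nonnegative even kernel k(β) = (1/4) sin(β/2), β ∈ [0, 2π], of total integral 1. -/
open MeasureTheory Real

noncomputable section

lemma phi_image : (fun β : ℝ => Real.cos (β / 2)) '' Set.Ioo 0 (2 * π) = Set.Ioo (-1) 1 := by
  ext y
  constructor
  · rintro ⟨β, ⟨h0, h2⟩, rfl⟩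
    have hb0 : (0:ℝ) < β / 2 := by linarith
    have hbπ : β / 2 < π := by linarith
    constructor
    · have := Real.strictAntiOn_cos (Set.mem_Icc.2 ⟨hb0.le, hbπ.le⟩)
        (Set.mem_Icc.2 ⟨by positivity, le_refl π⟩) hbπ
      simpa [Real.cos_pi] using this
    · have := Real.strictAntiOn_cos (Set.mem_Icc.2 ⟨le_refl 0, Real.pi_pos.le⟩)
        (Set.mem_Icc.2 ⟨hb0.le, hbπ.le⟩) hb0
      simpa [Real.cos_zero] using this
  · rintro ⟨h1, h2⟩
    refine ⟨2 * Real.arccos y, ⟨?_, ?_⟩, ?_⟩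
    · have := Real.arccos_pos.2 h2; linarith
    · have : Real.arccos y < π := by
        rw [Real.arccos, sub_lt_iff_lt_add]
        have := Real.neg_pi_div_two_lt_arcsin.2 h1
        linarith
      linarith
    · show Real.cos (2 * Real.arccos y / 2) = y
      rw [show 2 * Real.arccos y / 2 = Real.arccos y from by ring,
        Real.cos_arccos h1.le h2.le]

lemma arcsin_cos_eq {β : ℝ} (h0 : 0 ≤ β) (h2 : β ≤ 2 * π) :
    π - 2 * Real.arcsin (Real.cos (β / 2)) = β := by
  have : Real.cos (β / 2) = Real.sin (π / 2 - β / 2) := (Real.sin_pi_div_two_sub _).symm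
  rw [this, Real.arcsin_sin (by linarith) (by linarith)]
  ring

/-- for every integrable `f` on `S¹` and every `θ`, `K` admits the
convolution representation
`(K f)(v(θ)) = (1/4) ∫₀^{2π} sin(β/2) f(v(θ+β)) dβ`;
the kernel `k(β) = (1/4) sin(β/2)` is nonnegative and even on `[0, 2π]` (as a
kernel on the circle, i.e. `k(2π − β) = k(β)`) and has total integral `1`. -/
theorem K_convolution_representation
    (f : S1 → ℂ) (hf : Integrable f (volume : Measure S1)) :
    (∀ θ : S1, Kop f θ
        = (1 / 4 : ℂ) * ∫ β in (0:ℝ)..(2 * π), (sin (β / 2) : ℂ) * f (θ + (β : S1))) ∧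
    (∀ β ∈ Set.Icc (0:ℝ) (2 * π), 0 ≤ (1 / 4) * sin (β / 2)) ∧
    (∀ β ∈ Set.Icc (0:ℝ) (2 * π), (1 / 4) * sin ((2 * π - β) / 2) = (1 / 4) * sin (β / 2)) ∧
    (∫ β in (0:ℝ)..(2 * π), (1 / 4) * sin (β / 2)) = 1 := by
  have hπ : (0:ℝ) < π := Real.pi_pos
  refine ⟨?_, ?_, ?_, ?_⟩
  · intro θ
    set g : ℝ → ℂ := fun δ => f (θ + ((π - 2 * arcsin δ : ℝ) : S1)) with hg
    have key : (∫ δ in (-1:ℝ)..1, g δ)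
        = ∫ β in Set.Ioo (0:ℝ) (2 * π), |(-(1/2) * Real.sin (β / 2))| • g (Real.cos (β / 2)) := by
      rw [intervalIntegral.integral_of_le (by norm_num), integral_Ioc_eq_integral_Ioo,
        ← phi_image]
      exact MeasureTheory.integral_image_eq_integral_abs_deriv_smul measurableSet_Ioo
        (fun x _ => by
          have : HasDerivAt (fun β : ℝ => Real.cos (β / 2)) (-(1/2) * Real.sin (x / 2)) x := by
            have h1 : HasDerivAt (fun β : ℝ => β / 2) (1/2 : ℝ) x := by
              simpa using (hasDerivAt_id x).div_const 2
            have := (Real.hasDerivAt_cos (x / 2)).comp x h1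
            exact this.congr_deriv (by ring)
          exact this.hasDerivWithinAt)
        (fun a ha b hb hab => by
          have ha' : a / 2 ∈ Set.Icc (0:ℝ) π := ⟨by linarith [ha.1], by linarith [ha.2]⟩
          have hb' : b / 2 ∈ Set.Icc (0:ℝ) π := ⟨by linarith [hb.1], by linarith [hb.2]⟩
          have := Real.strictAntiOn_cos.injOn ha' hb' hab
          linarith [this ▸ (rfl : a / 2 = a / 2)]) g
    have key2 : (∫ β in Set.Ioo (0:ℝ) (2 * π), |(-(1/2) * Real.sin (β / 2))| • g (Real.cos (β / 2)))
        = ∫ β in Set.Ioo (0:ℝ) (2 * π), ((1/2 : ℝ) * Real.sin (β / 2) : ℝ) • f (θ + (β : S1)) := by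
      refine setIntegral_congr_fun measurableSet_Ioo (fun β hβ => ?_)
      have h0 : (0:ℝ) ≤ β := hβ.1.le
      have h2 : β ≤ 2 * π := hβ.2.le
      have hsin : (0:ℝ) ≤ Real.sin (β / 2) :=
        Real.sin_nonneg_of_nonneg_of_le_pi (by linarith) (by linarith)
      rw [hg]
      simp only [arcsin_cos_eq h0 h2]
      congr 1
      rw [abs_of_nonpos (by nlinarith)]
      ring
    rw [Kop, key, key2]
    rw [intervalIntegral.integral_of_le (by positivity), integral_Ioc_eq_integral_Ioo]
    have hpt : ∀ β : ℝ, ((1/2 * Real.sin (β/2) : ℝ)) • f (θ + (β : S1))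
        = (1/2 : ℂ) * ((Real.sin (β/2) : ℂ) * f (θ + (β : S1))) := by
      intro β
      rw [Complex.real_smul]
      push_cast
      ring
    simp only [hpt, MeasureTheory.integral_const_mul]
    ring
  · intro β hβ
    have : (0:ℝ) ≤ Real.sin (β / 2) :=
      Real.sin_nonneg_of_nonneg_of_le_pi (by linarith [hβ.1]) (by linarith [hβ.2])
    linarith
  · intro β hβ
    have : (2 * π - β) / 2 = π - β / 2 := by ring
    rw [this, Real.sin_pi_sub]
  · have h1 : (∫ β in (0:ℝ)..(2 * π), Real.sin (β / 2)) = 4 := by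
      have := intervalIntegral.integral_comp_div (a := 0) (b := 2 * π) (c := 2)
        (f := Real.sin) (by norm_num)
      rw [this, show (0:ℝ)/2 = 0 by norm_num, show (2 * π / 2 : ℝ) = π by ring,
        integral_sin]
      norm_num [Real.cos_pi]
    rw [intervalIntegral.integral_const_mul, h1]
    norm_num
end
end

section
/- The spectrum of K, viewed as a bounded linear operator on the complex Hilbert space L²(S¹), equals {0} ∪ {1/(1 − 4m²) : m ∈ ℤ}. In particular 1 belongs to the spectrum, all other nonzero spectral values are negative and accumulate only at 0, and 0 is the only accumulation point of the spectrum. -/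
open MeasureTheory Real
open scoped ENNReal ComplexConjugate

noncomputable section

namespace Kspec

abbrev H : Type := Lp ℂ 2 (volume : Measure S1)

def lam (m : ℤ) : ℂ := 1 / (1 - 4 * (m:ℂ)^2)

-- instance checks
example : CompactSpace S1 := inferInstance
example : IsFiniteMeasure (volume : Measure S1) := inferInstance
example : (volume : Measure S1).WeaklyRegular := inferInstance
example : SecondCountableTopology S1 := inferInstance
example : (volume : Measure S1).IsAddRightInvariant := inferInstance
example : BorelSpace S1 := inferInstance
example : CompleteSpace H := inferInstance

lemma denom_ne (m : ℤ) : (1 : ℂ) - 4 * (m:ℂ)^2 ≠ 0 := by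
  intro h
  have h2 : ((4 * m ^ 2 : ℤ) : ℂ) = ((1:ℤ):ℂ) := by push_cast; linear_combination -h
  have h3 : 4 * m ^ 2 = 1 := Int.cast_injective h2
  omega

lemma core_integral (m : ℤ) :
    ∫ δ in (-1:ℝ)..1, Complex.exp (Complex.I * m * ((π:ℂ) - 2 * Real.arcsin δ)) =
      2 / (1 - 4 * (m:ℂ)^2) := by
  have hden := denom_ne m
  have hpi2 : -(π/2) ≤ π/2 := by linarith [pi_pos]
  set c : ℂ := -2 * Complex.I * m with hc
  have hc2 : 1 + c^2 = 1 - 4 * (m:ℂ)^2 := by rw [hc]; ring_nf; simp [Complex.I_sq]; ring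
  -- change of variables δ = sin x
  have hsub := intervalIntegral.integral_comp_smul_deriv (a := -(π/2)) (b := π/2)
      (f := Real.sin) (f' := Real.cos)
      (g := fun δ : ℝ => Complex.exp (Complex.I * m * ((π:ℂ) - 2 * Real.arcsin δ)))
      (fun x _ => Real.hasDerivAt_sin x) Real.continuous_cos.continuousOn
      (by continuity)
  rw [Real.sin_neg, Real.sin_pi_div_two] at hsub
  rw [← hsub]
  -- replace arcsin (sin x) by x on the interval
  have hcongr : Set.EqOn
      (fun x : ℝ => Real.cos x • ((fun δ : ℝ =>
          Complex.exp (Complex.I * m * ((π:ℂ) - 2 * Real.arcsin δ))) ∘ Real.sin) x)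
      (fun x : ℝ => Real.cos x • Complex.exp (Complex.I * (m:ℂ) * (π:ℂ) + c * x))
      (Set.uIcc (-(π/2)) (π/2)) := by
    intro x hx
    rw [Set.uIcc_of_le hpi2] at hx
    simp only [Function.comp_apply]
    rw [Real.arcsin_sin hx.1 hx.2]
    congr 1
    rw [hc]; push_cast; ring
  rw [intervalIntegral.integral_congr hcongr]
  -- antiderivative
  have hanti : ∀ x : ℝ, HasDerivAt (fun x : ℝ =>
      Complex.exp (Complex.I * (m:ℂ) * (π:ℂ) + c * x) * (c * Real.cos x + Real.sin x) / (1 + c^2))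
      (Real.cos x • Complex.exp (Complex.I * (m:ℂ) * (π:ℂ) + c * x)) x := by
    intro x
    have h1 : HasDerivAt (fun x : ℝ => Complex.exp (Complex.I * (m:ℂ) * (π:ℂ) + c * x)) 
        (c * Complex.exp (Complex.I * (m:ℂ) * (π:ℂ) + c * x)) x := by
      have : HasDerivAt (fun x : ℝ => (Complex.I * (m:ℂ) * (π:ℂ) + c * x)) c x := by
        simpa using ((Complex.ofRealCLM.hasDerivAt (x := x)).const_mul c).const_add
          (Complex.I * (m:ℂ) * (π:ℂ))
      simpa [mul_comm] using this.cexp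
    have h2 : HasDerivAt (fun x : ℝ => (c * Real.cos x + Real.sin x : ℂ))
        (-c * Real.sin x + Real.cos x) x := by
      have hcos : HasDerivAt (fun x : ℝ => (Real.cos x : ℂ)) (-Real.sin x) x := by
        simpa using (Real.hasDerivAt_cos x).ofReal_comp
      have hsin : HasDerivAt (fun x : ℝ => (Real.sin x : ℂ)) (Real.cos x) x := by
        simpa using (Real.hasDerivAt_sin x).ofReal_comp
      exact ((hcos.const_mul c).add hsin).congr_deriv (by ring)
    have := (h1.mul h2).div_const (1 + c^2)
    convert this using 1
    · rfl
    · rfl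
    have h12 : (1:ℂ) + c^2 ≠ 0 := hc2 ▸ hden
    field_simp
    simp only [Complex.real_smul]
    ring
  rw [intervalIntegral.integral_eq_sub_of_hasDerivAt (fun x _ => hanti x) (by
    apply Continuous.intervalIntegrable
    continuity)]
  have e1 : Complex.exp (Complex.I * (m:ℂ) * (π:ℂ) + c * (π/2:ℝ)) = 1 := by
    rw [hc]; push_cast
    rw [show Complex.I * (m:ℂ) * (π:ℂ) + -2 * Complex.I * (m:ℂ) * ((π:ℂ)/2) = 0 by ring]
    exact Complex.exp_zero
  have e2 : Complex.exp (Complex.I * (m:ℂ) * (π:ℂ) + c * (-(π/2):ℝ)) = 1 := by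
    rw [hc]; push_cast
    rw [show Complex.I * (m:ℂ) * (π:ℂ) + -2 * Complex.I * (m:ℂ) * (-((π:ℂ)/2))
        = (m:ℂ) * (2 * (π:ℂ) * Complex.I) by ring]
    exact Complex.exp_int_mul_two_pi_mul_I m
  rw [e1, e2, hc2]
  rw [Real.cos_pi_div_two, Real.sin_pi_div_two, Real.cos_neg, Real.sin_neg,
    Real.cos_pi_div_two, Real.sin_pi_div_two]
  push_cast
  field_simp
  norm_num

def c : ℂ := ((Real.sqrt (2 * π) : ℝ) : ℂ)⁻¹

lemma c_ne : c ≠ 0 := by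
  simp only [c, ne_eq, inv_eq_zero, Complex.ofReal_eq_zero]
  positivity

lemma conj_c_mul_c : (starRingEnd ℂ) c * c * ((2 * π : ℝ) : ℂ) = 1 := by
  simp only [c, map_inv₀, Complex.conj_ofReal]
  norm_cast
  rw [← mul_inv, Real.mul_self_sqrt (by positivity), inv_mul_cancel₀ (by positivity)]

def e (m : ℤ) : H := c • (ContinuousMap.toLp (E := ℂ) 2 (volume : Measure S1) ℂ (fourier m))

lemma orthonormal_e : Orthonormal ℂ e := by
  rw [orthonormal_iff_ite]
  intro i j
  simp only [e, inner_smul_left, inner_smul_right]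
  rw [ContinuousMap.inner_toLp (volume : Measure S1) (fourier i) (fourier j)]
  rw [AddCircle.volume_eq_smul_haarAddCircle, integral_smul_measure]
  have h1 : ∫ x : S1, fourier j x * (starRingEnd ℂ) (fourier i x) ∂(@AddCircle.haarAddCircle (2*π) _)
      = if i = j then 1 else 0 := by
    rw [← ContinuousMap.inner_toLp (@AddCircle.haarAddCircle (2*π) _) (fourier i) (fourier j)]
    exact orthonormal_iff_ite.mp orthonormal_fourier i j
  rw [h1, ENNReal.toReal_ofReal (by positivity)]
  have h2 := conj_c_mul_c
  split_ifs
  · rw [Complex.real_smul, mul_one]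
    push_cast
    push_cast at h2
    linear_combination h2
  · simp


lemma dense_span_e : (Submodule.span ℂ (Set.range e)).topologicalClosure = ⊤ := by
  have hspan : Submodule.span ℂ (Set.range e)
      = Submodule.span ℂ (Set.range fun m : ℤ =>
          ContinuousMap.toLp (E := ℂ) 2 (volume : Measure S1) ℂ (fourier m)) := by
    apply le_antisymm <;> rw [Submodule.span_le] <;> rintro - ⟨m, rfl⟩
    · exact Submodule.smul_mem _ c (Submodule.subset_span ⟨m, rfl⟩)
    · show (ContinuousMap.toLp (E := ℂ) 2 (volume : Measure S1) ℂ (fourier m))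
        ∈ (Submodule.span ℂ (Set.range e) : Set H)
      have : (ContinuousMap.toLp (E := ℂ) 2 (volume : Measure S1) ℂ (fourier m)) = c⁻¹ • e m := by
        rw [e, smul_smul, inv_mul_cancel₀ c_ne, one_smul]
      rw [this]
      exact Submodule.smul_mem _ _ (Submodule.subset_span ⟨m, rfl⟩)
  have h2 := (ContinuousMap.toLp_denseRange (p := 2) ℂ (volume : Measure S1) ℂ
    ENNReal.ofNat_ne_top).topologicalClosure_map_submodule span_fourier_closure_eq_top
  have h3 : Submodule.map (ContinuousMap.toLp (E := ℂ) 2 (volume : Measure S1) ℂ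
        : C(S1, ℂ) →ₗ[ℂ] H) (Submodule.span ℂ (Set.range fourier))
      = Submodule.span ℂ (Set.range fun m : ℤ =>
          ContinuousMap.toLp (E := ℂ) 2 (volume : Measure S1) ℂ (fourier m)) := by
    rw [Submodule.map_span, ← Set.range_comp]
    rfl
  rw [hspan, ← h3]
  exact h2

def B : HilbertBasis ℤ ℂ H :=
  HilbertBasis.mk orthonormal_e (by rw [dense_span_e])

lemma B_eq (m : ℤ) : B m = e m := by
  rw [B, HilbertBasis.coe_mk]


lemma fourier_translate (m : ℤ) (x y : S1) : fourier m (x + y) = fourier m x * fourier m y := by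
  rw [fourier_apply, fourier_apply, fourier_apply, zsmul_add, AddCircle.toCircle_add]
  simp

lemma fourier_real (m : ℤ) (s : ℝ) :
    fourier m ((s : ℝ) : S1) = Complex.exp (Complex.I * m * s) := by
  rw [fourier_coe_apply]
  congr 1
  have hpi : ((2:ℂ) * π) ≠ 0 := by
    simp [Real.pi_ne_zero, Complex.ofReal_ne_zero]
  field_simp
  push_cast
  ring

lemma Kop_fourier (m : ℤ) (θ : S1) : Kop (⇑(fourier m)) θ = lam m * fourier m θ := by
  rw [Kop]
  have h1 : ∀ δ : ℝ, fourier m (θ + ((π - 2 * arcsin δ : ℝ) : S1))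
      = fourier m θ * Complex.exp (Complex.I * m * ((π:ℂ) - 2 * arcsin δ)) := by
    intro δ
    rw [fourier_translate, fourier_real]
    push_cast
    ring_nf
  simp only [h1]
  rw [intervalIntegral.integral_const_mul, core_integral m]
  rw [lam]
  ring

lemma Kop_congr_ae {f g : S1 → ℂ} (hf : StronglyMeasurable f) (hg : StronglyMeasurable g)
    (h : f =ᵐ[(volume : Measure S1)] g) : Kop f =ᵐ[(volume : Measure S1)] Kop g := by
  set s : ℝ → S1 := fun δ => ((π - 2 * arcsin δ : ℝ) : S1) with hs
  have hsc : Continuous s := by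
    apply (AddCircle.continuous_mk' (2*π)).comp
    continuity
  set N : Set S1 := {x | ¬ f x = g x} with hN
  have hNm : MeasurableSet N := (hf.measurableSet_eq_fun hg).compl
  have hN0 : (volume : Measure S1) N = 0 := h
  set A : Set (ℝ × S1) := (fun p : ℝ × S1 => p.2 + s p.1) ⁻¹' N with hA
  have hAm : MeasurableSet A :=
    ((continuous_snd.add (hsc.comp continuous_fst)).measurable) hNm
  have hA0 : ((volume : Measure ℝ).prod (volume : Measure S1)) A = 0 := by
    rw [MeasureTheory.Measure.measure_prod_null hAm]
    refine Filter.Eventually.of_forall (fun δ => ?_)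
    show (volume : Measure S1) (Prod.mk δ ⁻¹' A) = 0
    have h2 : (Prod.mk δ ⁻¹' A) = (fun θ : S1 => θ + s δ) ⁻¹' N := rfl
    rw [h2, measure_preimage_add_right]
    exact hN0
  set A' : Set (S1 × ℝ) := Prod.swap ⁻¹' A with hA'
  have hA'm : MeasurableSet A' := measurable_swap hAm
  have hA'0 : ((volume : Measure S1).prod (volume : Measure ℝ)) A' = 0 := by
    rw [← MeasureTheory.Measure.prod_swap, MeasureTheory.Measure.map_apply measurable_swap hA'm]
    have h3 : Prod.swap ⁻¹' A' = A := by
      ext p; simp [hA']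
    rw [h3]
    exact hA0
  have key := (MeasureTheory.Measure.measure_prod_null hA'm).mp hA'0
  filter_upwards [key] with θ hθ
  have hae : ∀ᵐ δ ∂(volume : Measure ℝ), f (θ + s δ) = g (θ + s δ) := by
    rw [MeasureTheory.ae_iff]
    exact hθ
  rw [Kop, Kop]
  congr 1
  apply intervalIntegral.integral_congr_ae
  filter_upwards [hae] with δ hδ _
  exact hδ

lemma coe_e (m : ℤ) : ⇑(e m) =ᵐ[(volume : Measure S1)] fun x => c * fourier m x := by
  have h1 : ⇑(e m) =ᵐ[(volume : Measure S1)]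
      c • ⇑(ContinuousMap.toLp (E := ℂ) 2 (volume : Measure S1) ℂ (fourier m)) :=
    Lp.coeFn_smul c _
  have h2 := ContinuousMap.coeFn_toLp (p := 2) (𝕜 := ℂ) (volume : Measure S1) (fourier m)
  filter_upwards [h1, h2] with x hx1 hx2
  rw [hx1]
  simp only [Pi.smul_apply, smul_eq_mul, hx2]

lemma T_eigen (T : H →L[ℂ] H) (hT : ∀ f : H, (T f : S1 → ℂ) =ᵐ[(volume : Measure S1)] Kop f)
    (m : ℤ) : T (e m) = lam m • e m := by
  apply Lp.ext (p := 2) (μ := (volume : Measure S1))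
  have h1 := coe_e m
  have h2 := hT (e m)
  have h3 : Kop ⇑(e m) =ᵐ[(volume : Measure S1)] Kop (fun x => c * fourier m x) :=
    Kop_congr_ae (Lp.stronglyMeasurable _)
      (Continuous.stronglyMeasurable (continuous_const.mul (map_continuous (fourier m)))) h1
  have h4 : Kop (fun x => c * fourier m x) = fun θ => lam m * (c * fourier m θ) := by
    funext θ
    rw [Kop]
    rw [intervalIntegral.integral_const_mul]
    have h5 := Kop_fourier m θ
    rw [Kop] at h5
    rw [mul_left_comm, h5]
    ring
  have h6 : ⇑(lam m • e m) =ᵐ[(volume : Measure S1)] fun θ => lam m * (c * fourier m θ) := by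
    have := Lp.coeFn_smul (lam m) (e m)
    filter_upwards [this, h1] with x hx1 hx2
    rw [hx1]
    simp only [Pi.smul_apply, smul_eq_mul, hx2]
  exact (h2.trans (h3.trans (by rw [h4]))).trans h6.symm

abbrev ℓ2 : Type := lp (fun _ : ℤ => ℂ) 2

lemma two_toReal : ((2 : ℝ≥0∞)).toReal = 2 := by norm_num

lemma memlp_mul {w : ℤ → ℂ} {C : ℝ} (hw : ∀ i, ‖w i‖ ≤ C) (g : ℓ2) :
    Memℓp (fun i => w i * g i) 2 := by
  apply memℓp_gen
  rw [two_toReal]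
  have hg : Summable (fun i => ‖g i‖ ^ (2:ℝ)) := by
    have := (lp.memℓp g).summable (p := 2) (by rw [two_toReal]; norm_num)
    simpa [two_toReal] using this
  apply Summable.of_nonneg_of_le (fun i => by positivity)
    (fun i => ?_) (hg.mul_left (C^2))
  calc ‖w i * g i‖ ^ (2:ℝ) ≤ (C * ‖g i‖) ^ (2:ℝ) := by
        apply Real.rpow_le_rpow (norm_nonneg _) ?_ (by norm_num)
        rw [norm_mul]
        exact mul_le_mul_of_nonneg_right (hw i) (norm_nonneg _)
    _ = C^2 * ‖g i‖ ^ (2:ℝ) := by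
        rw [Real.mul_rpow ((norm_nonneg (w i)).trans (hw i)) (norm_nonneg _)]
        norm_num

def mulOp (w : ℤ → ℂ) (C : ℝ) (hC : 0 ≤ C) (hw : ∀ i, ‖w i‖ ≤ C) : ℓ2 →L[ℂ] ℓ2 :=
  LinearMap.mkContinuous
    { toFun := fun g => ⟨fun i => w i * g i, memlp_mul hw g⟩
      map_add' := fun g h => by
        ext i
        simp [lp.coeFn_add, mul_add]
        rfl
      map_smul' := fun a g => by
        ext i
        simp [lp.coeFn_smul, Pi.smul_apply]
        ring }
    C
    (by
      intro g
      dsimp only [LinearMap.coe_mk, AddHom.coe_mk]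
      apply lp.norm_le_of_tsum_le (by rw [two_toReal]; norm_num)
        (mul_nonneg hC (norm_nonneg g))
      have hg : Summable (fun i => ‖g i‖ ^ (2:ℝ)) := by
        have := (lp.memℓp g).summable (p := 2) (by rw [two_toReal]; norm_num)
        simpa [two_toReal] using this
      have hle : ∀ i : ℤ, ‖(⟨fun i => w i * g i, memlp_mul hw g⟩ : ℓ2) i‖ ^ ((2:ℝ≥0∞)).toReal
          ≤ C^2 * ‖g i‖ ^ (2:ℝ) := by
        intro i
        rw [two_toReal]
        calc ‖w i * g i‖ ^ (2:ℝ) ≤ (C * ‖g i‖) ^ (2:ℝ) := by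
              apply Real.rpow_le_rpow (norm_nonneg _) ?_ (by norm_num)
              rw [norm_mul]
              exact mul_le_mul_of_nonneg_right (hw i) (norm_nonneg _)
          _ = C^2 * ‖g i‖ ^ (2:ℝ) := by
              rw [Real.mul_rpow ((norm_nonneg (w i)).trans (hw i)) (norm_nonneg _)]
              norm_num
      calc ∑' i : ℤ, ‖(⟨fun i => w i * g i, memlp_mul hw g⟩ : ℓ2) i‖ ^ ((2:ℝ≥0∞)).toReal
          ≤ ∑' i : ℤ, C^2 * ‖g i‖ ^ (2:ℝ) :=
            Summable.tsum_le_tsum hle (by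
              apply Summable.of_nonneg_of_le (fun i => by positivity) hle
                (hg.mul_left (C^2))) (hg.mul_left (C^2))
        _ = C^2 * ∑' i : ℤ, ‖g i‖ ^ (2:ℝ) := tsum_mul_left
        _ = C^2 * ‖g‖ ^ (2:ℝ) := by
            have hnorm := lp.norm_rpow_eq_tsum (p := 2) (by rw [two_toReal]; norm_num) g
            rw [two_toReal] at hnorm
            rw [← hnorm]
        _ ≤ (C * ‖g‖) ^ ((2:ℝ≥0∞)).toReal := by
            rw [two_toReal]
            rw [mul_rpow hC (norm_nonneg g)]
            norm_num)

lemma mulOp_apply (w : ℤ → ℂ) (C : ℝ) (hC : 0 ≤ C) (hw : ∀ i, ‖w i‖ ≤ C) (g : ℓ2) (i : ℤ) :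
    (mulOp w C hC hw g) i = w i * g i := rfl

lemma lam_zero : lam 0 = 1 := by simp [lam]

lemma lam_ne_zero (m : ℤ) : lam m ≠ 0 := one_div_ne_zero (denom_ne m)

lemma lam_real (m : ℤ) : lam m = ((1 / (1 - 4 * (m:ℝ)^2) : ℝ) : ℂ) := by
  rw [lam]; push_cast; ring

lemma norm_lam (m : ℤ) : ‖lam m‖ = |1 / (1 - 4 * (m:ℝ)^2)| := by
  rw [lam_real, Complex.norm_real, Real.norm_eq_abs]

lemma denom_real_ne (m : ℤ) : (1 - 4 * (m:ℝ)^2) ≠ 0 := by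
  intro h
  have : ((1:ℝ) - 4 * (m:ℝ)^2) = ((1 - 4*m^2 : ℤ) : ℝ) := by push_cast; ring
  rw [this] at h
  have h2 : (1 - 4*m^2 : ℤ) = 0 := by exact_mod_cast h
  omega

lemma norm_lam_le (m : ℤ) (hm : m ≠ 0) : ‖lam m‖ ≤ 1 / (3 * |(m:ℝ)|) := by
  rw [norm_lam]
  have hm1 : (1:ℝ) ≤ |(m:ℝ)| := by
    rw [← Int.cast_abs]
    exact_mod_cast Int.one_le_abs hm
  have hsq : (1:ℝ) ≤ (m:ℝ)^2 := by rw [← sq_abs]; nlinarith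
  have h1 : |1 - 4 * (m:ℝ)^2| = 4 * (m:ℝ)^2 - 1 := by
    rw [abs_of_nonpos (by nlinarith)]
    ring
  rw [abs_div, abs_one, h1]
  rw [div_le_div_iff₀ (by nlinarith) (by positivity)]
  have : (m:ℝ)^2 = |(m:ℝ)|^2 := (sq_abs _).symm
  nlinarith

lemma lam_inj_abs {k l : ℤ} (h : lam k = lam l) : k^2 = l^2 := by
  rw [lam, lam, div_eq_div_iff (denom_ne k) (denom_ne l)] at h
  have h2 : (4:ℂ) * (k:ℂ)^2 = 4 * (l:ℂ)^2 := by linear_combination h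
  have h3 : ((k^2 : ℤ) : ℂ) = ((l^2 : ℤ) : ℂ) := by push_cast; linear_combination h2 / 4
  exact_mod_cast h3

lemma gap {z : ℂ} (hz : z ≠ 0) :
    ∃ d : ℝ, 0 < d ∧ d ≤ ‖z‖ ∧ ∀ m : ℤ, z ≠ lam m → d ≤ ‖z - lam m‖ := by
  have hznorm : 0 < ‖z‖ := norm_pos_iff.mpr hz
  set M : ℕ := max 1 ⌈2 / (3 * ‖z‖)⌉₊ with hM
  have hM1 : 1 ≤ (M:ℝ) := by
    have : (1:ℕ) ≤ M := le_max_left _ _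
    exact_mod_cast this
  have hM2 : 2 / (3 * ‖z‖) ≤ (M:ℝ) := by
    refine le_trans (Nat.le_ceil _) ?_
    exact_mod_cast le_max_right 1 ⌈2 / (3 * ‖z‖)⌉₊
  set F : Finset ℤ := (Finset.Icc (-(M:ℤ)) M).filter (fun k => z ≠ lam k) with hF
  set d : ℝ := min (‖z‖ / 2)
    (if h : F.Nonempty then F.inf' h (fun k => ‖z - lam k‖) else 1) with hd
  have hdpos : 0 < d := by
    apply lt_min (by positivity)
    split_ifs with h
    · rw [Finset.lt_inf'_iff]
      intro k hk
      have : z ≠ lam k := (Finset.mem_filter.mp hk).2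
      rw [norm_pos_iff]
      exact sub_ne_zero.mpr this
    · norm_num
  refine ⟨d, hdpos, le_trans (min_le_left _ _) (by linarith), fun m hm => ?_⟩
  by_cases hmF : m ∈ Finset.Icc (-(M:ℤ)) M
  · have hmF' : m ∈ F := Finset.mem_filter.mpr ⟨hmF, hm⟩
    have hne : F.Nonempty := ⟨m, hmF'⟩
    calc d ≤ (if h : F.Nonempty then F.inf' h (fun k => ‖z - lam k‖) else 1) := min_le_right _ _
      _ = F.inf' hne (fun k => ‖z - lam k‖) := by rw [dif_pos hne]
      _ ≤ ‖z - lam m‖ := Finset.inf'_le _ hmF'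
  · -- |m| > M
    have hmM : (M:ℝ) < |(m:ℝ)| := by
      rw [Finset.mem_Icc, not_and_or] at hmF
      rw [← Int.cast_abs]
      have h4 : (M:ℤ) < |m| := by
        rcases hmF with h | h
        · push_neg at h
          rcases le_or_gt 0 m with h5 | h5
          · exfalso; omega
          · rw [abs_of_neg h5]; omega
        · push_neg at h
          rw [abs_of_pos (by omega)]; omega
      exact_mod_cast h4
    have hm0 : m ≠ 0 := by
      intro h0
      rw [h0] at hmM
      simp at hmM
      linarith
    have hlam : ‖lam m‖ ≤ ‖z‖ / 2 := by
      refine le_trans (norm_lam_le m hm0) ?_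
      rw [div_le_div_iff₀ (by linarith) (by positivity)]
      have h3 : 2 / (3 * ‖z‖) * (3 * ‖z‖) ≤ (M:ℝ) * (3 * ‖z‖) := by
        apply mul_le_mul_of_nonneg_right hM2 (by positivity)
      rw [div_mul_cancel₀ _ (by positivity : (3:ℝ) * ‖z‖ ≠ 0)] at h3
      nlinarith
    calc d ≤ ‖z‖ / 2 := min_le_left _ _
      _ ≤ ‖z‖ - ‖lam m‖ := by linarith
      _ ≤ ‖z - lam m‖ := by
          have := norm_sub_norm_le z (lam m)
          linarith

lemma not_mem_spectrum_of (T : H →L[ℂ] H)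
    (hT : ∀ f : H, (T f : S1 → ℂ) =ᵐ[(volume : Measure S1)] Kop f)
    {z : ℂ} (hz : z ≠ 0) (hz2 : ∀ m : ℤ, z ≠ lam m) : z ∉ spectrum ℂ T := by
  obtain ⟨d, hd, -, hdle⟩ := gap hz
  set w : ℤ → ℂ := fun m => (z - lam m)⁻¹ with hwdef
  have hsub : ∀ m, z - lam m ≠ 0 := fun m => sub_ne_zero.mpr (hz2 m)
  have hw : ∀ i, ‖w i‖ ≤ d⁻¹ := by
    intro i
    rw [hwdef, norm_inv]
    exact inv_anti₀ hd (hdle i (hz2 i))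
  set R : H →L[ℂ] ℓ2 := B.repr.toContinuousLinearEquiv.toContinuousLinearMap with hR
  set Rinv : ℓ2 →L[ℂ] H := B.repr.symm.toContinuousLinearEquiv.toContinuousLinearMap with hRinv
  set Sz : H →L[ℂ] H := Rinv ∘L (mulOp w d⁻¹ (by positivity) hw) ∘L R with hSz
  set A : H →L[ℂ] H := algebraMap ℂ (H →L[ℂ] H) z - T with hAdef
  have hA : ∀ x : H, A x = z • x - T x := by
    intro x
    rw [hAdef]
    simp [Algebra.algebraMap_eq_smul_one]
  have hAe : ∀ m : ℤ, A (B m) = (z - lam m) • B m := by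
    intro m
    rw [hA, B_eq, T_eigen T hT m, sub_smul]
  have hSze : ∀ m : ℤ, Sz (B m) = w m • B m := by
    intro m
    rw [hSz]
    simp only [ContinuousLinearMap.comp_apply]
    have h1 : R (B m) = lp.single 2 m 1 := by
      rw [hR]
      simpa using B.repr_self m
    rw [h1]
    have h2 : (mulOp w d⁻¹ (by positivity) hw) (lp.single 2 m 1)
        = w m • lp.single 2 m 1 := by
      ext i
      rw [mulOp_apply, lp.coeFn_smul, Pi.smul_apply, smul_eq_mul]
      by_cases hi : i = m
      · subst hi
        rw [lp.single_apply_self]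
      · rw [lp.single_apply_ne 2 m _ hi, mul_zero, mul_zero]
    rw [h2, Rinv.map_smul]
    congr 1
    rw [hRinv]
    have h3 := B.repr_self m
    have h4 := congrArg B.repr.symm h3
    rw [LinearIsometryEquiv.symm_apply_apply] at h4
    simpa using h4.symm
  have hdense : Dense (Submodule.span ℂ (Set.range ⇑B) : Set H) :=
    Submodule.dense_iff_topologicalClosure_eq_top.mpr B.dense_span
  have hmul1 : A * Sz = 1 := by
    apply ContinuousLinearMap.ext_on hdense
    rintro - ⟨m, rfl⟩
    rw [ContinuousLinearMap.mul_apply, hSze, A.map_smul, hAe, smul_smul,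
      inv_mul_cancel₀ (hsub m), one_smul, ContinuousLinearMap.one_apply]
  have hmul2 : Sz * A = 1 := by
    apply ContinuousLinearMap.ext_on hdense
    rintro - ⟨m, rfl⟩
    rw [ContinuousLinearMap.mul_apply, hAe, Sz.map_smul, hSze, smul_smul,
      mul_inv_cancel₀ (hsub m), one_smul, ContinuousLinearMap.one_apply]
  rw [spectrum.notMem_iff]
  exact ⟨⟨A, Sz, hmul1, hmul2⟩, rfl⟩

lemma e_ne_zero (m : ℤ) : e m ≠ 0 := by
  have h := orthonormal_e.1 m
  intro h0
  rw [h0] at h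
  simp at h

lemma lam_mem_spectrum (T : H →L[ℂ] H)
    (hT : ∀ f : H, (T f : S1 → ℂ) =ᵐ[(volume : Measure S1)] Kop f)
    (m : ℤ) : lam m ∈ spectrum ℂ T := by
  rw [spectrum.mem_iff]
  intro hu
  have hker : (algebraMap ℂ (H →L[ℂ] H) (lam m) - T) (e m) = 0 := by
    simp only [ContinuousLinearMap.sub_apply, Algebra.algebraMap_eq_smul_one,
      ContinuousLinearMap.smul_apply, ContinuousLinearMap.one_apply]
    rw [T_eigen T hT m, sub_self]
  have h1 : (↑hu.unit⁻¹ * ↑hu.unit : H →L[ℂ] H) (e m) = e m := by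
    rw [Units.inv_mul, ContinuousLinearMap.one_apply]
  rw [ContinuousLinearMap.mul_apply, IsUnit.unit_spec, hker, map_zero] at h1
  exact e_ne_zero m h1.symm

lemma zero_mem_spectrum (T : H →L[ℂ] H)
    (hT : ∀ f : H, (T f : S1 → ℂ) =ᵐ[(volume : Measure S1)] Kop f) :
    (0:ℂ) ∈ spectrum ℂ T := by
  have hclosed : IsClosed (spectrum ℂ T) := spectrum.isClosed T
  have htend : Filter.Tendsto (fun n : ℕ => lam n) Filter.atTop (nhds 0) := by
    rw [tendsto_zero_iff_norm_tendsto_zero]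
    have hbound : ∀ᶠ n : ℕ in Filter.atTop, ‖lam (n:ℤ)‖ ≤ 1/(3*(n:ℝ)) := by
      filter_upwards [Filter.eventually_ge_atTop 1] with n hn
      have h0 : ((n:ℤ)) ≠ 0 := by
        have : (1:ℕ) ≤ n := hn
        omega
      have h1 := norm_lam_le (n:ℤ) h0
      have h2 : |((n:ℤ):ℝ)| = (n:ℝ) := by
        rw [abs_of_nonneg (by positivity)]
        norm_cast
      rw [h2] at h1
      exact_mod_cast h1
    have hg : Filter.Tendsto (fun n : ℕ => 1/(3*(n:ℝ))) Filter.atTop (nhds 0) := by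
      have h3 : Filter.Tendsto (fun n : ℕ => (1:ℝ)/n) Filter.atTop (nhds 0) :=
        tendsto_one_div_atTop_nhds_zero_nat
      have h4 : (fun n : ℕ => 1/(3*(n:ℝ))) = (fun n : ℕ => (1/3) * ((1:ℝ)/n)) := by
        funext n
        field_simp
      rw [h4]
      simpa using h3.const_mul (1/3 : ℝ)
    exact squeeze_zero' (Filter.Eventually.of_forall fun n => norm_nonneg _) hbound hg
  exact hclosed.mem_of_tendsto htend
    (Filter.Eventually.of_forall fun n => lam_mem_spectrum T hT n)

end Kspec

/-- the spectrum of `K`, viewed as a bounded linear operator on the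
complex Hilbert space `L²(S¹)`, equals `{0} ∪ {1/(1 − 4m²) : m ∈ ℤ}`.
In particular `1` belongs to the spectrum, all other nonzero spectral values are
(real and) negative, and `0` is the only accumulation point of the spectrum. -/
theorem K_spectrum
    (T : Lp ℂ 2 (volume : Measure S1) →L[ℂ] Lp ℂ 2 (volume : Measure S1))
    (hT : ∀ f : Lp ℂ 2 (volume : Measure S1), (T f : S1 → ℂ) =ᵐ[volume] Kop f) :
    spectrum ℂ T = {0} ∪ {z : ℂ | ∃ m : ℤ, z = 1 / (1 - 4 * (m : ℂ) ^ 2)} ∧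
    (1 : ℂ) ∈ spectrum ℂ T ∧
    (∀ z ∈ spectrum ℂ T, z ≠ 0 → z ≠ 1 → ∃ r : ℝ, r < 0 ∧ z = (r : ℂ)) ∧
    (∀ z : ℂ, AccPt z (Filter.principal (spectrum ℂ T)) ↔ z = 0) := by
  have hlam : ∀ m : ℤ, (1 : ℂ) / (1 - 4 * (m : ℂ) ^ 2) = Kspec.lam m := fun m => rfl
  have hspec : spectrum ℂ T = {0} ∪ {z : ℂ | ∃ m : ℤ, z = 1 / (1 - 4 * (m : ℂ) ^ 2)} := by
    ext z
    constructor
    · intro hzin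
      by_contra hznot
      rw [Set.mem_union, not_or] at hznot
      obtain ⟨hz0, hzm⟩ := hznot
      have hz0' : z ≠ 0 := by simpa using hz0
      have hzm' : ∀ m : ℤ, z ≠ Kspec.lam m := by
        intro m hm
        exact hzm ⟨m, by rw [hlam m]; exact hm⟩
      exact Kspec.not_mem_spectrum_of T hT hz0' hzm' hzin
    · rintro (hz | ⟨m, rfl⟩)
      · rw [Set.mem_singleton_iff] at hz
        rw [hz]
        exact Kspec.zero_mem_spectrum T hT
      · rw [hlam]
        exact Kspec.lam_mem_spectrum T hT m
  refine ⟨hspec, ?_, ?_, ?_⟩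
  · have := Kspec.lam_mem_spectrum T hT 0
    rwa [Kspec.lam_zero] at this
  · intro z hz hz0 hz1
    rw [hspec] at hz
    rcases hz with hz | ⟨m, rfl⟩
    · exact absurd (by simpa using hz) hz0
    · have hm0 : m ≠ 0 := by
        intro h
        apply hz1
        rw [h, hlam, Kspec.lam_zero]
      refine ⟨1 / (1 - 4 * (m:ℝ)^2), ?_, ?_⟩
      · have hsq : (1:ℝ) ≤ (m:ℝ)^2 := by
          have : (1:ℤ) ≤ m^2 := by
            rcases lt_or_gt_of_ne hm0 with h | h <;> nlinarith
          exact_mod_cast this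
        apply div_neg_of_pos_of_neg one_pos
        linarith
      · rw [hlam, Kspec.lam_real]
  · intro z
    constructor
    · intro hacc
      by_contra hz0
      obtain ⟨d, hd, hdz, hdle⟩ := Kspec.gap hz0
      rw [accPt_iff_nhds] at hacc
      obtain ⟨y, ⟨hyB, hyS⟩, hyz⟩ := hacc (Metric.ball z d) (Metric.ball_mem_nhds z hd)
      rw [hspec] at hyS
      rw [Metric.mem_ball] at hyB
      rcases hyS with hy | ⟨m, rfl⟩
      · rw [Set.mem_singleton_iff] at hy
        subst hy
        rw [dist_zero_left] at hyB
        linarith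
      · have : d ≤ ‖z - Kspec.lam m‖ := hdle m (fun h => hyz (by rw [hlam, ← h]))
        rw [dist_eq_norm] at hyB
        rw [← norm_neg] at hyB
        simp only [neg_sub] at hyB
        rw [hlam] at hyB
        linarith
    · intro hz
      subst hz
      rw [accPt_iff_nhds]
      intro U hU
      obtain ⟨ε, hε, hball⟩ := Metric.mem_nhds_iff.mp hU
      obtain ⟨n, hn⟩ := exists_nat_gt (max 1 (1/ε))
      have hn1 : (1:ℝ) ≤ (n:ℝ) := le_trans (le_max_left _ _) hn.le
      have hn0 : (n:ℤ) ≠ 0 := by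
        intro h
        have : (n:ℝ) = 0 := by exact_mod_cast h
        linarith
      refine ⟨Kspec.lam n, ⟨hball ?_, ?_⟩, Kspec.lam_ne_zero n⟩
      · rw [Metric.mem_ball, dist_zero_right]
        have h1 := Kspec.norm_lam_le (n:ℤ) hn0
        have h2 : |((n:ℤ):ℝ)| = (n:ℝ) := by
          rw [abs_of_nonneg (by positivity)]
          norm_cast
        rw [h2] at h1
        have h3 : 1/ε < (n:ℝ) := lt_of_le_of_lt (le_max_right _ _) hn
        have h4 : 1/(n:ℝ) < ε := by
          rw [div_lt_iff₀ (by linarith)]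
          rw [div_lt_iff₀ hε] at h3
          linarith
        have h5 : 1/(3*(n:ℝ)) ≤ 1/(n:ℝ) := by
          apply div_le_div_of_nonneg_left one_pos.le (by linarith)
          linarith
        linarith
      · rw [hspec]
        exact Set.mem_union_right _ ⟨n, rfl⟩
end
end

section
/- The orthogonal complement in L²(S¹) of the kernel of the collision operator L equals the closed subspace of mean-zero functions: (Ker L)^⊥ = { h ∈ L²(S¹) : ∫_{S¹} h(v) dv = 0 }. -/
open MeasureTheory Real

noncomputable section

open scoped ComplexConjugate ENNReal NNReal

namespace KerLAux
abbrev μS : Measure S1 := volume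
abbrev haarS : Measure S1 := AddCircle.haarAddCircle

lemma haar_eq : haarS = (ENNReal.ofReal (2*π))⁻¹ • μS := by
  show haarS = _ • (volume : Measure S1)
  rw [AddCircle.volume_eq_smul_haarAddCircle, smul_smul,
    ENNReal.inv_mul_cancel (by positivity) ENNReal.ofReal_ne_top, one_smul]

lemma haar_ac : haarS ≪ μS := by
  rw [haar_eq]; exact (Measure.smul_absolutelyContinuous)

lemma vol_ac : μS ≪ haarS := by
  show (volume : Measure S1) ≪ haarS
  rw [AddCircle.volume_eq_smul_haarAddCircle]; exact Measure.smul_absolutelyContinuous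

lemma haar_le : haarS ≤ μS := by
  rw [haar_eq]
  intro s
  simp only [Measure.smul_apply, smul_eq_mul]
  calc (ENNReal.ofReal (2*π))⁻¹ * μS s ≤ 1 * μS s := by
        gcongr
        rw [ENNReal.inv_le_one]
        exact ENNReal.one_le_ofReal.mpr (by nlinarith [pi_gt_three])
    _ = μS s := one_mul _


abbrev cS (δ : ℝ) : S1 := ((π - 2 * arcsin δ : ℝ) : S1)

lemma continuous_cS : Continuous cS :=
  (AddCircle.continuous_mk' _).comp (by continuity)

abbrev mS (p : S1 × ℝ) : S1 := p.1 + cS p.2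

lemma measurable_mS : Measurable mS :=
  (continuous_fst.add (continuous_cS.comp continuous_snd)).measurable

lemma qmp (μ : Measure S1) [SFinite μ] [μ.IsAddRightInvariant] (ν : Measure ℝ) [SFinite ν] :
    Measure.QuasiMeasurePreserving mS (μ.prod ν) μ := by
  refine ⟨measurable_mS, Measure.AbsolutelyContinuous.mk fun s hs h0 => ?_⟩
  rw [Measure.map_apply measurable_mS hs, Measure.prod_apply_symm (measurable_mS hs)]
  have hz : ∀ δ : ℝ, μ ((fun t : S1 => (t, δ)) ⁻¹' (mS ⁻¹' s)) = 0 := by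
    intro δ
    have he : ((fun t : S1 => (t, δ)) ⁻¹' (mS ⁻¹' s)) = (· + cS δ) ⁻¹' s := rfl
    rw [he, measure_preimage_add_right, h0]
  simp [hz]

abbrev νI : Measure ℝ := volume.restrict (Set.Ioc (-1:ℝ) 1)

lemma kop_congr {f g : S1 → ℂ} (h : f =ᵐ[μS] g) : Kop f =ᵐ[μS] Kop g := by
  have h2 : ∀ᵐ p ∂(μS.prod νI), f (mS p) = g (mS p) := (qmp μS νI).ae h
  filter_upwards [Measure.ae_ae_of_ae_prod h2] with t ht
  unfold Kop
  congr 1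
  apply intervalIntegral.integral_congr_ae
  rw [Set.uIoc_of_le (by norm_num : (-1:ℝ) ≤ 1)]
  exact ae_imp_of_ae_restrict ht


lemma fourier_arg_add (n : ℤ) (x y : S1) :
    fourier n (x + y) = fourier n x * fourier n y := by
  simp_rw [fourier_apply, smul_add, AddCircle.toCircle_add, Circle.coe_mul]

lemma fourier_neg_coe_neg (n : ℤ) (a : ℝ) :
    fourier (-n) (((-a : ℝ) : S1)) = Complex.exp (Complex.I * n * a) := by
  rw [fourier_coe_apply]
  congr 1
  have hπ : (π:ℂ) ≠ 0 := Complex.ofReal_ne_zero.2 Real.pi_ne_zero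
  push_cast
  field_simp

lemma coeff_translate (f : S1 → ℂ) (n : ℤ) (a : ℝ) :
    (∫ t, fourier (-n) t • f (t + ((a : ℝ) : S1)) ∂haarS)
      = Complex.exp (Complex.I * n * a) * fourierCoeff f n := by
  have key := MeasureTheory.integral_add_right_eq_self (μ := haarS)
    (fun t : S1 => fourier (-n) (t + (((-a : ℝ)) : S1)) • f t) (((a : ℝ)) : S1)
  have h1 : ∀ t : S1, fourier (-n) (t + ((a:ℝ):S1) + (((-a:ℝ)) : S1)) • f (t + ((a:ℝ):S1))
      = fourier (-n) t • f (t + ((a:ℝ):S1)) := by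
    intro t
    congr 2
    rw [add_assoc, ← AddCircle.coe_add]
    simp
  simp_rw [h1] at key
  rw [key]
  have h2 : ∀ t : S1, fourier (-n) (t + (((-a:ℝ)) : S1)) • f t
      = Complex.exp (Complex.I * n * a) * (fourier (-n) t • f t) := by
    intro t
    rw [fourier_arg_add, fourier_neg_coe_neg, smul_eq_mul, smul_eq_mul]
    ring
  simp_rw [h2]
  rw [MeasureTheory.integral_const_mul, fourierCoeff]


lemma D_ne_zero (n : ℤ) : (1:ℂ) - 4*(n:ℂ)^2 ≠ 0 := by
  have h : ((1 - 4*n^2 : ℤ):ℂ) ≠ 0 := by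
    apply Int.cast_ne_zero.mpr
    have hm : 0 ≤ n^2 := sq_nonneg n
    omega
  intro h0
  apply h
  push_cast
  linear_combination h0

lemma key_integral (n : ℤ) :
    (∫ δ in (-1:ℝ)..1, Complex.exp (Complex.I * n * ((π - 2 * arcsin δ : ℝ) : ℂ)))
      = 2 / (1 - 4*(n:ℂ)^2) := by
  have hg : Continuous fun δ : ℝ => Complex.exp (Complex.I * n * ((π - 2 * arcsin δ : ℝ) : ℂ)) := by
    apply Complex.continuous_exp.comp
    exact continuous_const.mul (Complex.continuous_ofReal.comp (by continuity))
  have hsub := intervalIntegral.integral_comp_smul_deriv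
    (f := Real.sin) (f' := Real.cos) (a := -(π/2)) (b := π/2)
    (g := fun δ : ℝ => Complex.exp (Complex.I * n * ((π - 2 * arcsin δ : ℝ) : ℂ)))
    (fun x _ => Real.hasDerivAt_sin x) Real.continuous_cos.continuousOn hg
  rw [Real.sin_neg, Real.sin_pi_div_two] at hsub
  rw [← hsub]
  have hcong : ∀ t ∈ Set.uIcc (-(π/2)) (π/2),
      Real.cos t • Complex.exp (Complex.I * n * ((π - 2 * arcsin (Real.sin t) : ℝ) : ℂ))
        = Real.cos t • Complex.exp (Complex.I * n * ((π:ℂ) - 2 * (t:ℂ))) := by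
    intro t ht
    rw [Set.uIcc_of_le (by linarith [pi_pos] : -(π/2) ≤ π/2)] at ht
    rw [Real.arcsin_sin ht.1 ht.2]
    push_cast
    ring_nf
  rw [intervalIntegral.integral_congr (g := fun t =>
      Real.cos t • Complex.exp (Complex.I * n * ((π:ℂ) - 2 * (t:ℂ)))) (fun t ht => by
    simpa using hcong t ht)]
  -- FTC
  set D : ℂ := 1 - 4*(n:ℂ)^2 with hD
  have hDne := D_ne_zero n
  set F : ℝ → ℂ := fun t => Complex.exp (Complex.I * n * ((π:ℂ) - 2*(t:ℂ)))
      * ((Real.sin t : ℂ) - 2*Complex.I*n*(Real.cos t : ℂ)) / D with hF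
  have hderiv : ∀ t ∈ Set.uIcc (-(π/2)) (π/2), HasDerivAt F
      (Real.cos t • Complex.exp (Complex.I * n * ((π:ℂ) - 2 * (t:ℂ)))) t := by
    intro t _
    have hcoe : HasDerivAt (fun t : ℝ => (t:ℂ)) 1 t := (hasDerivAt_id t).ofReal_comp
    have hinner : HasDerivAt (fun t : ℝ => Complex.I * n * ((π:ℂ) - 2*(t:ℂ)))
        (Complex.I * n * (-2)) t := by
      have h1 : HasDerivAt (fun t : ℝ => (π:ℂ) - 2*(t:ℂ)) (-2) t := by
        simpa using (hcoe.const_mul (2:ℂ)).const_sub (π:ℂ)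
      simpa using h1.const_mul (Complex.I * n)
    have hE : HasDerivAt (fun t : ℝ => Complex.exp (Complex.I * n * ((π:ℂ) - 2*(t:ℂ))))
        (Complex.exp (Complex.I * n * ((π:ℂ) - 2*(t:ℂ))) * (Complex.I * n * (-2))) t :=
      hinner.cexp
    have hsin : HasDerivAt (fun t : ℝ => (Real.sin t : ℂ)) ((Real.cos t : ℂ)) t :=
      (Real.hasDerivAt_sin t).ofReal_comp
    have hcos : HasDerivAt (fun t : ℝ => (Real.cos t : ℂ)) (-(Real.sin t : ℂ)) t := by
      simpa using (Real.hasDerivAt_cos t).ofReal_comp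
    have hG : HasDerivAt (fun t : ℝ => (Real.sin t : ℂ) - 2*Complex.I*n*(Real.cos t : ℂ))
        ((Real.cos t : ℂ) - 2*Complex.I*n*(-(Real.sin t : ℂ))) t :=
      hsin.sub (hcos.const_mul (2*Complex.I*n))
    have := (hE.mul hG).div_const D
    refine HasDerivAt.congr_deriv this ?_
    rw [Complex.real_smul]
    field_simp
    ring_nf
    simp only [Complex.I_sq]
    linear_combination ((Real.cos t : ℂ)) * mul_inv_cancel₀ (show D ≠ 0 from hDne) - ((Real.cos t : ℂ) * D⁻¹) * hD
  have hcont : IntervalIntegrable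
      (fun t => Real.cos t • Complex.exp (Complex.I * n * ((π:ℂ) - 2 * (t:ℂ))))
      volume (-(π/2)) (π/2) := by
    apply Continuous.intervalIntegrable
    exact (Real.continuous_cos).smul (Complex.continuous_exp.comp
      (continuous_const.mul (continuous_const.sub
        (continuous_const.mul Complex.continuous_ofReal))))
  rw [intervalIntegral.integral_eq_sub_of_hasDerivAt hderiv hcont]
  have h2π : Complex.exp (Complex.I * n * ((π:ℂ) - 2*((-(π/2):ℝ):ℂ))) = 1 := by
    have harg : Complex.I * n * ((π:ℂ) - 2*((-(π/2):ℝ):ℂ)) = n * (2 * π * Complex.I) := by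
      push_cast; ring
    rw [harg, Complex.exp_int_mul_two_pi_mul_I]
  have h0 : Complex.exp (Complex.I * n * ((π:ℂ) - 2*(((π/2):ℝ):ℂ))) = 1 := by
    have harg : Complex.I * n * ((π:ℂ) - 2*(((π/2):ℝ):ℂ)) = 0 := by push_cast; ring
    rw [harg, Complex.exp_zero]
  rw [hF]
  simp only []
  rw [h2π, h0]
  simp only [Real.sin_pi_div_two, Real.cos_pi_div_two, Real.sin_neg, Real.cos_neg]
  push_cast
  field_simp
  ring


lemma coeff_Kop (f : S1 → ℂ) (hf : Integrable f μS) (n : ℤ) :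
    fourierCoeff (Kop f) n = (1 / (1 - 4*(n:ℂ)^2)) * fourierCoeff f n := by
  have hfh : Integrable f haarS := hf.mono_measure haar_le
  have hmf : AEStronglyMeasurable f haarS := hfh.aestronglyMeasurable
  have hcomp : AEStronglyMeasurable (fun p : S1 × ℝ => f (mS p)) (haarS.prod νI) :=
    hmf.comp_quasiMeasurePreserving (qmp haarS νI)
  have hint : Integrable (Function.uncurry fun (t : S1) (δ : ℝ) =>
      fourier (-n) t • f (t + cS δ)) (haarS.prod νI) := by
    constructor
    · exact ((map_continuous (fourier (-n))).comp continuous_fst).aestronglyMeasurable.smul hcomp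
    · rw [hasFiniteIntegral_def]
      simp only [enorm_eq_nnnorm]
      have hnorm : ∀ p : S1 × ℝ,
          (‖Function.uncurry (fun (t : S1) (δ : ℝ) => fourier (-n) t • f (t + cS δ)) p‖₊ : ℝ≥0∞)
            = (‖f (mS p)‖₊ : ℝ≥0∞) := by
        intro p
        simp only [Function.uncurry, smul_eq_mul, nnnorm_mul, ENNReal.coe_mul]
        rw [show (‖(fourier (-n) p.1 : ℂ)‖₊ : ℝ≥0∞) = 1 by
          have : ‖(fourier (-n) p.1 : ℂ)‖ = 1 := by
            rw [fourier_apply, Circle.norm_coe]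
          simp [← norm_toNNReal, this, Circle.norm_coe]]
        rw [one_mul]
      simp_rw [hnorm]
      rw [MeasureTheory.lintegral_prod_symm (fun p => (‖f (mS p)‖₊ : ℝ≥0∞)) hcomp.enorm]
      have hinner : ∀ δ : ℝ, (∫⁻ t, (‖f (t + cS δ)‖₊ : ℝ≥0∞) ∂haarS)
          = ∫⁻ t, (‖f t‖₊ : ℝ≥0∞) ∂haarS := by
        intro δ
        exact MeasureTheory.lintegral_add_right_eq_self (μ := haarS)
          (fun t => (‖f t‖₊ : ℝ≥0∞)) (cS δ)
      simp_rw [hinner]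
      rw [MeasureTheory.lintegral_const]
      have hfin : (∫⁻ t, (‖f t‖₊ : ℝ≥0∞) ∂haarS) < ⊤ := hfh.2
      have hν : νI Set.univ < ⊤ := by
        show (volume.restrict (Set.Ioc (-1:ℝ) 1)) Set.univ < ⊤
        rw [Measure.restrict_apply_univ, Real.volume_Ioc]
        exact ENNReal.ofReal_lt_top
      exact ENNReal.mul_lt_top hfin hν
  have step1 : fourierCoeff (Kop f) n
      = (1/2 : ℂ) * ∫ t, (∫ δ in Set.Ioc (-1:ℝ) 1, fourier (-n) t • f (t + cS δ)) ∂haarS := by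
    rw [fourierCoeff]
    rw [← MeasureTheory.integral_const_mul]
    apply integral_congr_ae
    filter_upwards with t
    calc (fourier (-n)) t • Kop f t
        = 1/2 * ((fourier (-n)) t * ∫ δ in Set.Ioc (-1:ℝ) 1, f (t + cS δ)) := by
          rw [Kop, smul_eq_mul, intervalIntegral.integral_of_le (by norm_num : (-1:ℝ) ≤ 1)]
          ring
      _ = 1/2 * ∫ δ in Set.Ioc (-1:ℝ) 1, (fourier (-n)) t • f (t + cS δ) := by
          rw [← MeasureTheory.integral_const_mul]
          simp only [smul_eq_mul]
  rw [step1, MeasureTheory.integral_integral_swap hint]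
  have step2 : ∀ δ : ℝ, (∫ t, fourier (-n) t • f (t + cS δ) ∂haarS)
      = Complex.exp (Complex.I * n * ((π - 2 * arcsin δ : ℝ))) * fourierCoeff f n := by
    intro δ
    exact coeff_translate f n (π - 2 * arcsin δ)
  simp_rw [step2]
  rw [MeasureTheory.integral_mul_const]
  rw [← intervalIntegral.integral_of_le (by norm_num : (-1:ℝ) ≤ 1)]
  rw [key_integral n]
  field_simp


lemma fourierCoeff_congr {f g : S1 → ℂ} (h : f =ᵐ[haarS] g) (n : ℤ) :
    fourierCoeff f n = fourierCoeff g n := by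
  rw [fourierCoeff, fourierCoeff]
  exact integral_congr_ae (h.mono fun t ht => by dsimp only; rw [ht])

lemma integral_fourier_zero {n : ℤ} (hn : n ≠ 0) :
    (∫ t, fourier n t ∂haarS) = 0 :=
  integral_eq_zero_of_add_right_eq_neg (μ := AddCircle.haarAddCircle)
    (fourier_add_half_inv_index hn (Fact.out))

lemma fourierCoeff_const (c : ℂ) (n : ℤ) :
    fourierCoeff (fun _ : S1 => c) n = if n = 0 then c else 0 := by
  rw [fourierCoeff, integral_smul_const]
  by_cases hn : n = 0
  · subst hn
    simp only [neg_zero, if_true]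
    have h1 : (fun t : S1 => (fourier 0 t : ℂ)) = fun _ => 1 := by
      ext t; exact fourier_zero
    rw [h1, integral_const]
    simp
  · rw [if_neg hn, integral_fourier_zero (neg_ne_zero.mpr hn), zero_smul]

lemma integrable_fourier_smul {f : S1 → ℂ} (hf : Integrable f haarS) (n : ℤ) :
    Integrable (fun t => fourier n t • f t) haarS := by
  simp only [smul_eq_mul]
  apply hf.bdd_mul (c := 1) ((map_continuous (fourier n)).aestronglyMeasurable)
  refine ae_of_all _ (fun t => ?_)
  rw [fourier_apply, Circle.norm_coe]

lemma eq_const_of_fixed (f : Lp ℂ 2 μS) (hf : ⇑f =ᵐ[μS] Kop ⇑f) :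
    ∃ c : ℂ, ⇑f =ᵐ[μS] fun _ => c := by
  have hmem : MemLp (⇑f) 2 μS := Lp.memLp f
  have hint : Integrable (⇑f) μS := hmem.integrable (by norm_num)
  have hinth : Integrable (⇑f) haarS := hint.mono_measure haar_le
  have hfix : ∀ n : ℤ, fourierCoeff (⇑f) n = (1/(1-4*(n:ℂ)^2)) * fourierCoeff (⇑f) n := by
    intro n
    conv_lhs => rw [fourierCoeff_congr (hf.filter_mono haar_ac.ae_le) n]
    exact coeff_Kop (⇑f) hint n
  have hzero : ∀ n : ℤ, n ≠ 0 → fourierCoeff (⇑f) n = 0 := by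
    intro n hn
    have h1 := hfix n
    have hD := D_ne_zero n
    have h4 : (4*(n:ℂ)^2) ≠ 0 :=
      mul_ne_zero (by norm_num) (pow_ne_zero 2 (Int.cast_ne_zero.mpr hn))
    have h5 : fourierCoeff (⇑f) n * (4*(n:ℂ)^2) = 0 := by
      field_simp at h1
      linear_combination -h1
    exact (mul_eq_zero.mp h5).resolve_right h4
  set c : ℂ := fourierCoeff (⇑f) 0 with hc
  have hgmem : MemLp (fun t => f t - c) 2 haarS :=
    (hmem.mono_measure haar_le).sub (memLp_const c)
  set G : Lp ℂ 2 haarS := hgmem.toLp _ with hG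
  have hGco : ⇑G =ᵐ[haarS] fun t => f t - c := hgmem.coeFn_toLp
  have hGcoeff : ∀ n : ℤ, fourierCoeff (⇑G) n = 0 := by
    intro n
    rw [fourierCoeff_congr hGco n]
    have hsub : fourierCoeff (fun t : S1 => f t - c) n
        = fourierCoeff (⇑f) n - fourierCoeff (fun _ : S1 => c) n := by
      rw [fourierCoeff, fourierCoeff, fourierCoeff, ← integral_sub
        (integrable_fourier_smul hinth (-n))
        (integrable_fourier_smul (integrable_const c) (-n))]
      apply integral_congr_ae
      filter_upwards with t
      simp only [smul_eq_mul]
      ring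
    rw [hsub, fourierCoeff_const]
    by_cases hn : n = 0
    · subst hn; simp [hc]
    · rw [if_neg hn, hzero n hn, sub_zero]
  have hG0 : G = 0 := by
    have hs := hasSum_fourier_series_L2 G
    simp_rw [hGcoeff, zero_smul] at hs
    exact hs.unique hasSum_zero
  refine ⟨c, ?_⟩
  have h0 : ⇑G =ᵐ[haarS] 0 := by rw [hG0]; exact Lp.coeFn_zero ℂ 2 haarS
  have h1 : (fun t : S1 => f t - c) =ᵐ[haarS] 0 := hGco.symm.trans h0
  have h2 : ⇑f =ᵐ[haarS] fun _ => c := by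
    filter_upwards [h1] with t ht
    have h3 : f t - c = 0 := ht
    exact sub_eq_zero.mp h3
  exact h2.filter_mono vol_ac.ae_le

lemma Kop_const (y : ℂ) : Kop (fun _ : S1 => y) = fun _ => y := by
  funext θ
  rw [Kop, intervalIntegral.integral_const]
  norm_num
  ring

end KerLAux

open KerLAux in
/-- the orthogonal complement in `L²(S¹)` of the kernel of the
collision operator `L = 2λ(K − I)` is exactly the closed subspace of mean-zero
functions. -/
theorem ker_L_orthogonal_eq_mean_zero
    (lam : ℝ) (hlam : 0 < lam)
    (T : Lp ℂ 2 (volume : Measure S1) →L[ℂ] Lp ℂ 2 (volume : Measure S1))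
    (hT : ∀ f : Lp ℂ 2 (volume : Measure S1), (T f : S1 → ℂ) =ᵐ[volume] Kop f) :
    ∀ h : Lp ℂ 2 (volume : Measure S1),
      h ∈ (LinearMap.ker
            ((((2 * lam : ℝ) : ℂ) •
              (T - ContinuousLinearMap.id ℂ (Lp ℂ 2 (volume : Measure S1)))).toLinearMap))ᗮ
        ↔ (∫ v, h v ∂(volume : Measure S1)) = 0 := by
  intro h
  have hlam2 : ((2 * lam : ℝ) : ℂ) ≠ 0 :=
    Complex.ofReal_ne_zero.mpr (by positivity)
  constructor
  · intro hperp
    have h1mem : MemLp (fun _ : S1 => (1:ℂ)) 2 (volume : Measure S1) := memLp_const 1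
    set c1 : Lp ℂ 2 (volume : Measure S1) := h1mem.toLp _ with hc1
    have hc1co : ⇑c1 =ᵐ[(volume : Measure S1)] fun _ => (1:ℂ) := h1mem.coeFn_toLp
    have hTc1 : T c1 = c1 := by
      apply Lp.ext
      calc ⇑(T c1) =ᵐ[(volume : Measure S1)] Kop ⇑c1 := hT c1
        _ =ᵐ[(volume : Measure S1)] Kop (fun _ => 1) := kop_congr hc1co
        _ = fun _ => (1:ℂ) := Kop_const 1
        _ =ᵐ[(volume : Measure S1)] ⇑c1 := hc1co.symm
    have hker : c1 ∈ LinearMap.ker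
        ((((2 * lam : ℝ) : ℂ) •
          (T - ContinuousLinearMap.id ℂ (Lp ℂ 2 (volume : Measure S1)))).toLinearMap) := by
      rw [LinearMap.mem_ker]
      simp only [ContinuousLinearMap.smul_apply, ContinuousLinearMap.sub_apply,
        ContinuousLinearMap.id_apply, hTc1, sub_self, smul_zero, ContinuousLinearMap.coe_coe]
    have hinner : (inner ℂ c1 h : ℂ) = 0 :=
      (Submodule.mem_orthogonal _ h).mp hperp c1 hker
    rw [MeasureTheory.L2.inner_def] at hinner
    rw [← hinner]
    apply integral_congr_ae
    filter_upwards [hc1co] with t ht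
    rw [RCLike.inner_apply, ht]
    simp
  · intro hzero
    rw [Submodule.mem_orthogonal]
    intro f hfker
    rw [LinearMap.mem_ker] at hfker
    simp only [ContinuousLinearMap.smul_apply, ContinuousLinearMap.sub_apply,
      ContinuousLinearMap.id_apply, ContinuousLinearMap.coe_coe] at hfker
    have hTf : T f = f := by
      rcases smul_eq_zero.mp hfker with hbad | hgood
      · exact absurd hbad hlam2
      · exact sub_eq_zero.mp hgood
    have hfix : ⇑f =ᵐ[(volume : Measure S1)] Kop ⇑f := by
      have h2 := hT f
      rw [hTf] at h2
      exact h2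
    obtain ⟨c, hc⟩ := eq_const_of_fixed f hfix
    rw [MeasureTheory.L2.inner_def]
    calc (∫ a, (inner ℂ (f a) (h a) : ℂ) ∂(volume : Measure S1))
        = ∫ a, (starRingEnd ℂ) c * h a ∂(volume : Measure S1) := by
          apply integral_congr_ae
          filter_upwards [hc] with t ht
          rw [RCLike.inner_apply', ht]
      _ = (starRingEnd ℂ) c * ∫ a, h a ∂(volume : Measure S1) :=
          MeasureTheory.integral_const_mul _ _
      _ = 0 := by rw [hzero, mul_zero]
end
end

section
/- The operator −L is coercive on the mean-zero subspace: for every f ∈ L²(S¹) with ∫_{S¹} f dv = 0, one has ⟨−L f, f⟩_{L²(S¹)} ≥ 2λ ‖f‖²_{L²(S¹)}. -/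
open MeasureTheory Real

noncomputable section

namespace BoltzAux

lemma one_sub_ne (n : ℤ) : (1 - 4 * (n:ℂ)^2) ≠ 0 := by
  have h2 : ((1 - 4*(n:ℝ)^2 : ℝ) : ℂ) = 1 - 4*(n:ℂ)^2 := by push_cast; ring
  rw [← h2, Ne, Complex.ofReal_eq_zero]
  rcases eq_or_ne n 0 with h | h
  · subst h; norm_num
  · have h0 : (1:ℤ) ≤ |n| := Int.one_le_abs (by simpa using h)
    have h1 : (1:ℝ) ≤ |(n:ℝ)| := by exact_mod_cast (by simpa using h0)
    nlinarith [abs_nonneg (n:ℝ), sq_abs (n:ℝ)]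

/-- The eigenvalue of `Kop` on the `n`-th Fourier mode, as a real number. -/
def mult (n : ℤ) : ℝ := (1 - 4 * (n:ℝ)^2)⁻¹

lemma mult_complex (n : ℤ) : ((mult n : ℝ) : ℂ) = (1 - 4 * (n:ℂ)^2)⁻¹ := by
  rw [mult]; push_cast; ring_nf

lemma mult_nonpos {n : ℤ} (hn : n ≠ 0) : mult n ≤ 0 := by
  have h0 : (1:ℤ) ≤ |n| := Int.one_le_abs (by simpa using hn)
  have h1 : (1:ℝ) ≤ |(n:ℝ)| := by exact_mod_cast (by simpa using h0)
  have h2 : (1 - 4*(n:ℝ)^2) < 0 := by nlinarith [sq_abs (n:ℝ)]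
  exact le_of_lt (inv_neg''.mpr h2)

lemma key_integral (n : ℤ) :
    ∫ δ in (-1:ℝ)..1, Complex.exp ((n:ℂ) * (π - 2 * arcsin δ) * Complex.I)
      = 2 * ((1 - 4 * (n:ℂ)^2)⁻¹) := by
  set g : ℝ → ℂ := fun δ => Complex.exp ((n:ℂ) * (π - 2 * arcsin δ) * Complex.I) with hg
  have hgc : Continuous g := by
    apply Complex.continuous_exp.comp
    exact ((continuous_const.mul ((continuous_const.sub
      (continuous_const.mul (Complex.continuous_ofReal.comp Real.continuous_arcsin))))).mul
      continuous_const)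
  have h1 : ∫ u in (-(π/2))..(π/2), Real.cos u • (g ∘ Real.sin) u = ∫ δ in (-1:ℝ)..1, g δ := by
    have := intervalIntegral.integral_comp_smul_deriv
      (f := Real.sin) (f' := Real.cos) (g := g) (a := -(π/2)) (b := π/2)
      (fun x _ => Real.hasDerivAt_sin x) (Real.continuous_cos.continuousOn) hgc
    simpa using this
  rw [← h1]
  have h2 : ∫ u in (-(π/2))..(π/2), Real.cos u • (g ∘ Real.sin) u
      = ∫ u in (-(π/2))..(π/2), Real.cos u • Complex.exp ((n:ℂ) * (π - 2*u) * Complex.I) := by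
    apply intervalIntegral.integral_congr
    intro u hu
    rw [Set.uIcc_of_le (by linarith [pi_pos] : -(π/2) ≤ π/2)] at hu
    simp only [Function.comp_apply, hg]
    rw [Real.arcsin_sin hu.1 hu.2]
  rw [h2]
  set a : ℂ := (1 - 4*(n:ℂ)^2)⁻¹ with ha
  set b : ℂ := -2*(n:ℂ)*Complex.I*a with hb
  set F : ℝ → ℂ :=
    fun u => Complex.exp ((n:ℂ) * (π - 2*u) * Complex.I) * (a * Real.sin u + b * Real.cos u)
    with hF
  have hA : (1 - 4*(n:ℂ)^2) * a = 1 := mul_inv_cancel₀ (one_sub_ne n)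
  have hderiv : ∀ u ∈ Set.uIcc (-(π/2)) (π/2),
      HasDerivAt F (Real.cos u • Complex.exp ((n:ℂ) * (π - 2*u) * Complex.I)) u := by
    intro u _
    have hE : HasDerivAt (fun u : ℝ => (n:ℂ) * (π - 2*u) * Complex.I)
        (-2*(n:ℂ)*Complex.I) u := by
      have h0 : HasDerivAt (fun u : ℝ => ((u:ℝ):ℂ)) 1 u := (hasDerivAt_id u).ofReal_comp
      have h3 := (((h0.const_mul (2:ℂ)).const_sub ((π:ℂ))).const_mul ((n:ℂ))).mul_const Complex.I
      exact h3.congr_deriv (by ring)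
    have hexp := hE.cexp
    have hsin : HasDerivAt (fun u : ℝ => ((Real.sin u : ℝ):ℂ)) ((Real.cos u : ℝ):ℂ) u :=
      (Real.hasDerivAt_sin u).ofReal_comp
    have hcos : HasDerivAt (fun u : ℝ => ((Real.cos u : ℝ):ℂ)) (-((Real.sin u : ℝ):ℂ)) u := by
      simpa using (Real.hasDerivAt_cos u).ofReal_comp
    have h4 := hexp.mul ((hsin.const_mul a).add (hcos.const_mul b))
    rw [hF]
    refine h4.congr_deriv ?_
    symm
    simp only [Pi.add_apply]
    rw [Complex.real_smul, hb]
    have hI : Complex.I ^ 2 = -1 := Complex.I_sq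
    set X := Complex.exp ((n:ℂ) * (π - 2*u) * Complex.I)
    set c := ((Real.cos u : ℝ):ℂ)
    set s := ((Real.sin u : ℝ):ℂ)
    linear_combination (-4*(n:ℂ)^2*a*X*c) * hI + (-(X*c)) * hA
  have hcont : IntervalIntegrable
      (fun u => Real.cos u • Complex.exp ((n:ℂ) * (π - 2*u) * Complex.I))
      volume (-(π/2)) (π/2) := by
    apply Continuous.intervalIntegrable
    apply Continuous.smul Real.continuous_cos
    apply Complex.continuous_exp.comp
    exact ((continuous_const.mul ((continuous_const.sub
      (continuous_const.mul Complex.continuous_ofReal)))).mul continuous_const)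
  rw [intervalIntegral.integral_eq_sub_of_hasDerivAt hderiv hcont]
  rw [hF]
  have e1 : ((n:ℂ) * (π - 2*(π/2:ℝ)) * Complex.I) = 0 := by push_cast; ring
  have e2 : ((n:ℂ) * (π - 2*(-(π/2):ℝ)) * Complex.I) = (n:ℂ) * (2*π*Complex.I) := by
    push_cast; ring
  simp only [e1, e2, Complex.exp_zero, Complex.exp_int_mul_two_pi_mul_I]
  rw [Real.sin_pi_div_two, Real.cos_pi_div_two]
  rw [show Real.sin (-(π/2)) = -1 by simp, show Real.cos (-(π/2)) = 0 by simp]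
  push_cast
  ring

lemma fourier_S1_add (n : ℤ) (θ : S1) (x : ℝ) :
    fourier n (θ + ((x:ℝ) : S1)) = fourier n θ * Complex.exp ((n:ℂ) * x * Complex.I) := by
  have h1 : fourier n (θ + ((x:ℝ):S1)) = fourier n θ * fourier n ((x:ℝ):S1) := by
    simp only [fourier_apply, smul_add, AddCircle.toCircle_add, Circle.coe_mul]
  rw [h1, fourier_coe_apply]
  congr 2
  have h : (π : ℂ) ≠ 0 := by exact_mod_cast Real.pi_ne_zero
  field_simp
  push_cast
  ring

lemma Kop_fourier (n : ℤ) :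
    Kop (⇑(fourier n) : S1 → ℂ) = fun θ => ((mult n : ℝ) : ℂ) * fourier n θ := by
  funext θ
  unfold Kop
  have h1 : (fun δ : ℝ => fourier n (θ + ((π - 2 * arcsin δ : ℝ) : S1)))
      = fun δ : ℝ => fourier n θ * Complex.exp ((n:ℂ) * (π - 2 * arcsin δ) * Complex.I) := by
    funext δ
    rw [fourier_S1_add]
    push_cast
    ring_nf
  rw [h1, intervalIntegral.integral_const_mul, key_integral, mult_complex]
  ring

lemma Kop_congr {g h : S1 → ℂ} (hgh : g =ᵐ[(volume : Measure S1)] h) :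
    Kop g =ᵐ[(volume : Measure S1)] Kop h := by
  set σ : ℝ → S1 := fun δ => ((π - 2 * arcsin δ : ℝ) : S1) with hσ
  have hσc : Continuous σ := by
    apply Continuous.comp (AddCircle.continuous_mk' (2*π))
    exact continuous_const.sub (continuous_const.mul Real.continuous_arcsin)
  set M := toMeasurable (volume : Measure S1) {x | g x ≠ h x} with hMdef
  have hM : MeasurableSet M := measurableSet_toMeasurable _ _
  have hMv : (volume : Measure S1) M = 0 := by
    rw [hMdef, measure_toMeasurable]; exact hgh
  set ν := ((volume : Measure ℝ).restrict (Set.Icc (-1:ℝ) 1)) with hν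
  set F : S1 × ℝ → ENNReal := fun p => M.indicator 1 (p.1 + σ p.2) with hF
  have hφ : Measurable (fun p : S1 × ℝ => p.1 + σ p.2) :=
    measurable_fst.add ((hσc.measurable).comp measurable_snd)
  have hFm : Measurable F := (measurable_one.indicator hM).comp hφ
  have inner_zero : ∀ δ : ℝ, (∫⁻ θ, F (θ, δ) ∂(volume : Measure S1)) = 0 := by
    intro δ
    have h0 : ∀ θ : S1, F (θ, δ) = ((fun θ : S1 => θ + σ δ) ⁻¹' M).indicator 1 θ := fun θ => rfl
    simp_rw [h0]
    rw [lintegral_indicator_one (hM.preimage (measurable_add_const (σ δ))),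
      measure_preimage_add_right]
    exact hMv
  have key : ∫⁻ θ, ∫⁻ δ, F (θ, δ) ∂ν ∂(volume : Measure S1) = 0 := by
    rw [← MeasureTheory.lintegral_prod _ hFm.aemeasurable,
      MeasureTheory.lintegral_prod_symm _ hFm.aemeasurable]
    simp_rw [inner_zero]
    simp
  have hJm : Measurable fun θ => ∫⁻ δ, F (θ, δ) ∂ν :=
    (Measurable.lintegral_prod_right (f := Function.curry F) (by exact hFm))
  have hae : ∀ᵐ θ ∂(volume : Measure S1), ∫⁻ δ, F (θ, δ) ∂ν = 0 :=
    (lintegral_eq_zero_iff hJm).mp key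
  filter_upwards [hae] with θ hθ
  unfold Kop
  congr 1
  apply intervalIntegral.integral_congr_ae
  have h5 : ∀ᵐ δ ∂ν, F (θ, δ) = 0 :=
    (lintegral_eq_zero_iff (hFm.comp measurable_prodMk_left)).mp hθ
  rw [hν, ae_restrict_iff' measurableSet_Icc] at h5
  filter_upwards [h5] with δ hδ hmem
  have hicc : δ ∈ Set.Icc (-1:ℝ) 1 := by
    rw [Set.uIoc_of_le (by norm_num : (-1:ℝ) ≤ 1)] at hmem
    exact Set.mem_Icc_of_Ioc hmem
  have h6 := hδ hicc
  have h7 : (θ + σ δ) ∉ M := by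
    intro hmemM
    simp only [hF] at h6
    rw [Set.indicator_of_mem hmemM] at h6
    exact one_ne_zero h6
  have h8 : (θ + σ δ) ∉ {x | g x ≠ h x} := fun hx => h7 (subset_toMeasurable _ _ hx)
  exact not_not.mp h8

/-- The Fourier monomials as elements of `L²(S¹, volume)`. -/
def efun (n : ℤ) : Lp ℂ 2 (volume : Measure S1) :=
  ContinuousMap.toLp (E := ℂ) 2 (volume : Measure S1) ℂ (fourier n)

lemma coeFn_efun (n : ℤ) : (efun n : S1 → ℂ) =ᵐ[(volume : Measure S1)] ⇑(fourier n) :=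
  ContinuousMap.coeFn_toLp (volume : Measure S1) (fourier n)

lemma inner_efun (n k : ℤ) :
    (inner ℂ (efun n) (efun k) : ℂ) = if n = k then ((2*π:ℝ):ℂ) else 0 := by
  rw [efun, efun, ContinuousMap.inner_toLp]
  simp_rw [← fourier_neg, ← fourier_add]
  split_ifs with h
  · subst h
    simp_rw [add_neg_cancel]
    have h1 : ⇑(fourier (T := 2*π) 0) = (fun _ => 1 : S1 → ℂ) := by
      funext x; exact fourier_zero
    rw [h1, MeasureTheory.integral_const, measureReal_def, AddCircle.measure_univ]
    rw [ENNReal.toReal_ofReal (by positivity : (0:ℝ) ≤ 2*π)]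
    simp [Complex.real_smul]
  · have hk : k + -n ≠ 0 := by
      intro hc
      exact h (by linarith [add_eq_zero_iff_eq_neg.mp hc] : n = k)
    exact integral_eq_zero_of_add_right_eq_neg (μ := (volume : Measure S1))
      (fourier_add_half_inv_index hk (by positivity : (0:ℝ) < 2*π))

lemma inner_efun_zero (f : Lp ℂ 2 (volume : Measure S1)) :
    (inner ℂ (efun 0) f : ℂ) = ∫ x, f x ∂(volume : Measure S1) := by
  rw [MeasureTheory.L2.inner_def]
  apply integral_congr_ae
  filter_upwards [coeFn_efun 0] with x hx
  rw [RCLike.inner_apply, hx]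
  simp [fourier_zero]

lemma span_efun_dense :
    (Submodule.span ℂ (Set.range efun)).topologicalClosure = ⊤ := by
  convert (ContinuousMap.toLp_denseRange ℂ (volume : Measure S1) ℂ
    (by norm_num : (2:ENNReal) ≠ ⊤)).topologicalClosure_map_submodule
    span_fourier_closure_eq_top
  · rfl
  erw [Submodule.map_span, Set.range_comp]
  simp only [ContinuousLinearMap.coe_coe]

section withT

variable (T : Lp ℂ 2 (volume : Measure S1) →L[ℂ] Lp ℂ 2 (volume : Measure S1))
  (hT : ∀ f : Lp ℂ 2 (volume : Measure S1), (T f : S1 → ℂ) =ᵐ[volume] Kop f)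

include hT

set_option maxHeartbeats 1000000 in
lemma T_efun (n : ℤ) : T (efun n) = ((mult n : ℝ) : ℂ) • efun n := by
  apply MeasureTheory.Lp.ext
  have h1 := hT (efun n)
  have h2 : Kop (efun n : S1 → ℂ) =ᵐ[(volume : Measure S1)] Kop ⇑(fourier n) :=
    Kop_congr (coeFn_efun n)
  have h3 : Kop (⇑(fourier n) : S1 → ℂ) = fun θ => ((mult n : ℝ):ℂ) * fourier n θ :=
    Kop_fourier n
  have h4 : ((((mult n : ℝ):ℂ) • efun n : Lp ℂ 2 (volume : Measure S1)) : S1 → ℂ)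
      =ᵐ[(volume : Measure S1)] fun θ => ((mult n : ℝ):ℂ) * fourier n θ := by
    filter_upwards [MeasureTheory.Lp.coeFn_smul (((mult n : ℝ):ℂ)) (efun n), coeFn_efun n]
      with x hx hx2
    simp only [hx, Pi.smul_apply, hx2, smul_eq_mul]
  have h3' : Kop (⇑(fourier n) : S1 → ℂ)
      =ᵐ[(volume : Measure S1)] fun θ => ((mult n : ℝ):ℂ) * fourier n θ :=
    Filter.EventuallyEq.of_eq h3
  exact (h1.trans (h2.trans h3')).trans h4.symm

set_option maxHeartbeats 1000000 in
lemma quad_nonpos (g : Lp ℂ 2 (volume : Measure S1))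
    (hg : g ∈ Submodule.span ℂ (Set.range efun))
    (hg0 : (inner ℂ (efun 0) g : ℂ) = 0) :
    (inner ℂ (T g) g : ℂ).re ≤ 0 := by
  obtain ⟨c, rfl⟩ := Finsupp.mem_span_range_iff_exists_finsupp.mp hg
  rw [Finsupp.sum] at hg0 ⊢
  -- compute c 0 = 0
  have hc0 : c 0 = 0 := by
    rw [inner_sum] at hg0
    simp_rw [inner_smul_right, inner_efun] at hg0
    rw [Finset.sum_congr rfl (fun n _ => by rw [mul_ite, mul_zero]),
      Finset.sum_ite_eq c.support 0 (fun n => c n * ((2*π:ℝ):ℂ))] at hg0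
    by_cases hmem : (0:ℤ) ∈ c.support
    · rw [if_pos hmem] at hg0
      rcases mul_eq_zero.mp hg0 with h | h
      · exact h
      · exfalso
        rw [Complex.ofReal_eq_zero] at h
        linarith [pi_pos]
    · exact Finsupp.notMem_support_iff.mp hmem
  -- expand the quadratic form
  have hTg : T (∑ n ∈ c.support, c n • efun n)
      = ∑ n ∈ c.support, c n • (((mult n : ℝ):ℂ) • efun n) := by
    rw [map_sum]
    exact Finset.sum_congr rfl fun n _ => by rw [ContinuousLinearMap.map_smul, T_efun T hT]
  rw [hTg, sum_inner]
  have hterm : ∀ n ∈ c.support,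
      (inner ℂ (c n • (((mult n : ℝ):ℂ) • efun n)) (∑ k ∈ c.support, c k • efun k) : ℂ)
        = ((mult n * (2*π) * Complex.normSq (c n) : ℝ) : ℂ) := by
    intro n hn
    rw [inner_smul_left, inner_smul_left, inner_sum]
    simp_rw [inner_smul_right, inner_efun]
    rw [Finset.sum_congr rfl (fun k _ => by rw [mul_ite, mul_zero]),
      Finset.sum_ite_eq c.support n (fun k => c k * ((2*π:ℝ):ℂ)), if_pos hn]
    rw [Complex.conj_ofReal]
    rw [show (starRingEnd ℂ) (c n) * (((mult n : ℝ):ℂ) * (c n * ((2*π:ℝ):ℂ)))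
        = ((mult n:ℝ):ℂ) * ((2*π:ℝ):ℂ) * (c n * (starRingEnd ℂ) (c n)) by ring]
    rw [Complex.mul_conj]
    push_cast
    ring
  rw [Finset.sum_congr rfl hterm, ← Complex.ofReal_sum, Complex.ofReal_re]
  apply Finset.sum_nonpos
  intro n hn
  rcases eq_or_ne n 0 with h | h
  · subst h
    rw [hc0]
    simp
  · exact mul_nonpos_of_nonpos_of_nonneg
      (mul_nonpos_of_nonpos_of_nonneg (mult_nonpos h) (by positivity))
      (Complex.normSq_nonneg _)

lemma re_inner_T_nonpos (f : Lp ℂ 2 (volume : Measure S1))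
    (hf : (∫ v, f v ∂(volume : Measure S1)) = 0) :
    (inner ℂ (T f) f : ℂ).re ≤ 0 := by
  have hmean : (inner ℂ (efun 0) f : ℂ) = 0 := by rw [inner_efun_zero]; exact hf
  set E := Submodule.span ℂ (Set.range efun) with hE
  set prj : Lp ℂ 2 (volume : Measure S1) → Lp ℂ 2 (volume : Measure S1) :=
    fun g => g - (((2*π:ℝ):ℂ))⁻¹ • ((inner ℂ (efun 0) g : ℂ) • efun 0) with hprj
  have hprj_cont : Continuous prj := by
    apply continuous_id.sub
    exact (((Continuous.inner (𝕜 := ℂ) (continuous_const (y := efun 0)) continuous_id).smul (continuous_const (y := efun 0))).const_smul (((2*π:ℝ):ℂ))⁻¹)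
  have hprj_fix : prj f = f := by
    simp [hprj, hmean]
  have h2pi : ((2*π:ℝ):ℂ) ≠ 0 := by
    rw [Ne, Complex.ofReal_eq_zero]
    positivity
  have hsub : ∀ g ∈ E, prj g ∈ {g | (inner ℂ (T g) g : ℂ).re ≤ 0} := by
    intro g hg
    have hmem : prj g ∈ E := by
      apply Submodule.sub_mem _ hg
      exact Submodule.smul_mem _ _ (Submodule.smul_mem _ _
        (Submodule.subset_span ⟨0, rfl⟩))
    have hzero : (inner ℂ (efun 0) (prj g) : ℂ) = 0 := by
      rw [hprj]
      simp only [inner_sub_right, inner_smul_right]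
      rw [show (inner ℂ (efun 0) (efun 0) : ℂ) = ((2*π:ℝ):ℂ) by rw [inner_efun]; simp]
      rw [show ((2*π:ℝ):ℂ)⁻¹ * ((inner ℂ (efun 0) g : ℂ) * ((2*π:ℝ):ℂ))
          = (inner ℂ (efun 0) g : ℂ) * (((2*π:ℝ):ℂ) * ((2*π:ℝ):ℂ)⁻¹) by ring,
        mul_inv_cancel₀ h2pi, mul_one, sub_self]
    exact quad_nonpos T hT (prj g) hmem hzero
  have hC : IsClosed {g : Lp ℂ 2 (volume : Measure S1) | (inner ℂ (T g) g : ℂ).re ≤ 0} := by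
    have hcont : Continuous fun g : Lp ℂ 2 (volume : Measure S1) => (inner ℂ (T g) g : ℂ).re :=
      Complex.continuous_re.comp (Continuous.inner T.continuous continuous_id)
    exact isClosed_le hcont continuous_const
  have hdense : Dense (E : Set (Lp ℂ 2 (volume : Measure S1))) :=
    Submodule.dense_iff_topologicalClosure_eq_top.mpr span_efun_dense
  have hfC : f ∈ {g : Lp ℂ 2 (volume : Measure S1) | (inner ℂ (T g) g : ℂ).re ≤ 0} := by
    rw [← hprj_fix]
    apply hC.closure_subset
    exact map_mem_closure hprj_cont (hdense f) hsub
  exact hfC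

end withT

end BoltzAux

open BoltzAux in
/-- `−L` is coercive on the mean-zero subspace: for every
`f ∈ L²(S¹)` with `∫ f dv = 0`, one has `⟨−L f, f⟩ ≥ 2λ ‖f‖²`. -/
theorem neg_L_coercive_on_mean_zero
    (lam : ℝ) (hlam : 0 < lam)
    (T : Lp ℂ 2 (volume : Measure S1) →L[ℂ] Lp ℂ 2 (volume : Measure S1))
    (hT : ∀ f : Lp ℂ 2 (volume : Measure S1), (T f : S1 → ℂ) =ᵐ[volume] Kop f) :
    ∀ f : Lp ℂ 2 (volume : Measure S1),
      (∫ v, f v ∂(volume : Measure S1)) = 0 →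
      2 * lam * ‖f‖ ^ 2 ≤
        (inner ℂ (-((((2 * lam : ℝ) : ℂ) •
          (T - ContinuousLinearMap.id ℂ (Lp ℂ 2 (volume : Measure S1)))) f)) f : ℂ).re := by
  intro f hf
  have hre := re_inner_T_nonpos T hT f hf
  have happ : (-((((2 * lam : ℝ) : ℂ) •
      (T - ContinuousLinearMap.id ℂ (Lp ℂ 2 (volume : Measure S1)))) f))
      = -(((2 * lam : ℝ) : ℂ) • (T f - f)) := by
    simp [ContinuousLinearMap.smul_apply, ContinuousLinearMap.sub_apply]
  rw [happ, inner_neg_left, inner_smul_left, inner_sub_left, Complex.conj_ofReal,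
    Complex.neg_re, Complex.re_ofReal_mul, Complex.sub_re]
  have hself : (inner ℂ f f : ℂ).re = ‖f‖ ^ 2 := by
    have := @inner_self_eq_norm_sq ℂ _ _ _ _ f
    simpa using this
  rw [hself]
  nlinarith [hre]
end
end

section
/- The operator K is smoothing from L² to L^∞: for every f ∈ L²(S¹), the function K f is (essentially) bounded and ‖K f‖_{L^∞(S¹)} ≤ (√π/4) ‖f‖_{L²(S¹)}. -/
open MeasureTheory Real

noncomputable section

lemma sin_image_Ioc : Real.sin '' Set.Ioc (-(π/2)) (π/2) = Set.Ioc (-1:ℝ) 1 := by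
  ext y
  constructor
  · rintro ⟨u, hu, rfl⟩
    refine ⟨?_, Real.sin_le_one u⟩
    have := Real.strictMonoOn_sin (a := -(π/2)) (b := u)
      ⟨le_refl _, by linarith [Real.pi_pos]⟩ ⟨hu.1.le, hu.2⟩ hu.1
    simpa using this
  · rintro ⟨h1, h2⟩
    exact ⟨Real.arcsin y, ⟨Real.neg_pi_div_two_lt_arcsin.2 h1, Real.arcsin_le_pi_div_two y⟩,
      Real.sin_arcsin h1.le h2⟩

lemma phi_image_Ioc : (fun u : ℝ => π - 2*u) '' Set.Ioc (-(π/2)) (π/2) = Set.Ico 0 (2*π) := by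
  ext w
  simp only [Set.mem_image, Set.mem_Ioc, Set.mem_Ico]
  constructor
  · rintro ⟨u, hu, rfl⟩
    exact ⟨by linarith [hu.2], by linarith [hu.1]⟩
  · rintro ⟨h1, h2⟩
    exact ⟨(π - w)/2, ⟨by linarith, by linarith⟩, by ring⟩

lemma Kop_eq (F : S1 → ℂ) (θ : S1) :
    Kop F θ = (1/2 : ℂ) * ∫ u in Set.Ioc (-(π/2)) (π/2),
      Real.cos u • F (θ + ((π - 2*u : ℝ) : S1)) := by
  unfold Kop
  rw [intervalIntegral.integral_of_le (by norm_num : (-1:ℝ) ≤ 1)]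
  rw [← sin_image_Ioc, integral_image_eq_integral_abs_deriv_smul measurableSet_Ioc
    (fun x _ => (Real.hasDerivAt_sin x).hasDerivWithinAt)
    (Real.injOn_sin.mono Set.Ioc_subset_Icc_self)]
  congr 1
  apply setIntegral_congr_fun measurableSet_Ioc
  intro u hu
  simp only
  rw [Real.arcsin_sin hu.1.le hu.2,
    abs_of_nonneg (Real.cos_nonneg_of_mem_Icc ⟨hu.1.le, hu.2⟩)]

section core
variable (f : Lp ℂ 2 (volume : Measure S1)) (θ : S1)

lemma memLp_shift : MemLp (fun w : ℝ => (f : S1 → ℂ) (θ + (w : S1))) 2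
    (volume.restrict (Set.Ioc 0 (2*π))) := by
  have h1 : MemLp (⇑f) 2 (volume : Measure S1) := Lp.memLp f
  have h2 : MemLp (fun x : S1 => (f : S1 → ℂ) (θ + x)) 2 (volume : Measure S1) :=
    h1.comp_measurePreserving (measurePreserving_add_left volume θ)
  have h3 := h2.comp_measurePreserving (AddCircle.measurePreserving_mk (2*π) 0)
  rw [zero_add] at h3
  exact h3

lemma hasDeriv_phi (u : ℝ) : HasDerivAt (fun u : ℝ => π - 2*u) (-2) u := by
  simpa using ((hasDerivAt_id u).const_mul (2:ℝ)).const_sub π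

lemma injOn_phi : Set.InjOn (fun u : ℝ => π - 2*u) (Set.Ioc (-(π/2)) (π/2)) := by
  intro a _ b _ h
  simp only at h
  linarith

lemma integrableOn_shift_Ico :
    IntegrableOn (fun w : ℝ => ‖(f : S1 → ℂ) (θ + (w : S1))‖^2) (Set.Ico 0 (2*π)) volume := by
  have h3 := memLp_shift f θ
  have h4 : IntegrableOn (fun w : ℝ => ‖(f : S1 → ℂ) (θ + (w : S1))‖^2)
      (Set.Ioc 0 (2*π)) volume := (memLp_two_iff_integrable_sq_norm h3.1).1 h3
  rw [integrableOn_Ico_iff_integrableOn_Ioo]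
  rw [integrableOn_Ioc_iff_integrableOn_Ioo] at h4
  exact h4

lemma integrableOn_G_sq :
    IntegrableOn (fun u : ℝ => ‖(f : S1 → ℂ) (θ + ((π - 2*u : ℝ) : S1))‖^2)
      (Set.Ioc (-(π/2)) (π/2)) volume := by
  have key := (integrableOn_image_iff_integrableOn_abs_deriv_smul
    (measurableSet_Ioc (a := -(π/2)) (b := π/2))
    (fun x _ => (hasDeriv_phi x).hasDerivWithinAt) injOn_phi
    (fun w : ℝ => ‖(f : S1 → ℂ) (θ + (w : S1))‖^2)).1
  rw [phi_image_Ioc] at key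
  have h5 := key (integrableOn_shift_Ico f θ)
  simp only [abs_neg, Nat.abs_ofNat, smul_eq_mul] at h5
  have h6 := h5.const_mul (2⁻¹ : ℝ)
  refine h6.congr ?_
  filter_upwards with u
  ring

lemma integral_G_sq :
    ∫ u in Set.Ioc (-(π/2)) (π/2), ‖(f : S1 → ℂ) (θ + ((π - 2*u : ℝ) : S1))‖^2
      = 2⁻¹ * ∫ x : S1, ‖(f : S1 → ℂ) x‖^2 := by
  have key := integral_image_eq_integral_abs_deriv_smul
    (measurableSet_Ioc (a := -(π/2)) (b := π/2))
    (fun x _ => (hasDeriv_phi x).hasDerivWithinAt) injOn_phi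
    (fun w : ℝ => ‖(f : S1 → ℂ) (θ + (w : S1))‖^2)
  rw [phi_image_Ioc] at key
  simp only [abs_neg, Nat.abs_ofNat, smul_eq_mul] at key
  rw [integral_Ico_eq_integral_Ioo, ← integral_Ioc_eq_integral_Ioo] at key
  have h7 : ∫ w in Set.Ioc 0 (2*π), ‖(f : S1 → ℂ) (θ + (w : S1))‖^2
      = ∫ x : S1, ‖(f : S1 → ℂ) (θ + x)‖^2 := by
    have := AddCircle.integral_preimage (2*π) 0 (fun x : S1 => ‖(f : S1 → ℂ) (θ + x)‖^2)
    rwa [zero_add] at this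
  have h8 : ∫ x : S1, ‖(f : S1 → ℂ) (θ + x)‖^2 = ∫ x : S1, ‖(f : S1 → ℂ) x‖^2 :=
    integral_add_left_eq_self (fun x : S1 => ‖(f : S1 → ℂ) x‖^2) θ
  rw [h7, h8] at key
  rw [MeasureTheory.integral_const_mul] at key
  linarith [key]

end core

lemma integral_norm_sq (f : Lp ℂ 2 (volume : Measure S1)) :
    ∫ x : S1, ‖(f : S1 → ℂ) x‖^2 = ‖f‖^2 := by
  have h1 : MemLp (⇑f) 2 (volume : Measure S1) := Lp.memLp f
  have h := h1.eLpNorm_eq_integral_rpow_norm (by norm_num) (by norm_num)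
  simp only [ENNReal.toReal_ofNat] at h
  have hnn : 0 ≤ ∫ a : S1, ‖(f : S1 → ℂ) a‖ ^ (2:ℝ) :=
    integral_nonneg fun a => Real.rpow_nonneg (norm_nonneg _) _
  have hne : ‖f‖ = (∫ a : S1, ‖(f : S1 → ℂ) a‖ ^ (2:ℝ)) ^ ((2:ℝ)⁻¹) := by
    rw [Lp.norm_def, h, ENNReal.toReal_ofReal (Real.rpow_nonneg hnn _)]
  have hpow : ∀ x : ℝ, x ^ (2:ℝ) = x ^ (2:ℕ) := fun x => by
    rw [← Real.rpow_natCast x 2]; norm_num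
  rw [hne, ← Real.rpow_natCast _ 2, ← Real.rpow_mul hnn]
  norm_num

lemma measurable_shiftmap (θ : S1) : Measurable (fun u : ℝ => θ + ((π - 2*u : ℝ) : S1)) := by
  apply Continuous.measurable
  exact continuous_const.add ((AddCircle.continuous_mk' (2*π)).comp (by continuity))

lemma integral_cos_sq_Ioc : ∫ u in Set.Ioc (-(π/2)) (π/2), Real.cos u ^ 2 = π/2 := by
  rw [← intervalIntegral.integral_of_le (by linarith [Real.pi_pos] : -(π/2) ≤ π/2)]
  rw [integral_cos_sq]
  simp

lemma Kop_pointwise_bound (f : Lp ℂ 2 (volume : Measure S1)) (θ : S1) :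
    ‖Kop (f : S1 → ℂ) θ‖ ≤ Real.sqrt π / 4 * ‖f‖ := by
  classical
  set s : Set ℝ := Set.Ioc (-(π/2)) (π/2) with hs
  set μ := (volume : Measure ℝ).restrict s with hμ
  set G : ℝ → ℂ := fun u => (f : S1 → ℂ) (θ + ((π - 2*u : ℝ) : S1)) with hG
  have hGsm : AEStronglyMeasurable G μ :=
    ((Lp.stronglyMeasurable f).comp_measurable (measurable_shiftmap θ)).aestronglyMeasurable
  have hGmem : MemLp G 2 μ := (memLp_two_iff_integrable_sq_norm hGsm).2 (integrableOn_G_sq f θ)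
  have hcmem : MemLp (fun u : ℝ => (Real.cos u : ℂ)) 2 μ :=
    MemLp.of_bound (Continuous.aestronglyMeasurable (by continuity)) 1
      (Filter.Eventually.of_forall fun u => by
        rw [Complex.norm_real, Real.norm_eq_abs]
        exact Real.abs_cos_le_one u)
  have hpq : Real.HolderConjugate 2 2 := Real.HolderConjugate.two_two
  have h2 : ENNReal.ofReal (2:ℝ) = 2 := by norm_num
  have holder := integral_mul_norm_le_Lp_mul_Lq (μ := μ) hpq
    (h2 ▸ hcmem) (h2 ▸ hGmem)
  -- rewrite Kop
  rw [Kop_eq]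
  rw [norm_mul]
  have : ‖(1/2 : ℂ)‖ = 2⁻¹ := by norm_num
  rw [this]
  have hb1 : ‖∫ u in s, Real.cos u • G u‖ ≤ ∫ u in s, ‖(Real.cos u : ℂ)‖ * ‖G u‖ := by
    refine (norm_integral_le_integral_norm _).trans (le_of_eq ?_)
    congr 1
    funext u
    rw [norm_smul, Real.norm_eq_abs, Complex.norm_real, Real.norm_eq_abs]
  have hpow : ∀ x : ℝ, x ^ (2:ℝ) = x ^ (2:ℕ) := fun x => by
    rw [← Real.rpow_natCast x 2]; norm_num
  have hcosval : ∫ u in s, ‖(Real.cos u : ℂ)‖ ^ (2:ℝ) ∂(volume) = π/2 := by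
    simp_rw [hpow, Complex.norm_real, Real.norm_eq_abs, sq_abs]
    exact integral_cos_sq_Ioc
  have hGval : ∫ u in s, ‖G u‖ ^ (2:ℝ) ∂(volume) = 2⁻¹ * ‖f‖^2 := by
    simp_rw [hpow]
    rw [hG]
    simp only
    rw [integral_G_sq f θ, integral_norm_sq f]
  rw [hcosval, hGval] at holder
  have hfinal : (π/2) ^ ((1:ℝ)/2) * (2⁻¹ * ‖f‖^2) ^ ((1:ℝ)/2) = Real.sqrt π / 2 * ‖f‖ := by
    rw [← Real.sqrt_eq_rpow, ← Real.sqrt_eq_rpow]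
    rw [← Real.sqrt_mul (by positivity)]
    have : π/2 * (2⁻¹ * ‖f‖^2) = (Real.sqrt π / 2 * ‖f‖)^2 := by
      rw [mul_pow, div_pow, Real.sq_sqrt Real.pi_pos.le]
      ring
    rw [this, Real.sqrt_sq (by positivity)]
  rw [hfinal] at holder
  calc 2⁻¹ * ‖∫ u in s, Real.cos u • G u‖ ≤ 2⁻¹ * (Real.sqrt π / 2 * ‖f‖) := by
        refine mul_le_mul_of_nonneg_left (hb1.trans holder) (by norm_num)
    _ = Real.sqrt π / 4 * ‖f‖ := by ring

lemma Kop_aesm (f : Lp ℂ 2 (volume : Measure S1)) :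
    AEStronglyMeasurable (Kop (f : S1 → ℂ)) (volume : Measure S1) := by
  have hKeq : Kop (f : S1 → ℂ) = fun θ => (1/2 : ℂ) *
      ∫ δ in Set.Ioc (-1:ℝ) 1, (f : S1 → ℂ) (θ + ((π - 2 * arcsin δ : ℝ) : S1)) := by
    funext θ
    unfold Kop
    rw [intervalIntegral.integral_of_le (by norm_num : (-1:ℝ) ≤ 1)]
  rw [hKeq]
  have hmeas : Measurable (fun p : S1 × ℝ => p.1 + ((π - 2 * arcsin p.2 : ℝ) : S1)) := by
    apply Continuous.measurable
    exact continuous_fst.add ((AddCircle.continuous_mk' (2*π)).comp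
      (by
        have : Continuous fun p : S1 × ℝ => π - 2 * arcsin p.2 :=
          continuous_const.sub (continuous_const.mul (Real.continuous_arcsin.comp continuous_snd))
        exact this))
  have hsm : StronglyMeasurable fun p : S1 × ℝ =>
      (f : S1 → ℂ) (p.1 + ((π - 2 * arcsin p.2 : ℝ) : S1)) :=
    (Lp.stronglyMeasurable f).comp_measurable hmeas
  exact ((hsm.integral_prod_right').const_mul _).aestronglyMeasurable


/-- `K` is smoothing from `L²` to `L^∞`: for every `f ∈ L²(S¹)`,
`K f` is essentially bounded and `‖K f‖_{L^∞} ≤ (√π/4) ‖f‖_{L²}`. -/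
theorem K_smoothing_L2_to_Linfty (f : Lp ℂ 2 (volume : Measure S1)) :
    MemLp (Kop f) ⊤ (volume : Measure S1) ∧
    eLpNorm (Kop f) ⊤ (volume : Measure S1)
      ≤ ENNReal.ofReal (Real.sqrt π / 4 * ‖f‖) := by
  refine ⟨memLp_top_of_bound (Kop_aesm f) _
    (Filter.Eventually.of_forall (Kop_pointwise_bound f)), ?_⟩
  rw [eLpNorm_exponent_top]
  exact eLpNormEssSup_le_of_ae_bound (Filter.Eventually.of_forall (Kop_pointwise_bound f))
end
end

section
/- There exists a constant C > 0 such that for every h ∈ L^∞(S¹) with ∫_{S¹} h(v) dv = 0, the unique mean-zero solution g ∈ L²(S¹) of L g = h belongs to L^∞(S¹) and satisfies ‖g‖_{L^∞(S¹)} ≤ C ‖h‖_{L^∞(S¹)}. -/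
open MeasureTheory Real

noncomputable section

namespace LinvAux

open intervalIntegral Complex Set

/-- The Fourier multiplier of the gain operator, as a real number. -/
def kR (n : ℤ) : ℝ := 1 / (1 - 4 * (n:ℝ)^2)

lemma kR_zero : kR 0 = 1 := by norm_num [kR]

lemma kR_nonpos {n : ℤ} (hn : n ≠ 0) : kR n ≤ 0 := by
  have h1 : (1:ℝ) ≤ (n:ℝ)^2 := by
    have : (1:ℤ) ≤ n^2 := by
      rcases lt_or_gt_of_ne hn with h | h <;> nlinarith
    exact_mod_cast this
  have : (1:ℝ) - 4*(n:ℝ)^2 ≤ -3 := by nlinarith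
  unfold kR
  apply div_nonpos_of_nonneg_of_nonpos <;> nlinarith

lemma abs_kR_le {n : ℤ} (hn : n ≠ 0) : |kR n| ≤ 1 / (n:ℝ)^2 := by
  have h1 : (1:ℝ) ≤ (n:ℝ)^2 := by
    have : (1:ℤ) ≤ n^2 := by
      rcases lt_or_gt_of_ne hn with h | h <;> nlinarith
    exact_mod_cast this
  have hd : (1:ℝ) - 4*(n:ℝ)^2 ≤ -3 := by nlinarith
  rw [abs_of_nonpos (kR_nonpos hn)]
  rw [kR]
  have he : -(1 / (1 - 4*(n:ℝ)^2)) = 1 / (4*(n:ℝ)^2 - 1) := by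
    rw [show (4*(n:ℝ)^2 - 1) = -(1 - 4*(n:ℝ)^2) by ring, div_neg]
  rw [he, div_le_div_iff₀ (by nlinarith) (by nlinarith)]
  nlinarith

lemma summable_abs_kR : Summable (fun n : ℤ => |kR n|) := by
  have h1 : Summable (fun n : ℤ => 1 / (n:ℝ)^2) := by
    have := (summable_one_div_int_pow (p := 2)).mpr (by norm_num)
    simpa using this
  have h2 : Summable (fun n : ℤ => if n = 0 then (1:ℝ) else 0) :=
    summable_of_ne_finset_zero (s := {0}) (by intro n hn; simp at hn; simp [hn])
  apply Summable.of_nonneg_of_le (fun n => abs_nonneg _) _ (h1.add h2)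
  intro n
  by_cases hn : n = 0
  · simp [hn, kR_zero]
  · have := abs_kR_le hn
    simp only [hn, if_false, add_zero]
    linarith

/-- The total `ℓ¹`-mass of the multiplier. -/
def Ksum : ℝ := ∑' n : ℤ, |kR n|

lemma Ksum_nonneg : 0 ≤ Ksum := tsum_nonneg (fun _ => abs_nonneg _)

lemma abs_kR_le_Ksum (n : ℤ) : |kR n| ≤ Ksum :=
  Summable.le_tsum summable_abs_kR n (fun _ _ => abs_nonneg _)

lemma kR_le_one_dist {n : ℤ} (hn : n ≠ 0) : (1:ℝ) ≤ |kR n - 1| := by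
  have := kR_nonpos hn
  rw [abs_of_nonpos (by linarith)]
  linarith

/-- The basic complex exponential integral. -/
lemma exp_integral (n : ℤ) :
    (∫ δ in (-1:ℝ)..1, Complex.exp ((n:ℂ) * Complex.I * ((π : ℂ) - 2 * (arcsin δ : ℝ))))
      = 2 / (1 - 4 * (n:ℂ)^2) := by
  have step1 :
      (∫ δ in (-1:ℝ)..1, Complex.exp ((n:ℂ) * Complex.I * ((π : ℂ) - 2 * (arcsin δ : ℝ))))
        = ∫ t in (-(π/2))..(π/2), Real.cos t •
            Complex.exp ((n:ℂ) * Complex.I * ((π : ℂ) - 2 * (arcsin (Real.sin t) : ℝ))) := by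
    have h := intervalIntegral.integral_comp_smul_deriv (a := -(π/2)) (b := π/2)
      (f := Real.sin) (f' := Real.cos)
      (g := fun δ : ℝ => Complex.exp ((n:ℂ) * Complex.I * ((π : ℂ) - 2 * (arcsin δ : ℝ))))
      (fun x _ => Real.hasDerivAt_sin x) (Real.continuous_cos.continuousOn)
      (Complex.continuous_exp.comp (by continuity))
    rw [Real.sin_neg, Real.sin_pi_div_two] at h
    rw [← h]
    rfl
  have step2 :
      (∫ t in (-(π/2))..(π/2), Real.cos t •
          Complex.exp ((n:ℂ) * Complex.I * ((π : ℂ) - 2 * (arcsin (Real.sin t) : ℝ))))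
        = ∫ t in (-(π/2))..(π/2), Real.cos t •
            Complex.exp ((n:ℂ) * Complex.I * ((π : ℂ) - 2 * (t : ℝ))) := by
    apply intervalIntegral.integral_congr
    intro t ht
    have hle : -(π/2) ≤ (π/2:ℝ) := by
      have := Real.pi_pos; linarith
    rw [Set.uIcc_of_le hle, Set.mem_Icc] at ht
    show Real.cos t • Complex.exp _ = Real.cos t • Complex.exp _
    rw [Real.arcsin_sin ht.1 ht.2]
  rw [step1, step2]
  -- now the explicit computation
  set w : ℂ := Complex.exp ((n:ℂ)*(π:ℂ)*Complex.I) with hwdef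
  have hw : w * w = 1 := by
    rw [hwdef, ← Complex.exp_add]
    convert Complex.exp_int_mul_two_pi_mul_I n using 2
    ring
  have hv : Complex.exp (-((n:ℂ)*(π:ℂ)*Complex.I)) = w := by
    rw [Complex.exp_neg, ← hwdef, inv_eq_of_mul_eq_one_right hw]
  have h1 : ((1:ℂ) - 2*(n:ℂ)) * Complex.I ≠ 0 := by
    apply mul_ne_zero _ Complex.I_ne_zero
    intro h
    have h' : ((1 - 2*n : ℤ) : ℂ) = 0 := by push_cast; linear_combination h
    rw [Int.cast_eq_zero] at h'
    omega
  have h2 : ((-1:ℂ) - 2*(n:ℂ)) * Complex.I ≠ 0 := by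
    apply mul_ne_zero _ Complex.I_ne_zero
    intro h
    have h' : ((-1 - 2*n : ℤ) : ℂ) = 0 := by push_cast; linear_combination h
    rw [Int.cast_eq_zero] at h'
    omega
  have hIpos : Complex.exp (((π/2:ℝ):ℂ) * Complex.I) = Complex.I := by
    rw [Complex.exp_mul_I, ← Complex.ofReal_cos, ← Complex.ofReal_sin,
      Real.cos_pi_div_two, Real.sin_pi_div_two]
    simp
  have hIneg : Complex.exp (((-(π/2):ℝ):ℂ) * Complex.I) = -Complex.I := by
    rw [Complex.exp_mul_I, ← Complex.ofReal_cos, ← Complex.ofReal_sin,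
      Real.cos_neg, Real.sin_neg, Real.cos_pi_div_two, Real.sin_pi_div_two]
    simp
  have key : ∀ t : ℝ, Real.cos t • Complex.exp ((n:ℂ) * Complex.I * ((π : ℂ) - 2 * (t : ℝ)))
      = (w/2) * Complex.exp ((((1:ℂ) - 2*(n:ℂ)) * Complex.I) * (t:ℂ))
        + (w/2) * Complex.exp ((((-1:ℂ) - 2*(n:ℂ)) * Complex.I) * (t:ℂ)) := by
    intro t
    rw [Complex.real_smul, Complex.ofReal_cos, Complex.cos, hwdef]
    rw [div_mul_eq_mul_div, add_mul, ← Complex.exp_add, ← Complex.exp_add,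
      div_mul_eq_mul_div, ← Complex.exp_add, div_mul_eq_mul_div, ← Complex.exp_add]
    rw [← add_div]
    congr 3 <;> ring
  simp only [key]
  have i1 : IntervalIntegrable
      (fun t : ℝ => (w/2) * Complex.exp ((((1:ℂ) - 2*(n:ℂ)) * Complex.I) * (t:ℂ)))
      volume (-(π/2)) (π/2) := by
    apply Continuous.intervalIntegrable; fun_prop
  have i2 : IntervalIntegrable
      (fun t : ℝ => (w/2) * Complex.exp ((((-1:ℂ) - 2*(n:ℂ)) * Complex.I) * (t:ℂ)))
      volume (-(π/2)) (π/2) := by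
    apply Continuous.intervalIntegrable; fun_prop
  rw [intervalIntegral.integral_add i1 i2, intervalIntegral.integral_const_mul,
    intervalIntegral.integral_const_mul, integral_exp_mul_complex h1,
    integral_exp_mul_complex h2]
  have eA : Complex.exp (((1:ℂ) - 2*(n:ℂ)) * Complex.I * ((π/2:ℝ):ℂ)) = Complex.I * w := by
    rw [show ((1:ℂ) - 2*(n:ℂ)) * Complex.I * ((π/2:ℝ):ℂ)
        = ((π/2:ℝ):ℂ) * Complex.I + -((n:ℂ)*(π:ℂ)*Complex.I) by push_cast; ring,
      Complex.exp_add, hIpos, hv]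
  have eB : Complex.exp (((1:ℂ) - 2*(n:ℂ)) * Complex.I * ((-(π/2):ℝ):ℂ)) = -(Complex.I * w) := by
    rw [show ((1:ℂ) - 2*(n:ℂ)) * Complex.I * ((-(π/2):ℝ):ℂ)
        = ((-(π/2):ℝ):ℂ) * Complex.I + ((n:ℂ)*(π:ℂ)*Complex.I) by push_cast; ring,
      Complex.exp_add, hIneg, ← hwdef]
    ring
  have eC : Complex.exp (((-1:ℂ) - 2*(n:ℂ)) * Complex.I * ((π/2:ℝ):ℂ)) = -(Complex.I * w) := by
    rw [show ((-1:ℂ) - 2*(n:ℂ)) * Complex.I * ((π/2:ℝ):ℂ)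
        = ((-(π/2):ℝ):ℂ) * Complex.I + -((n:ℂ)*(π:ℂ)*Complex.I) by push_cast; ring,
      Complex.exp_add, hIneg, hv]
    ring
  have eD : Complex.exp (((-1:ℂ) - 2*(n:ℂ)) * Complex.I * ((-(π/2):ℝ):ℂ)) = Complex.I * w := by
    rw [show ((-1:ℂ) - 2*(n:ℂ)) * Complex.I * ((-(π/2):ℝ):ℂ)
        = ((π/2:ℝ):ℂ) * Complex.I + ((n:ℂ)*(π:ℂ)*Complex.I) by push_cast; ring,
      Complex.exp_add, hIpos, ← hwdef]
  rw [eA, eB, eC, eD]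
  rw [show w/2 * ((Complex.I*w - -(Complex.I*w))/(((1:ℂ)-2*(n:ℂ))*Complex.I))
        + w/2 * ((-(Complex.I*w) - Complex.I*w)/(((-1:ℂ)-2*(n:ℂ))*Complex.I))
      = (w*w) * (Complex.I/(((1:ℂ)-2*(n:ℂ))*Complex.I)
          - Complex.I/(((-1:ℂ)-2*(n:ℂ))*Complex.I)) by ring, hw, one_mul]
  have hd : (1:ℂ) - 4*(n:ℂ)^2 ≠ 0 := by
    have hns := mul_ne_zero h1 h2
    intro h
    apply hns
    rw [show ((1:ℂ) - 2*(n:ℂ)) * Complex.I * (((-1:ℂ) - 2*(n:ℂ)) * Complex.I)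
      = ((1:ℂ) - 4*(n:ℂ)^2) * (-(Complex.I * Complex.I)) by ring, h, zero_mul]
  have ha : (1:ℂ) - 2*(n:ℂ) ≠ 0 := left_ne_zero_of_mul h1
  have hb : (-1:ℂ) - 2*(n:ℂ) ≠ 0 := left_ne_zero_of_mul h2
  field_simp
  ring_nf
  have hd' : (1:ℂ) - (n:ℂ)^2*4 ≠ 0 := by convert hd using 2; ring
  field_simp
  ring

/-- `fourier n` is an eigenfunction of the gain operator. -/
lemma Kop_fourier (n : ℤ) (θ : S1) :
    Kop (⇑(fourier n)) θ = ((kR n : ℝ) : ℂ) * fourier n θ := by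
  have fadd : ∀ (y : S1) (x : ℝ), fourier n (y + (x : S1)) = fourier n y * fourier n ((x : ℝ) : S1) := by
    intro y x
    simp only [fourier_apply, smul_add, AddCircle.toCircle_add]
    push_cast
    ring
  have fcoe : ∀ x : ℝ, (fourier n ((x:ℝ) : S1) : ℂ)
      = Complex.exp ((n:ℂ) * Complex.I * (x:ℂ)) := by
    intro x
    rw [fourier_coe_apply]
    congr 1
    have h2pi : ((2:ℂ) * (π:ℂ)) ≠ 0 := by
      simp [Real.pi_ne_zero]
    push_cast
    field_simp
  unfold Kop
  have hint : ∀ δ : ℝ, fourier n (θ + ((π - 2 * arcsin δ : ℝ) : S1))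
      = fourier n θ * Complex.exp ((n:ℂ) * Complex.I * ((π : ℂ) - 2 * (arcsin δ : ℝ))) := by
    intro δ
    rw [fadd θ (π - 2 * arcsin δ), fcoe]
    push_cast
    ring_nf
  simp only [hint]
  rw [intervalIntegral.integral_const_mul, exp_integral]
  have : (((kR n : ℝ)) : ℂ) = 1 / (1 - 4 * (n:ℂ)^2) := by
    unfold kR
    have hd : ((1:ℝ) - 4*(n:ℝ)^2) ≠ 0 := by
      intro hc
      have : ((4*n^2 - 1 : ℤ) : ℝ) = 0 := by push_cast; linarith
      rw [Int.cast_eq_zero] at this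
      omega
    push_cast [hd]
    ring
  rw [this]
  ring

/-- The gain operator only depends on the a.e.-class of its argument. -/
lemma Kop_congr {f g : S1 → ℂ} (hfg : f =ᵐ[(volume : Measure S1)] g) :
    Kop f =ᵐ[(volume : Measure S1)] Kop g := by
  classical
  have hnull : (volume : Measure S1) {x | f x ≠ g x} = 0 := hfg
  obtain ⟨t, htsub, htm, ht0⟩ := exists_measurable_superset_of_null hnull
  set u : ℝ → S1 := fun δ => ((π - 2 * arcsin δ : ℝ) : S1) with hu_def
  have hu : Continuous u := by
    apply (AddCircle.continuous_mk' (2*π)).comp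
    have := Real.continuous_arcsin
    fun_prop
  -- the double integral of the indicator of `t` vanishes
  have hFmeas : Measurable (Function.uncurry fun (θ : S1) (δ : ℝ) =>
      t.indicator (fun _ => (1:ENNReal)) (θ + u δ)) := by
    apply (measurable_one.indicator htm).comp
    exact measurable_fst.add ((hu.measurable).comp measurable_snd)
  have swap : (∫⁻ θ, (∫⁻ δ in Set.Ioc (-1:ℝ) 1,
      t.indicator (fun _ => (1:ENNReal)) (θ + u δ)) ∂(volume : Measure S1)) = 0 := by
    rw [MeasureTheory.lintegral_lintegral_swap hFmeas.aemeasurable]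
    have inner0 : ∀ δ : ℝ, (∫⁻ θ, t.indicator (fun _ => (1:ENNReal)) (θ + u δ)
        ∂(volume : Measure S1)) = 0 := by
      intro δ
      have : (fun θ : S1 => t.indicator (fun _ => (1:ENNReal)) (θ + u δ))
          = ((fun θ : S1 => θ + u δ) ⁻¹' t).indicator (fun _ => (1:ENNReal)) := by
        funext θ
        simp [Set.indicator_apply, Set.mem_preimage]
      rw [this, MeasureTheory.lintegral_indicator (htm.preimage (measurable_add_const _)),
        MeasureTheory.setLIntegral_const]
      rw [measure_preimage_add_right]
      rw [ht0]
      simp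
    simp only [inner0]
    simp
  have hFm : Measurable (fun θ : S1 => ∫⁻ δ in Set.Ioc (-1:ℝ) 1,
      t.indicator (fun _ => (1:ENNReal)) (θ + u δ)) :=
    Measurable.lintegral_prod_right hFmeas
  have hae : ∀ᵐ θ ∂(volume : Measure S1), (∫⁻ δ in Set.Ioc (-1:ℝ) 1,
      t.indicator (fun _ => (1:ENNReal)) (θ + u δ)) = 0 :=
    (MeasureTheory.lintegral_eq_zero_iff hFm).mp swap
  filter_upwards [hae] with θ hθ
  unfold Kop
  congr 1
  apply intervalIntegral.integral_congr_ae
  have hmeasθ : Measurable (fun δ : ℝ => t.indicator (fun _ => (1:ENNReal)) (θ + u δ)) :=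
    (measurable_one.indicator htm).comp ((measurable_const.add (hu.measurable)))
  have h0 : ∀ᵐ δ ∂(volume.restrict (Set.Ioc (-1:ℝ) 1)),
      t.indicator (fun _ => (1:ENNReal)) (θ + u δ) = 0 :=
    (MeasureTheory.lintegral_eq_zero_iff hmeasθ).mp hθ
  have h0' := (MeasureTheory.ae_restrict_iff' measurableSet_Ioc).mp h0
  filter_upwards [h0'] with δ hδ hmem
  have hmem' : δ ∈ Set.Ioc (-1:ℝ) 1 := by
    rwa [Set.uIoc_of_le (by norm_num : (-1:ℝ) ≤ 1)] at hmem
  have hind := hδ hmem'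
  have hnotin : θ + u δ ∉ t := by
    intro hin
    rw [Set.indicator_of_mem hin] at hind
    simp at hind
  have : θ + u δ ∉ {x | f x ≠ g x} := fun hx => hnotin (htsub hx)
  simp only [Set.mem_setOf_eq, not_not] at this
  exact this

/-- `fourier n` as an element of `L²(S¹)` with the arclength measure. -/
def en (n : ℤ) : Lp ℂ 2 (volume : Measure S1) :=
  ContinuousMap.toLp (E := ℂ) 2 (volume : Measure S1) ℂ (fourier n)

lemma inner_en (i j : ℤ) :
    inner (𝕜 := ℂ) (en i) (en j) = if i = j then ((2*π:ℝ):ℂ) else 0 := by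
  unfold en
  rw [ContinuousMap.inner_toLp (volume : Measure S1) (fourier i) (fourier j)]
  have horth := orthonormal_fourier (T := 2*π)
  rw [orthonormal_iff_ite] at horth
  have hij := horth i j
  rw [ContinuousMap.inner_toLp (AddCircle.haarAddCircle) (fourier i) (fourier j)] at hij
  rw [AddCircle.volume_eq_smul_haarAddCircle, MeasureTheory.integral_smul_measure, hij,
    ENNReal.toReal_ofReal (by positivity : (0:ℝ) ≤ 2*π)]
  split_ifs <;> simp [Complex.real_smul]

/-- The normalized exponentials. -/
def vb (n : ℤ) : Lp ℂ 2 (volume : Measure S1) :=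
  (((Real.sqrt (2*π))⁻¹ : ℝ) : ℂ) • en n

lemma sqrt_two_pi_pos : (0:ℝ) < Real.sqrt (2*π) := Real.sqrt_pos.mpr (by positivity)

lemma orthonormal_vb : Orthonormal ℂ vb := by
  rw [orthonormal_iff_ite]
  intro i j
  unfold vb
  rw [inner_smul_left, inner_smul_right, inner_en, Complex.conj_ofReal]
  split_ifs with hij
  · have hr : ((Real.sqrt (2*π))⁻¹ : ℝ) * (((Real.sqrt (2*π))⁻¹ : ℝ) * (2*π)) = 1 := by
      have h2 : Real.sqrt (2*π) * Real.sqrt (2*π) = 2*π :=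
        Real.mul_self_sqrt (by positivity)
      rw [← mul_assoc, ← mul_inv, h2, inv_mul_cancel₀ (by positivity : (2*π:ℝ) ≠ 0)]
    calc (((Real.sqrt (2*π))⁻¹ : ℝ) : ℂ) * ((((Real.sqrt (2*π))⁻¹ : ℝ):ℂ) * ((2*π:ℝ):ℂ))
        = ((((Real.sqrt (2*π))⁻¹ : ℝ) * (((Real.sqrt (2*π))⁻¹ : ℝ) * (2*π)) : ℝ) : ℂ) := by
          push_cast; ring
      _ = 1 := by rw [hr]; norm_num
  · simp

lemma span_en_dense :
    (Submodule.span ℂ (Set.range en)).topologicalClosure = ⊤ := by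
  have h := (ContinuousMap.toLp_denseRange ℂ (volume : Measure S1) ℂ
      (by norm_num : (2:ENNReal) ≠ ⊤)).topologicalClosure_map_submodule
      (span_fourier_closure_eq_top (T := 2*π))
  convert h using 2
  · rfl
  erw [Submodule.map_span, ← Set.range_comp]
  rfl

lemma span_vb_eq :
    Submodule.span ℂ (Set.range vb) = Submodule.span ℂ (Set.range en) := by
  have hne : ((((Real.sqrt (2*π))⁻¹ : ℝ)) : ℂ) ≠ 0 := by
    have := sqrt_two_pi_pos
    simp only [ne_eq, Complex.ofReal_eq_zero, inv_eq_zero]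
    positivity
  apply le_antisymm <;> rw [Submodule.span_le]
  · rintro _ ⟨m, rfl⟩
    exact Submodule.smul_mem _ _ (Submodule.subset_span ⟨m, rfl⟩)
  · rintro _ ⟨m, rfl⟩
    have hrw : en m = ((((Real.sqrt (2*π))⁻¹ : ℝ)) : ℂ)⁻¹ • vb m := by
      unfold vb
      rw [smul_smul, inv_mul_cancel₀ hne, one_smul]
    rw [hrw]
    exact Submodule.smul_mem _ _ (Submodule.subset_span ⟨m, rfl⟩)

/-- The Hilbert basis of normalized exponentials for `L²(S¹, volume)`. -/
def Bas : HilbertBasis ℤ ℂ (Lp ℂ 2 (volume : Measure S1)) :=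
  HilbertBasis.mk orthonormal_vb (by rw [span_vb_eq]; exact span_en_dense.ge)

lemma Bas_apply (n : ℤ) : (Bas n : Lp ℂ 2 (volume : Measure S1)) = vb n := by
  have : ⇑Bas = vb := HilbertBasis.coe_mk _ _
  rw [this]

/-- Coefficient extraction from a `HasSum` expansion in a Hilbert basis. -/
lemma coeff_of_hasSum {E' : Type*} [NormedAddCommGroup E'] [InnerProductSpace ℂ E']
    [CompleteSpace E'] (B : HilbertBasis ℤ ℂ E') {a : ℤ → ℂ} {s : E'}
    (hsum : HasSum (fun m => a m • (B m : E')) s) (n : ℤ) : B.repr s n = a n := by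
  rw [HilbertBasis.repr_apply_apply]
  have h2 := hsum.mapL (innerSL ℂ (B n))
  have horth := B.orthonormal
  rw [orthonormal_iff_ite] at horth
  have heq : (fun m => (innerSL ℂ (B n)) (a m • (B m : E'))) = fun m =>
      if m = n then a n else 0 := by
    funext m
    simp only [innerSL_apply_apply, inner_smul_right, horth n m]
    by_cases hmn : m = n
    · subst hmn; simp
    · simp [hmn, Ne.symm hmn]
  rw [heq] at h2
  exact h2.unique (hasSum_ite_eq n (a n))

lemma repr_g0 (g : Lp ℂ 2 (volume : Measure S1))
    (hg : (∫ v, g v ∂(volume : Measure S1)) = 0) : Bas.repr g 0 = 0 := by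
  rw [HilbertBasis.repr_apply_apply, Bas_apply]
  unfold vb
  rw [inner_smul_left]
  have hz : inner (𝕜 := ℂ) (en 0) g = 0 := by
    rw [MeasureTheory.L2.inner_def]
    have h0 : (↑(en 0) : S1 → ℂ) =ᵐ[(volume : Measure S1)] (fun _ => (1:ℂ)) := by
      have hc := ContinuousMap.coeFn_toLp (p := 2) (𝕜 := ℂ) (volume : Measure S1)
        (fourier (T := 2*π) 0)
      filter_upwards [hc] with x hx
      show (↑(en 0) : S1 → ℂ) x = 1
      unfold en
      rw [hx]
      exact fourier_zero
    have : ∫ x, inner (𝕜 := ℂ) ((en 0 : S1 → ℂ) x) ((g : S1 → ℂ) x) ∂(volume : Measure S1)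
        = ∫ x, (g : S1 → ℂ) x ∂(volume : Measure S1) := by
      apply MeasureTheory.integral_congr_ae
      filter_upwards [h0] with x hx
      rw [RCLike.inner_apply, hx]
      simp
    rw [this, hg]
  rw [hz, mul_zero]

lemma T_vb (T : Lp ℂ 2 (volume : Measure S1) →L[ℂ] Lp ℂ 2 (volume : Measure S1))
    (hT : ∀ f : Lp ℂ 2 (volume : Measure S1), (T f : S1 → ℂ) =ᵐ[volume] Kop f) (n : ℤ) :
    T (vb n) = ((kR n : ℝ) : ℂ) • vb n := by
  have hen : T (en n) = ((kR n : ℝ):ℂ) • en n := by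
    apply MeasureTheory.Lp.ext
    have h1 := hT (en n)
    have h2 : (↑(en n) : S1 → ℂ) =ᵐ[(volume : Measure S1)] ⇑(fourier n) :=
      ContinuousMap.coeFn_toLp _ _
    have h3 : Kop (↑(en n)) =ᵐ[(volume : Measure S1)] Kop (⇑(fourier n)) := Kop_congr h2
    have h4 : Kop (⇑(fourier n)) = fun θ => ((kR n : ℝ):ℂ) * fourier n θ :=
      funext (Kop_fourier n)
    have h5 : (↑(((kR n : ℝ):ℂ) • en n) : S1 → ℂ) =ᵐ[(volume : Measure S1)]
        fun θ => ((kR n:ℝ):ℂ) * fourier n θ := by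
      filter_upwards [MeasureTheory.Lp.coeFn_smul (((kR n : ℝ):ℂ)) (en n), h2] with x hx1 hx2
      rw [hx1]
      simp [hx2]
    refine (h1.trans (h3.trans ?_)).trans h5.symm
    rw [h4]
  unfold vb
  rw [_root_.map_smul, hen, smul_comm]

end LinvAux

set_option maxHeartbeats 1000000 in
/-- there is a constant `C > 0` such that for every essentially
bounded mean-zero `h ∈ L^∞(S¹)`, the unique mean-zero solution `g ∈ L²(S¹)` of
`L g = h` (where `L = 2λ(K − I)`) is essentially bounded with
`‖g‖_{L^∞} ≤ C ‖h‖_{L^∞}`. -/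
theorem Linv_bounded_Linfty
    (lam : ℝ) (hlam : 0 < lam)
    (T : Lp ℂ 2 (volume : Measure S1) →L[ℂ] Lp ℂ 2 (volume : Measure S1))
    (hT : ∀ f : Lp ℂ 2 (volume : Measure S1), (T f : S1 → ℂ) =ᵐ[volume] Kop f) :
    ∃ C : ℝ, 0 < C ∧
      ∀ h g : Lp ℂ 2 (volume : Measure S1),
        MemLp (h : S1 → ℂ) ⊤ (volume : Measure S1) →
        (∫ v, h v ∂(volume : Measure S1)) = 0 →
        (∫ v, g v ∂(volume : Measure S1)) = 0 →
        (((2 * lam : ℝ) : ℂ) •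
          (T - ContinuousLinearMap.id ℂ (Lp ℂ 2 (volume : Measure S1)))) g = h →
        MemLp (g : S1 → ℂ) ⊤ (volume : Measure S1) ∧
        eLpNorm (g : S1 → ℂ) ⊤ (volume : Measure S1)
          ≤ ENNReal.ofReal C * eLpNorm (h : S1 → ℂ) ⊤ (volume : Measure S1) := by
  classical
  have hsq : (0:ℝ) < Real.sqrt (2*π) := LinvAux.sqrt_two_pi_pos
  have hKnn : (0:ℝ) ≤ LinvAux.Ksum := LinvAux.Ksum_nonneg
  refine ⟨(Real.sqrt (2*π))⁻¹ * LinvAux.Ksum * Real.sqrt (2*π) / (2*lam) + 1/(2*lam) + 1,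
    by positivity, ?_⟩
  intro h g hmemh hh0 hg0 heq
  set kk : ℤ → ℂ := fun m => ((LinvAux.kR m : ℝ) : ℂ) with hkk
  set c : ℤ → ℂ := fun n => LinvAux.Bas.repr g n with hcdef
  have hc0 : c 0 = 0 := LinvAux.repr_g0 g hg0
  have hgsum : HasSum (fun m => c m • (LinvAux.Bas m : Lp ℂ 2 (volume : Measure S1))) g :=
    LinvAux.Bas.hasSum_repr g
  have hTg : HasSum
      (fun m => (c m * kk m) • (LinvAux.Bas m : Lp ℂ 2 (volume : Measure S1))) (T g) := by
    have h' := hgsum.mapL T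
    have hfe : (fun m => T (c m • (LinvAux.Bas m : Lp ℂ 2 (volume : Measure S1))))
        = fun m => (c m * kk m) • (LinvAux.Bas m : Lp ℂ 2 (volume : Measure S1)) := by
      funext m
      rw [_root_.map_smul, LinvAux.Bas_apply, LinvAux.T_vb T hT m, smul_smul,
        ← LinvAux.Bas_apply]
    rwa [hfe] at h'
  have hreprTg : ∀ n, LinvAux.Bas.repr (T g) n = c n * kk n :=
    fun n => LinvAux.coeff_of_hasSum LinvAux.Bas hTg n
  have hTgsub : h = ((2*lam:ℝ):ℂ) • (T g - g) := by
    rw [← heq]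
    simp
  have hreprh : ∀ n, LinvAux.Bas.repr h n = ((2*lam:ℝ):ℂ) * (c n * kk n - c n) := by
    intro n
    rw [hTgsub, _root_.map_smul, map_sub]
    have hco : (((2*lam:ℝ):ℂ) • (LinvAux.Bas.repr (T g) - LinvAux.Bas.repr g)) n
        = ((2*lam:ℝ):ℂ) * ((LinvAux.Bas.repr (T g)) n - (LinvAux.Bas.repr g) n) := by
      rw [lp.coeFn_smul, Pi.smul_apply, lp.coeFn_sub, Pi.sub_apply, smul_eq_mul]
    rw [hco, hreprTg n]
  have hlamC : ‖((2*lam:ℝ):ℂ)‖ = 2*lam := by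
    rw [Complex.norm_real, Real.norm_eq_abs]
    exact abs_of_pos (by linarith)
  -- the L² bound
  have hcomp : ∀ n, ‖(LinvAux.Bas.repr (((2*lam:ℝ):ℂ) • g)) n‖
      ≤ ‖(LinvAux.Bas.repr h) n‖ := by
    intro n
    have hx : (LinvAux.Bas.repr (((2*lam:ℝ):ℂ) • g)) n = ((2*lam:ℝ):ℂ) * c n := by
      rw [_root_.map_smul]
      simp [lp.coeFn_smul, Pi.smul_apply, smul_eq_mul, hcdef]
    rw [hx, hreprh n]
    by_cases hn : n = 0
    · subst hn; rw [hc0]; simp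
    · rw [show c n * kk n - c n = c n * (kk n - 1) by ring]
      rw [norm_mul, norm_mul, norm_mul]
      have h1 : (1:ℝ) ≤ ‖kk n - 1‖ := by
        have hshape : kk n - 1 = (((LinvAux.kR n - 1 : ℝ)) : ℂ) := by
          rw [hkk]; push_cast; ring
        rw [hshape, Complex.norm_real, Real.norm_eq_abs]
        exact LinvAux.kR_le_one_dist hn
      calc ‖((2*lam:ℝ):ℂ)‖ * ‖c n‖ = ‖((2*lam:ℝ):ℂ)‖ * (‖c n‖ * 1) := by ring
        _ ≤ ‖((2*lam:ℝ):ℂ)‖ * (‖c n‖ * ‖kk n - 1‖) := by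
            apply mul_le_mul_of_nonneg_left _ (norm_nonneg _)
            exact mul_le_mul_of_nonneg_left h1 (norm_nonneg _)
  have hxy : ‖LinvAux.Bas.repr (((2*lam:ℝ):ℂ) • g)‖ ≤ ‖LinvAux.Bas.repr h‖ := by
    have h2 : (0:ℝ) < (2:ENNReal).toReal := by norm_num
    have hxx := lp.norm_rpow_eq_tsum h2 (LinvAux.Bas.repr (((2*lam:ℝ):ℂ) • g))
    have hyy := lp.norm_rpow_eq_tsum h2 (LinvAux.Bas.repr h)
    have hts : (∑' n, ‖(LinvAux.Bas.repr (((2*lam:ℝ):ℂ) • g)) n‖ ^ (2:ENNReal).toReal)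
        ≤ ∑' n, ‖(LinvAux.Bas.repr h) n‖ ^ (2:ENNReal).toReal := by
      apply Summable.tsum_le_tsum _
        (Memℓp.summable h2 (lp.memℓp (LinvAux.Bas.repr (((2*lam:ℝ):ℂ) • g))))
        (Memℓp.summable h2 (lp.memℓp (LinvAux.Bas.repr h)))
      intro n
      exact Real.rpow_le_rpow (norm_nonneg _) (hcomp n) (by norm_num)
    rw [← hxx, ← hyy] at hts
    have h22 : (2:ENNReal).toReal = (2:ℝ) := by norm_num
    rw [h22] at hts
    have hpow : ∀ z : ℝ, z ^ (2:ℝ) = z ^ (2:ℕ) := fun z => by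
      rw [show (2:ℝ) = ((2:ℕ):ℝ) by norm_num, Real.rpow_natCast]
    rw [hpow, hpow] at hts
    have hs1 := Real.sqrt_le_sqrt hts
    rwa [Real.sqrt_sq (norm_nonneg _), Real.sqrt_sq (norm_nonneg _)] at hs1
  have hL2 : (2*lam) * ‖g‖ ≤ ‖h‖ := by
    have h1 : ‖LinvAux.Bas.repr (((2*lam:ℝ):ℂ) • g)‖ = (2*lam) * ‖g‖ := by
      rw [LinearIsometryEquiv.norm_map, norm_smul, hlamC]
    have h2 : ‖LinvAux.Bas.repr h‖ = ‖h‖ := LinearIsometryEquiv.norm_map _ _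
    rw [← h1, ← h2]
    exact hxy
  -- the uniform bound on T g via the absolutely convergent Fourier series
  set cc : ℂ := (((Real.sqrt (2*π))⁻¹ : ℝ) : ℂ) with hccdef
  set G : ℤ → C(S1, ℂ) := fun m => ((c m * kk m) * cc) • (fourier m) with hGdef
  have hnormcm : ∀ m, ‖c m‖ ≤ ‖g‖ := by
    intro m
    have h1 := lp.norm_apply_le_norm (by norm_num : (2:ENNReal) ≠ 0) (LinvAux.Bas.repr g) m
    rwa [LinearIsometryEquiv.norm_map] at h1
  have hGnorm : ∀ m, ‖G m‖ ≤ (Real.sqrt (2*π))⁻¹ * ‖g‖ * |LinvAux.kR m| := by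
    intro m
    apply (ContinuousMap.norm_le _ (by positivity)).mpr
    intro x
    rw [hGdef]
    show ‖(((c m * kk m) * cc) • (fourier m)) x‖ ≤ _
    rw [ContinuousMap.smul_apply, norm_smul]
    have habs : ‖(fourier m x : ℂ)‖ = 1 := by simp [fourier_apply, Circle.norm_coe]
    rw [habs, mul_one, norm_mul, norm_mul]
    have h2 : ‖kk m‖ = |LinvAux.kR m| := by
      rw [hkk, Complex.norm_real, Real.norm_eq_abs]
    have h3 : ‖cc‖ = (Real.sqrt (2*π))⁻¹ := by
      rw [hccdef, Complex.norm_real, Real.norm_eq_abs, abs_of_pos (by positivity)]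
    rw [h2, h3]
    have h4 := hnormcm m
    have h5 := abs_nonneg (LinvAux.kR m)
    have h6 : (0:ℝ) ≤ (Real.sqrt (2*π))⁻¹ := by positivity
    calc ‖c m‖ * |LinvAux.kR m| * (Real.sqrt (2*π))⁻¹
        ≤ ‖g‖ * |LinvAux.kR m| * (Real.sqrt (2*π))⁻¹ := by
          apply mul_le_mul_of_nonneg_right _ h6
          exact mul_le_mul_of_nonneg_right h4 h5
      _ = (Real.sqrt (2*π))⁻¹ * ‖g‖ * |LinvAux.kR m| := by ring
  have hbndsummable : Summable (fun m => (Real.sqrt (2*π))⁻¹ * ‖g‖ * |LinvAux.kR m|) :=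
    LinvAux.summable_abs_kR.mul_left _
  have hGnormSummable : Summable (fun m => ‖G m‖) :=
    Summable.of_nonneg_of_le (fun m => norm_nonneg _) hGnorm hbndsummable
  have hGsummable : Summable G := Summable.of_norm hGnormSummable
  set F : C(S1, ℂ) := ∑' m, G m with hFdef
  have hFsum : HasSum G F := hGsummable.hasSum
  have hFnorm : ‖F‖ ≤ (Real.sqrt (2*π))⁻¹ * LinvAux.Ksum * ‖g‖ := by
    calc ‖F‖ ≤ ∑' m, ‖G m‖ := norm_tsum_le_tsum_norm hGnormSummable
    _ ≤ ∑' m, (Real.sqrt (2*π))⁻¹ * ‖g‖ * |LinvAux.kR m| :=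
        Summable.tsum_le_tsum hGnorm hGnormSummable hbndsummable
    _ = (Real.sqrt (2*π))⁻¹ * ‖g‖ * LinvAux.Ksum := by
        rw [tsum_mul_left]
        rfl
    _ = (Real.sqrt (2*π))⁻¹ * LinvAux.Ksum * ‖g‖ := by ring
  have hTgF : T g = ContinuousMap.toLp (E := ℂ) 2 (volume : Measure S1) ℂ F := by
    have hmap := hFsum.mapL (ContinuousMap.toLp (E := ℂ) 2 (volume : Measure S1) ℂ)
    have hfe : (fun m => ContinuousMap.toLp (E := ℂ) 2 (volume : Measure S1) ℂ (G m))
        = fun m => (c m * kk m) • (LinvAux.Bas m : Lp ℂ 2 (volume : Measure S1)) := by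
      funext m
      rw [hGdef]
      show ContinuousMap.toLp (E := ℂ) 2 (volume : Measure S1) ℂ
        (((c m * kk m) * cc) • (fourier m)) = _
      rw [_root_.map_smul, LinvAux.Bas_apply]
      have hvb : (LinvAux.vb m) = cc • LinvAux.en m := rfl
      rw [hvb, smul_smul]
      rfl
    rw [hfe] at hmap
    exact hTg.unique hmap
  -- pointwise a.e. identity and bound
  have hlamne : ((2*lam:ℝ):ℂ) ≠ 0 := by
    simp only [ne_eq, Complex.ofReal_eq_zero]
    exact ne_of_gt (by linarith)
  have haeg : ∀ᵐ x ∂(volume : Measure S1), (g : S1 → ℂ) x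
      = (T g : S1 → ℂ) x - (h : S1 → ℂ) x / ((2*lam:ℝ):ℂ) := by
    have hcoe : (↑h : S1 → ℂ) =ᵐ[(volume : Measure S1)]
        fun x => ((2*lam:ℝ):ℂ) * ((T g : S1 → ℂ) x - (g : S1 → ℂ) x) := by
      rw [hTgsub]
      filter_upwards [MeasureTheory.Lp.coeFn_smul (((2*lam:ℝ):ℂ)) (T g - g),
        MeasureTheory.Lp.coeFn_sub (T g) g] with x hx1 hx2
      rw [hx1, Pi.smul_apply, hx2, Pi.sub_apply, smul_eq_mul]
    filter_upwards [hcoe] with x hx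
    rw [hx, mul_div_cancel_left₀ _ hlamne]
    ring
  have haeTgF : (T g : S1 → ℂ) =ᵐ[(volume : Measure S1)] ⇑F := by
    rw [hTgF]
    exact ContinuousMap.coeFn_toLp _ _
  set Hb : ℝ := (eLpNorm (h : S1 → ℂ) ⊤ (volume : Measure S1)).toReal with hHbdef
  have hHbnn : (0:ℝ) ≤ Hb := ENNReal.toReal_nonneg
  have hhfin : eLpNorm (h : S1 → ℂ) ⊤ (volume : Measure S1) ≠ ⊤ := hmemh.2.ne
  have haeh : ∀ᵐ x ∂(volume : Measure S1), ‖(h : S1 → ℂ) x‖ ≤ Hb := by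
    have hess : eLpNormEssSup (h : S1 → ℂ) (volume : Measure S1)
        = eLpNorm (h : S1 → ℂ) ⊤ (volume : Measure S1) := by
      rw [MeasureTheory.eLpNorm_exponent_top]
    filter_upwards [MeasureTheory.enorm_ae_le_eLpNormEssSup (h : S1 → ℂ)
      (volume : Measure S1)] with x hx
    rw [hess] at hx
    calc ‖(h : S1 → ℂ) x‖ = ((‖(h : S1 → ℂ) x‖₊ : ENNReal)).toReal := by simp
    _ ≤ Hb := ENNReal.toReal_mono hhfin hx
  have hbound : ∀ᵐ x ∂(volume : Measure S1),
      ‖(g : S1 → ℂ) x‖ ≤ ‖F‖ + Hb / (2*lam) := by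
    filter_upwards [haeg, haeTgF, haeh] with x h1 h2 h3
    rw [h1, h2]
    have hstep := norm_sub_le (F x) ((h : S1 → ℂ) x / ((2*lam:ℝ):ℂ))
    have hfx := ContinuousMap.norm_coe_le_norm F x
    have hdx : ‖(h : S1 → ℂ) x / ((2*lam:ℝ):ℂ)‖ = ‖(h : S1 → ℂ) x‖ / (2*lam) := by
      rw [norm_div, hlamC]
    have hdiv : ‖(h : S1 → ℂ) x‖ / (2*lam) ≤ Hb / (2*lam) := by
      have hl2 : (0:ℝ) < 2*lam := by linarith
      exact (div_le_div_iff_of_pos_right hl2).mpr h3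
    linarith [hstep, hfx, hdx, hdiv]
  have hEg : eLpNorm (g : S1 → ℂ) ⊤ (volume : Measure S1)
      ≤ ENNReal.ofReal (‖F‖ + Hb/(2*lam)) := by
    have hb := MeasureTheory.eLpNorm_le_of_ae_bound (p := (⊤ : ENNReal))
      (μ := (volume : Measure S1)) hbound
    simpa using hb
  constructor
  · exact ⟨MeasureTheory.Lp.aestronglyMeasurable g,
      lt_of_le_of_lt hEg ENNReal.ofReal_lt_top⟩
  · -- compare ‖h‖ with Hb
    have hnormh : ‖h‖ ≤ Real.sqrt (2*π) * Hb := by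
      have hle := MeasureTheory.eLpNorm_le_eLpNorm_mul_rpow_measure_univ (p := 2) (q := ⊤)
        le_top (MeasureTheory.Lp.aestronglyMeasurable h)
      have hexp : (1:ℝ)/(2:ENNReal).toReal - 1/(⊤:ENNReal).toReal = (1/2 : ℝ) := by
        norm_num
      rw [hexp] at hle
      have hμ : (volume : Measure S1) Set.univ = ENNReal.ofReal (2*π) :=
        AddCircle.measure_univ (2*π)
      rw [hμ] at hle
      have hfinrhs : eLpNorm (h : S1 → ℂ) ⊤ (volume : Measure S1)
          * (ENNReal.ofReal (2*π)) ^ ((1:ℝ)/2) ≠ ⊤ := by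
        apply ENNReal.mul_ne_top hhfin
        exact (ENNReal.rpow_lt_top_of_nonneg (by norm_num) ENNReal.ofReal_ne_top).ne
      have := ENNReal.toReal_mono hfinrhs hle
      rw [MeasureTheory.Lp.norm_def]
      refine le_trans this ?_
      rw [ENNReal.toReal_mul]
      have hr : ((ENNReal.ofReal (2*π)) ^ ((1:ℝ)/2)).toReal = Real.sqrt (2*π) := by
        rw [← ENNReal.toReal_rpow, ENNReal.toReal_ofReal (by positivity),
          ← Real.sqrt_eq_rpow]
      rw [hr]
      rw [← hHbdef]
      nlinarith [hHbnn, hsq]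
    -- final arithmetic
    have hFHb : ‖F‖ + Hb/(2*lam)
        ≤ ((Real.sqrt (2*π))⁻¹ * LinvAux.Ksum * Real.sqrt (2*π) / (2*lam) + 1/(2*lam) + 1) * Hb := by
      have hl2 : (0:ℝ) < 2*lam := by linarith
      have hgle : ‖g‖ ≤ Real.sqrt (2*π) * Hb / (2*lam) := by
        rw [le_div_iff₀ hl2]
        nlinarith [hL2, hnormh]
      have hF2 : ‖F‖ ≤ (Real.sqrt (2*π))⁻¹ * LinvAux.Ksum * (Real.sqrt (2*π) * Hb / (2*lam)) := by
        refine le_trans hFnorm ?_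
        have hnn : (0:ℝ) ≤ (Real.sqrt (2*π))⁻¹ * LinvAux.Ksum := by positivity
        exact mul_le_mul_of_nonneg_left hgle hnn
      calc ‖F‖ + Hb/(2*lam)
          ≤ (Real.sqrt (2*π))⁻¹ * LinvAux.Ksum * (Real.sqrt (2*π) * Hb / (2*lam))
            + Hb/(2*lam) + Hb := by linarith [hF2, hHbnn]
        _ = ((Real.sqrt (2*π))⁻¹ * LinvAux.Ksum * Real.sqrt (2*π) / (2*lam) + 1/(2*lam) + 1)
            * Hb := by ring
    calc eLpNorm (g : S1 → ℂ) ⊤ (volume : Measure S1)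
        ≤ ENNReal.ofReal (‖F‖ + Hb/(2*lam)) := hEg
    _ ≤ ENNReal.ofReal (((Real.sqrt (2*π))⁻¹ * LinvAux.Ksum * Real.sqrt (2*π) / (2*lam)
          + 1/(2*lam) + 1) * Hb) := ENNReal.ofReal_le_ofReal hFHb
    _ = ENNReal.ofReal ((Real.sqrt (2*π))⁻¹ * LinvAux.Ksum * Real.sqrt (2*π) / (2*lam)
          + 1/(2*lam) + 1) * ENNReal.ofReal Hb := by
        rw [ENNReal.ofReal_mul (by positivity)]
    _ = ENNReal.ofReal ((Real.sqrt (2*π))⁻¹ * LinvAux.Ksum * Real.sqrt (2*π) / (2*lam)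
          + 1/(2*lam) + 1) * eLpNorm (h : S1 → ℂ) ⊤ (volume : Measure S1) := by
        rw [hHbdef, ENNReal.ofReal_toReal hhfin]
end
end
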